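/- arXiv:1705.08102 — 7 statements merged into one kernel-verified Lean document; each statement's English description precedes it below -/
import Mathlib

section
/- For every real number $a$ with $1/2 \leq a \leq 1$ and every real $\sigma$ with $0 < \sigma < 1$, the Hurwitz zeta-function satisfies $\zeta(\sigma, a) \neq 0$. -/
open HurwitzZeta

open Complex Real Set Filter Topology intervalIntegral

namespace NakamuraAux

/-- AM-GM midpoint convexity for negative powers. -/
lemma midpoint_rpow_le {σ : ℝ} (hσ : 0 ≤ σ) {y z c : ℝ} (hy : 0 < y) (hz : 0 < z)
    (h : y + z = 2 * c) : 2 * c ^ (-σ) ≤ y ^ (-σ) + z ^ (-σ) := by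
  have hc : 0 < c := by linarith
  set p := y ^ (-(σ / 2)) with hp
  set q := z ^ (-(σ / 2)) with hq
  have hp0 : 0 ≤ p := Real.rpow_nonneg hy.le _
  have hq0 : 0 ≤ q := Real.rpow_nonneg hz.le _
  have hpy : p * p = y ^ (-σ) := by
    rw [hp, ← Real.rpow_add hy]; ring_nf
  have hqz : q * q = z ^ (-σ) := by
    rw [hq, ← Real.rpow_add hz]; ring_nf
  have hpq : p * q = (y * z) ^ (-(σ / 2)) := (Real.mul_rpow hy.le hz.le).symm
  have hcc : c * c = c ^ (2 : ℝ) := by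
    rw [show (2:ℝ) = ((2:ℕ):ℝ) by norm_num, Real.rpow_natCast]; ring
  have hccσ : (c * c) ^ (-(σ / 2)) = c ^ (-σ) := by
    rw [hcc, ← Real.rpow_mul hc.le]; ring_nf
  have hyzcc : y * z ≤ c * c := by nlinarith [sq_nonneg (y - z)]
  have h1 : (c * c) ^ (-(σ / 2)) ≤ (y * z) ^ (-(σ / 2)) :=
    Real.rpow_le_rpow_of_nonpos (by positivity) hyzcc (by linarith)
  rw [hccσ, ← hpq] at h1
  nlinarith [sq_nonneg (p - q)]

/-- integrability helper -/
lemma rpow_intInt {σ u v : ℝ} (hu : 0 < u) (hv : 0 < v) :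
    IntervalIntegrable (fun x : ℝ => x ^ (-σ)) MeasureTheory.volume u v :=
  intervalIntegrable_rpow (Or.inr (Set.notMem_uIcc_of_lt hu hv))

/-- The key Hermite-Hadamard-type inequality. -/
lemma key_ineq {σ : ℝ} (hσ0 : 0 < σ) (hσ1 : σ < 1) {c : ℝ} (hc : 1 ≤ c) :
    (1 - σ) * c ^ (-σ) ≤ (c + 1 / 2) ^ (1 - σ) - (c - 1 / 2) ^ (1 - σ) := by
  have hc0 : (0:ℝ) < c := by linarith
  have hcm : (0:ℝ) < c - 1 / 2 := by linarith
  have hcp : (0:ℝ) < c + 1 / 2 := by linarith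
  have h1σ : (0:ℝ) < 1 - σ := by linarith
  have hI : ∫ x in (c - 1/2)..(c + 1/2), x ^ (-σ)
      = ((c + 1/2) ^ (1 - σ) - (c - 1/2) ^ (1 - σ)) / (1 - σ) := by
    rw [integral_rpow (Or.inr ⟨by intro h; rw [neg_eq_iff_eq_neg] at h; linarith,
      Set.notMem_uIcc_of_lt hcm hcp⟩)]
    rw [show -σ + 1 = 1 - σ from by ring]
  -- reflection
  have hrefl : ∫ x in c..(c + 1/2), (2 * c - x) ^ (-σ)
      = ∫ x in (c - 1/2)..c, x ^ (-σ) := by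
    have := intervalIntegral.integral_comp_sub_left (a := c) (b := c + 1/2)
      (fun x : ℝ => x ^ (-σ)) (2 * c)
    convert this using 2 <;> ring
  have hsplit : ∫ x in (c - 1/2)..(c + 1/2), x ^ (-σ)
      = (∫ x in c..(c + 1/2), x ^ (-σ)) + ∫ x in c..(c + 1/2), (2 * c - x) ^ (-σ) := by
    have hadj := intervalIntegral.integral_add_adjacent_intervals (f := fun x : ℝ => x ^ (-σ))
      (rpow_intInt hcm hc0) (rpow_intInt hc0 hcp)
    linarith [hadj, hrefl]
  have hcontOn : ∀ d : ℝ, ContinuousOn (fun x : ℝ => x ^ (-σ)) (Set.uIcc c (c + 1/2)) →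
      True := fun _ _ => trivial
  have hint2 : IntervalIntegrable (fun x : ℝ => (2 * c - x) ^ (-σ))
      MeasureTheory.volume c (c + 1/2) := by
    have : ContinuousOn (fun x : ℝ => (2 * c - x) ^ (-σ)) (Set.uIcc c (c + 1/2)) := by
      apply ContinuousOn.rpow_const
      · exact (continuous_const.sub continuous_id).continuousOn
      · intro x hx
        rw [Set.uIcc_of_le (by linarith : c ≤ c + 1/2)] at hx
        left; intro h; rw [sub_eq_zero] at h; have := hx.2; rw [← h] at this; linarith
    exact this.intervalIntegrable
  have hint1 : IntervalIntegrable (fun x : ℝ => x ^ (-σ)) MeasureTheory.volume c (c + 1/2) :=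
    rpow_intInt hc0 hcp
  have hmono : (c:ℝ) ^ (-σ) ≤ ∫ x in c..(c + 1/2), (x ^ (-σ) + (2 * c - x) ^ (-σ)) := by
    have hconst : ∫ _x in c..(c + 1/2), (2 * c ^ (-σ)) = c ^ (-σ) := by
      rw [intervalIntegral.integral_const, smul_eq_mul, show c + 1/2 - c = 1/2 from by ring]
      ring
    rw [← hconst]
    apply intervalIntegral.integral_mono_on (by linarith) (_root_.intervalIntegrable_const)
      (hint1.add hint2)
    intro x hx
    have hx1 : 0 < x := by have := hx.1; linarith
    have hx2 : 0 < 2 * c - x := by have := hx.2; linarith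
    exact midpoint_rpow_le hσ0.le hx1 hx2 (by ring)
  have hIg : c ^ (-σ) ≤ ∫ x in (c - 1/2)..(c + 1/2), x ^ (-σ) := by
    rw [hsplit, ← intervalIntegral.integral_add hint1 hint2]
    exact hmono
  rw [hI] at hIg
  rw [le_div_iff₀ h1σ] at hIg
  linarith [hIg]

/-- The scalar strict inequality. -/
lemma scalar_ineq {a σ : ℝ} (ha : 1 / 2 ≤ a) (hσ0 : 0 < σ) (hσ1 : σ < 1) :
    (1 - σ) * a ^ (-σ) < (a + 1 / 2) ^ (1 - σ) := by
  have ha0 : (0:ℝ) < a := by linarith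
  have h1 : a ^ (-σ) ≤ (1/2 : ℝ) ^ (-σ) :=
    Real.rpow_le_rpow_of_nonpos (by norm_num) ha (by linarith)
  have h12 : ((1:ℝ)/2) ^ (-σ) = 2 ^ σ := by
    rw [one_div, ← Real.rpow_neg_one (2:ℝ), ← Real.rpow_mul (by norm_num : (0:ℝ) ≤ 2)]
    ring_nf
  have h2 : (1:ℝ) ≤ (a + 1/2) ^ (1 - σ) :=
    Real.one_le_rpow (by linarith) (by linarith)
  have hlog2 : Real.log 2 < 1 := by
    have := Real.log_two_lt_d9; linarith
  have hlog2' : 0 < Real.log 2 := Real.log_pos (by norm_num)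
  have h3 : (1 - σ) * 2 ^ σ < 1 := by
    have ht : (0:ℝ) < Real.log 2 * σ := by positivity
    have hexp : 1 - Real.log 2 * σ < Real.exp (-(Real.log 2 * σ)) := by
      have := Real.add_one_lt_exp (x := -(Real.log 2 * σ)) (by linarith)
      linarith
    have h2σ : (2:ℝ) ^ σ = Real.exp (Real.log 2 * σ) := by
      rw [Real.rpow_def_of_pos (by norm_num)]
    have h4 : 1 - σ < Real.exp (-(Real.log 2 * σ)) := by
      nlinarith [hexp, hlog2, hσ0]
    calc (1 - σ) * 2 ^ σ < Real.exp (-(Real.log 2 * σ)) * Real.exp (Real.log 2 * σ) := by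
          rw [h2σ]; exact mul_lt_mul_of_pos_right h4 (Real.exp_pos _)
      _ = 1 := by rw [← Real.exp_add]; simp
  calc (1 - σ) * a ^ (-σ) ≤ (1 - σ) * 2 ^ σ := by
        rw [← h12]; exact mul_le_mul_of_nonneg_left h1 (by linarith)
    _ < 1 := h3
    _ ≤ (a + 1/2) ^ (1 - σ) := h2


/-- The comparison term. -/
noncomputable def g (a : ℝ) (n : ℕ) (s : ℂ) : ℂ :=
  ((((n : ℝ) + a : ℝ)) : ℂ) ^ (-s) -
    (((((n : ℝ) + a + 1 : ℝ)) : ℂ) ^ (1 - s) - ((((n : ℝ) + a : ℝ)) : ℂ) ^ (1 - s)) / (1 - s)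

lemma g_bound {a : ℝ} (ha : 0 < a) (n : ℕ) {s : ℂ} (hs0 : 0 < s.re) (hs1 : s ≠ 1) :
    ‖g a n s‖ ≤ ‖s‖ * ((n : ℝ) + a) ^ (-s.re - 1) := by
  have hc0 : (0:ℝ) < (n : ℝ) + a := by positivity
  have hs1' : (1 : ℂ) - s ≠ 0 := sub_ne_zero.mpr (Ne.symm hs1)
  have hsne : s ≠ 0 := fun h => by simp [h] at hs0
  have hI : (∫ x in ((n : ℝ) + a)..((n : ℝ) + a + 1), ((x : ℝ) : ℂ) ^ (-s))
      = ((((n : ℝ) + a + 1 : ℝ) : ℂ) ^ (1 - s) - (((n : ℝ) + a : ℝ) : ℂ) ^ (1 - s)) / (1 - s) := by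
    rw [integral_cpow (Or.inr ⟨fun h => hs1 (by have := neg_injective h; simp [this]),
      Set.notMem_uIcc_of_lt hc0 (by linarith)⟩)]
    rw [show -s + 1 = 1 - s from by ring]
  have hg : g a n s = ∫ x in ((n : ℝ) + a)..((n : ℝ) + a + 1),
      ((((n : ℝ) + a : ℝ) : ℂ) ^ (-s) - ((x : ℝ) : ℂ) ^ (-s)) := by
    rw [intervalIntegral.integral_sub (_root_.intervalIntegrable_const)
      (intervalIntegrable_cpow (Or.inr (Set.notMem_uIcc_of_lt hc0 (by linarith)))), hI]
    rw [intervalIntegral.integral_const,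
      show (n : ℝ) + a + 1 - ((n : ℝ) + a) = (1:ℝ) from by ring, one_smul, g]
  rw [hg]
  have hbnd : ∀ x ∈ Set.uIoc ((n : ℝ) + a) ((n : ℝ) + a + 1),
      ‖(((n : ℝ) + a : ℝ) : ℂ) ^ (-s) - ((x : ℝ) : ℂ) ^ (-s)‖
        ≤ ‖s‖ * ((n : ℝ) + a) ^ (-s.re - 1) := by
    intro x hx
    rw [Set.uIoc_of_le (by linarith : (n : ℝ) + a ≤ (n : ℝ) + a + 1)] at hx
    have hx0 : 0 < x := lt_trans hc0 hx.1
    have hJ : (∫ t in ((n : ℝ) + a)..x, ((t : ℝ) : ℂ) ^ (-s - 1))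
        = (((x : ℝ) : ℂ) ^ (-s) - (((n : ℝ) + a : ℝ) : ℂ) ^ (-s)) / (-s) := by
      rw [integral_cpow (Or.inr ⟨fun h => hsne (by linear_combination -h),
        Set.notMem_uIcc_of_lt hc0 hx0⟩)]
      rw [show -s - 1 + 1 = -s from by ring]
    have heq : (((n : ℝ) + a : ℝ) : ℂ) ^ (-s) - ((x : ℝ) : ℂ) ^ (-s)
        = s * ∫ t in ((n : ℝ) + a)..x, ((t : ℝ) : ℂ) ^ (-s - 1) := by
      rw [hJ]
      rw [div_neg, mul_neg, mul_div_assoc', mul_comm s _, mul_div_assoc, div_self hsne,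
        mul_one]
      ring
    rw [heq, norm_mul]
    have hJb : ‖∫ t in ((n : ℝ) + a)..x, ((t : ℝ) : ℂ) ^ (-s - 1)‖
        ≤ ((n : ℝ) + a) ^ (-s.re - 1) * |x - ((n : ℝ) + a)| := by
      apply intervalIntegral.norm_integral_le_of_norm_le_const
      intro t ht
      rw [Set.uIoc_of_le hx.1.le] at ht
      have ht0 : 0 < t := lt_trans hc0 ht.1
      rw [Complex.norm_cpow_eq_rpow_re_of_pos ht0]
      have hre : (-s - 1).re = -s.re - 1 := by simp
      rw [hre]
      exact Real.rpow_le_rpow_of_nonpos hc0 ht.1.le (by linarith)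
    have habs : |x - ((n : ℝ) + a)| ≤ 1 := by
      rw [_root_.abs_of_nonneg (by linarith [hx.1.le] : (0:ℝ) ≤ x - ((n : ℝ) + a))]
      linarith [hx.2]
    calc ‖s‖ * ‖∫ t in ((n : ℝ) + a)..x, ((t : ℝ) : ℂ) ^ (-s - 1)‖
        ≤ ‖s‖ * (((n : ℝ) + a) ^ (-s.re - 1) * |x - ((n : ℝ) + a)|) :=
          mul_le_mul_of_nonneg_left hJb (norm_nonneg s)
      _ ≤ ‖s‖ * (((n : ℝ) + a) ^ (-s.re - 1) * 1) := by
          apply mul_le_mul_of_nonneg_left _ (norm_nonneg s)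
          exact mul_le_mul_of_nonneg_left habs (Real.rpow_nonneg hc0.le _)
      _ = ‖s‖ * ((n : ℝ) + a) ^ (-s.re - 1) := by ring
  have hfin := intervalIntegral.norm_integral_le_of_norm_le_const hbnd
  rw [show (n : ℝ) + a + 1 - ((n : ℝ) + a) = (1:ℝ) from by ring] at hfin
  simpa using hfin

lemma summable_aux {a δ : ℝ} (ha : 0 < a) (hδ : 0 < δ) :
    Summable (fun n : ℕ => ((n : ℝ) + a) ^ (-δ - 1)) := by
  apply Summable.of_norm_bounded_eventually_nat (g := fun n : ℕ => ((n : ℝ) ^ (δ + 1))⁻¹)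
    (Real.summable_nat_rpow_inv.mpr (by linarith))
  filter_upwards [eventually_ge_atTop 1] with n hn
  have hn0 : (0:ℝ) < (n : ℝ) := by exact_mod_cast hn
  rw [Real.norm_eq_abs, _root_.abs_of_nonneg (Real.rpow_nonneg (by positivity) _)]
  rw [← Real.rpow_neg hn0.le, show -(δ + 1) = -δ - 1 from by ring]
  exact Real.rpow_le_rpow_of_nonpos hn0 (by linarith) (by linarith)

lemma g_summable {a : ℝ} (ha : 0 < a) {s : ℂ} (hs0 : 0 < s.re) (hs1 : s ≠ 1) :
    Summable (fun n => g a n s) := by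
  apply Summable.of_norm_bounded (g := fun n : ℕ => ‖s‖ * ((n : ℝ) + a) ^ (-s.re - 1))
    ((summable_aux ha hs0).mul_left _)
  exact fun n => g_bound ha n hs0 hs1


lemma hurwitzZeta_eq_of_one_lt {a : ℝ} (ha0 : 0 < a) (ha1 : a ≤ 1) {s : ℂ} (hs : 1 < s.re) :
    HurwitzZeta.hurwitzZeta (a : UnitAddCircle) s
      = (∑' n, g a n s) - ((a : ℂ) ^ ((1 : ℂ) - s)) / (1 - s) := by
  have hs0 : 0 < s.re := lt_trans one_pos hs
  have hs1 : s ≠ 1 := fun h => by rw [h] at hs; simp at hs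
  have hs1' : (1 : ℂ) - s ≠ 0 := sub_ne_zero.mpr (Ne.symm hs1)
  set v : ℕ → ℂ := fun n => ((((n : ℝ) + a : ℝ)) : ℂ) ^ ((1 : ℂ) - s) / (1 - s) with hv
  have hzeta : HasSum (fun n : ℕ => ((((n : ℝ) + a : ℝ)) : ℂ) ^ (-s))
      (HurwitzZeta.hurwitzZeta (a : UnitAddCircle) s) := by
    apply (HurwitzZeta.hasSum_hurwitzZeta_of_one_lt_re ⟨ha0.le, ha1⟩ hs).congr_fun
    intro n
    rw [cpow_neg, one_div]
    congr 2
    push_cast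
    ring
  have hgsum : HasSum (fun n => g a n s) (∑' n, g a n s) := (g_summable ha0 hs0 hs1).hasSum
  have hdiff : ∀ n : ℕ, ((((n : ℝ) + a : ℝ)) : ℂ) ^ (-s) - g a n s = v (n + 1) - v n := by
    intro n
    simp only [g, hv]
    rw [show (((n : ℕ) + 1 : ℕ) : ℝ) = (n : ℝ) + 1 from by push_cast; ring,
      show (n : ℝ) + 1 + a = (n : ℝ) + a + 1 from by ring]
    ring
  have hvlim : Tendsto v atTop (𝓝 0) := by
    rw [tendsto_zero_iff_norm_tendsto_zero]
    have hnorm : ∀ n : ℕ, ‖v n‖ = ((n : ℝ) + a) ^ (1 - s.re) / ‖(1 : ℂ) - s‖ := by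
      intro n
      have hc0 : (0:ℝ) < (n : ℝ) + a := by positivity
      rw [hv, norm_div, Complex.norm_cpow_eq_rpow_re_of_pos hc0,
        show ((1:ℂ) - s).re = 1 - s.re from by simp]
    have h2 : Tendsto (fun n : ℕ => ((n : ℝ) + a) ^ (1 - s.re)) atTop (𝓝 0) := by
      have hbase : Tendsto (fun n : ℕ => (n : ℝ) + a) atTop atTop :=
        tendsto_atTop_add_const_right _ a tendsto_natCast_atTop_atTop
      have := (tendsto_rpow_neg_atTop (by linarith : 0 < s.re - 1)).comp hbase
      simpa [Function.comp_def, show -(s.re - 1) = 1 - s.re from by ring] using this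
    have := h2.div_const ‖(1 : ℂ) - s‖
    rw [zero_div] at this
    exact Tendsto.congr (fun n => (hnorm n).symm) this
  have hsub : HasSum (fun n => v (n + 1) - v n)
      (HurwitzZeta.hurwitzZeta (a : UnitAddCircle) s - ∑' n, g a n s) := by
    have h := hzeta.sub hgsum
    exact HasSum.congr_fun h (fun n => (hdiff n).symm)
  have htends : Tendsto (fun N => v N - v 0) atTop
      (𝓝 (HurwitzZeta.hurwitzZeta (a : UnitAddCircle) s - ∑' n, g a n s)) := by
    apply (hsub.tendsto_sum_nat).congr
    intro N
    exact Finset.sum_range_sub v N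
  have htends' : Tendsto (fun N => v N - v 0) atTop (𝓝 (0 - v 0)) := hvlim.sub_const (v 0)
  have hkey := tendsto_nhds_unique htends htends'
  have hv0 : v 0 = ((a : ℂ) ^ ((1 : ℂ) - s)) / (1 - s) := by
    simp [hv]
  rw [hv0] at hkey
  linear_combination hkey

lemma F_differentiableAt {a : ℝ} (ha : 1 / 2 ≤ a) {s₀ : ℂ} (h0 : 0 < s₀.re) (h1 : s₀ ≠ 1) :
    DifferentiableAt ℂ (fun s => ∑' n, g a n s) s₀ := by
  have ha0 : (0:ℝ) < a := by linarith
  set r : ℝ := min 1 (min (s₀.re / 2) (dist s₀ 1 / 2)) with hr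
  have hdist : 0 < dist s₀ 1 := dist_pos.mpr h1
  have hr0 : 0 < r := by
    apply lt_min (by norm_num)
    exact lt_min (by linarith) (by linarith)
  -- properties of points in the ball
  have hball : ∀ s ∈ Metric.ball s₀ r, s₀.re / 2 ≤ s.re ∧ s ≠ 1 ∧ ‖s‖ ≤ ‖s₀‖ + 1
      ∧ s.re ≤ s₀.re + 1 := by
    intro s hs
    rw [Metric.mem_ball] at hs
    have hre : |s.re - s₀.re| ≤ dist s s₀ := by
      rw [Complex.dist_eq]
      have := Complex.abs_re_le_norm (s - s₀)
      simpa using this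
    have h1' : |s.re - s₀.re| < r := lt_of_le_of_lt hre hs
    have hrle1 : r ≤ 1 := min_le_left _ _
    have hrle2 : r ≤ s₀.re / 2 := le_trans (min_le_right _ _) (min_le_left _ _)
    have hrle3 : r ≤ dist s₀ 1 / 2 := le_trans (min_le_right _ _) (min_le_right _ _)
    have habs := abs_lt.mp h1'
    refine ⟨by linarith [habs.1], ?_, ?_, by linarith [habs.2]⟩
    · intro h
      rw [h] at hs
      rw [dist_comm] at hs
      linarith
    · have := norm_sub_norm_le s s₀
      rw [← dist_eq_norm] at this
      linarith
  set δ : ℝ := s₀.re / 2 with hδ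
  have hδ0 : 0 < δ := by positivity
  set u : ℕ → ℝ := fun n => (‖s₀‖ + 1) * 2 ^ (s₀.re + 1) * ((n : ℝ) + a) ^ (-δ - 1) with hu
  have husum : Summable u := (summable_aux ha0 hδ0).mul_left _
  have hfu : ∀ (n : ℕ), ∀ s ∈ Metric.ball s₀ r, ‖g a n s‖ ≤ u n := by
    intro n s hs
    obtain ⟨hre, hne, hnorm, hreK⟩ := hball s hs
    have hsre0 : 0 < s.re := by linarith
    have hc0 : (0:ℝ) < (n : ℝ) + a := by positivity
    have hchalf : (1:ℝ)/2 ≤ (n : ℝ) + a := by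
      have : (0:ℝ) ≤ (n:ℝ) := Nat.cast_nonneg n
      linarith
    calc ‖g a n s‖ ≤ ‖s‖ * ((n : ℝ) + a) ^ (-s.re - 1) := g_bound ha0 n hsre0 hne
      _ = ‖s‖ * (((n : ℝ) + a) ^ (-δ - 1) * ((n : ℝ) + a) ^ (δ - s.re)) := by
          rw [← Real.rpow_add hc0, show -δ - 1 + (δ - s.re) = -s.re - 1 from by ring]
      _ ≤ (‖s₀‖ + 1) * (((n : ℝ) + a) ^ (-δ - 1) * 2 ^ (s₀.re + 1)) := by
          apply mul_le_mul hnorm _ (by positivity) (by positivity)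
          apply mul_le_mul_of_nonneg_left _ (Real.rpow_nonneg hc0.le _)
          calc ((n : ℝ) + a) ^ (δ - s.re) ≤ ((1:ℝ)/2) ^ (δ - s.re) :=
                Real.rpow_le_rpow_of_nonpos (by norm_num) hchalf (by linarith)
            _ = 2 ^ (s.re - δ) := by
                rw [one_div, ← Real.rpow_neg_one (2:ℝ),
                  ← Real.rpow_mul (by norm_num : (0:ℝ) ≤ 2)]
                ring_nf
            _ ≤ 2 ^ (s₀.re + 1) :=
                Real.rpow_le_rpow_of_exponent_le (by norm_num) (by linarith)
      _ = u n := by rw [hu]; ring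
  have hgdiff : ∀ (n : ℕ), DifferentiableOn ℂ (fun s => g a n s) (Metric.ball s₀ r) := by
    intro n s hs
    obtain ⟨hre, hne, -, -⟩ := hball s hs
    have hc0 : (0:ℝ) < (n : ℝ) + a := by positivity
    have hcne : ((((n : ℝ) + a : ℝ)) : ℂ) ≠ 0 := by
      exact_mod_cast Complex.ofReal_ne_zero.mpr (ne_of_gt hc0)
    have hcne' : ((((n : ℝ) + a + 1 : ℝ)) : ℂ) ≠ 0 := by
      exact_mod_cast Complex.ofReal_ne_zero.mpr (by positivity : ((n : ℝ) + a + 1) ≠ 0)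
    apply DifferentiableAt.differentiableWithinAt
    apply DifferentiableAt.sub
    · exact DifferentiableAt.const_cpow (differentiableAt_id.neg) (Or.inl hcne)
    · apply DifferentiableAt.div
      · apply DifferentiableAt.sub
        · exact DifferentiableAt.const_cpow ((differentiableAt_const _).sub differentiableAt_id)
            (Or.inl hcne')
        · exact DifferentiableAt.const_cpow ((differentiableAt_const _).sub differentiableAt_id)
            (Or.inl hcne)
      · exact (differentiableAt_const _).sub differentiableAt_id
      · exact sub_ne_zero.mpr (Ne.symm hne)
  have hdiffOn : DifferentiableOn ℂ (fun s => ∑' n, g a n s) (Metric.ball s₀ r) := by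
    apply (tendstoUniformlyOn_tsum husum hfu).tendstoLocallyUniformlyOn.differentiableOn
      (Eventually.of_forall fun t => ?_) Metric.isOpen_ball
    exact DifferentiableOn.fun_sum fun n _ => hgdiff n
  exact hdiffOn.differentiableAt (Metric.isOpen_ball.mem_nhds (Metric.mem_ball_self hr0))

lemma U_preconnected : IsPreconnected {s : ℂ | 0 < s.re ∧ s ≠ 1} := by
  set A : Set ℂ := {s : ℂ | 0 < s.re} ∩ {s : ℂ | 0 < s.im} with hA
  set B : Set ℂ := {s : ℂ | 0 < s.re} ∩ {s : ℂ | s.im < 0} with hB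
  set Cs : Set ℂ := {s : ℂ | 0 < s.re} ∩ {s : ℂ | s.re < 1} with hCs
  set D : Set ℂ := {s : ℂ | 1 < s.re} with hD
  have hApre : IsPreconnected A :=
    ((convex_halfSpace_re_gt 0).inter (convex_halfSpace_im_gt 0)).isPreconnected
  have hBpre : IsPreconnected B :=
    ((convex_halfSpace_re_gt 0).inter (convex_halfSpace_im_lt 0)).isPreconnected
  have hCpre : IsPreconnected Cs :=
    ((convex_halfSpace_re_gt 0).inter (convex_halfSpace_re_lt 1)).isPreconnected
  have hDpre : IsPreconnected D := (convex_halfSpace_re_gt 1).isPreconnected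
  have hx1 : (((1/2 : ℝ) : ℂ) + ((1/2 : ℝ) : ℂ) * Complex.I) ∈ Cs ∩ A := by
    refine ⟨⟨?_, ?_⟩, ?_, ?_⟩ <;> simp [hA, hB, hCs, hD] <;> norm_num
  have hx2 : (((1/2 : ℝ) : ℂ) - ((1/2 : ℝ) : ℂ) * Complex.I) ∈ Cs ∩ B := by
    refine ⟨⟨?_, ?_⟩, ?_, ?_⟩ <;> simp [hA, hB, hCs, hD] <;> norm_num
  have hx3 : (((2 : ℝ) : ℂ) + Complex.I) ∈ A ∩ D := by
    refine ⟨⟨?_, ?_⟩, ?_⟩ <;> simp [hA, hB, hCs, hD] <;> norm_num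
  have h1 : IsPreconnected (Cs ∪ A) :=
    IsPreconnected.union _ hx1.1 hx1.2 hCpre hApre
  have h2 : IsPreconnected ((Cs ∪ A) ∪ B) :=
    IsPreconnected.union (((1/2 : ℝ) : ℂ) - ((1/2 : ℝ) : ℂ) * Complex.I) (Or.inl hx2.1) hx2.2
      h1 hBpre
  have h3 : IsPreconnected (((Cs ∪ A) ∪ B) ∪ D) :=
    IsPreconnected.union (((2 : ℝ) : ℂ) + Complex.I) (Or.inl (Or.inr hx3.1)) hx3.2 h2 hDpre
  have hUeq : {s : ℂ | 0 < s.re ∧ s ≠ 1} = ((Cs ∪ A) ∪ B) ∪ D := by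
    ext s
    simp only [hA, hB, hCs, hD, Set.mem_union, Set.mem_inter_iff, Set.mem_setOf_eq]
    constructor
    · rintro ⟨h0, h1⟩
      rcases lt_trichotomy s.im 0 with him | him | him
      · exact Or.inl (Or.inr ⟨h0, him⟩)
      · rcases lt_trichotomy s.re 1 with hre | hre | hre
        · exact Or.inl (Or.inl (Or.inl ⟨h0, hre⟩))
        · exact absurd (Complex.ext hre him) h1
        · exact Or.inr hre
      · exact Or.inl (Or.inl (Or.inr ⟨h0, him⟩))
    · rintro (((⟨h1', h2'⟩ | ⟨h1', h2'⟩) | ⟨h1', h2'⟩) | h')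
      · exact ⟨h1', fun h => by rw [h] at h2'; simp at h2'⟩
      · exact ⟨h1', fun h => by rw [h] at h2'; simp at h2'⟩
      · exact ⟨h1', fun h => by rw [h] at h2'; simp at h2'⟩
      · exact ⟨by linarith, fun h => by rw [h] at h'; simp at h'⟩
  rw [hUeq]
  exact h3

/-- The analytic continuation identity in the critical strip. -/
lemma continuation {a : ℝ} (ha : 1 / 2 ≤ a) (ha1 : a ≤ 1) {σ : ℝ} (hσ0 : 0 < σ) (hσ1 : σ < 1) :
    HurwitzZeta.hurwitzZeta (a : UnitAddCircle) (σ : ℂ)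
      = (∑' n, g a n (σ : ℂ)) - ((a : ℂ) ^ ((1 : ℂ) - (σ : ℂ))) / (1 - (σ : ℂ)) := by
  have ha0 : (0:ℝ) < a := by linarith
  set U : Set ℂ := {s : ℂ | 0 < s.re ∧ s ≠ 1} with hU
  have hUo : IsOpen U := by
    have : U = (Complex.re ⁻¹' Set.Ioi 0) ∩ {(1 : ℂ)}ᶜ := by
      ext s
      simp only [hU, Set.mem_setOf_eq, Set.mem_inter_iff, Set.mem_preimage, Set.mem_Ioi,
        Set.mem_compl_iff, Set.mem_singleton_iff]
    rw [this]
    exact (Complex.continuous_re.isOpen_preimage _ isOpen_Ioi).inter isOpen_compl_singleton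
  have hF : AnalyticOnNhd ℂ (HurwitzZeta.hurwitzZeta (a : UnitAddCircle)) U := by
    apply DifferentiableOn.analyticOnNhd _ hUo
    exact fun s hs => (HurwitzZeta.differentiableAt_hurwitzZeta _ hs.2).differentiableWithinAt
  have hG : AnalyticOnNhd ℂ
      (fun s => (∑' n, g a n s) - ((a : ℂ) ^ ((1 : ℂ) - s)) / (1 - s)) U := by
    apply DifferentiableOn.analyticOnNhd _ hUo
    intro s hs
    apply DifferentiableAt.differentiableWithinAt
    apply DifferentiableAt.sub
    · exact F_differentiableAt ha hs.1 hs.2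
    · apply DifferentiableAt.div
      · exact DifferentiableAt.const_cpow ((differentiableAt_const _).sub differentiableAt_id)
          (Or.inl (Complex.ofReal_ne_zero.mpr (ne_of_gt ha0)))
      · exact (differentiableAt_const _).sub differentiableAt_id
      · exact sub_ne_zero.mpr (Ne.symm hs.2)
  have h2mem : {z : ℂ | 1 < z.re} ∈ 𝓝 (2 : ℂ) :=
    (Complex.continuous_re.isOpen_preimage _ isOpen_Ioi).mem_nhds (by norm_num)
  have hFG : (HurwitzZeta.hurwitzZeta (a : UnitAddCircle)) =ᶠ[𝓝 (2 : ℂ)]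
      (fun s => (∑' n, g a n s) - ((a : ℂ) ^ ((1 : ℂ) - s)) / (1 - s)) := by
    filter_upwards [h2mem] with t ht
    exact hurwitzZeta_eq_of_one_lt ha0 ha1 ht
  have h2U : (2 : ℂ) ∈ U := by
    constructor
    · norm_num
    · intro h
      have := congrArg Complex.re h
      norm_num at this
  have hσU : ((σ : ℂ)) ∈ U := by
    constructor
    · simp [hσ0]
    · intro h
      have := congrArg Complex.re h
      simp at this
      linarith
  exact hF.eqOn_of_preconnected_of_eventuallyEq hG U_preconnected h2U hFG hσU


/-- Abstract pointwise comparison. -/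
lemma pointwise_c {σ c : ℝ} (hσ0 : 0 < σ) (hσ1 : σ < 1) (hc : 1 ≤ c) :
    c ^ (-σ) - ((c + 1) ^ (1 - σ) - c ^ (1 - σ)) / (1 - σ)
      ≤ ((c ^ (1 - σ) - (c - 1/2) ^ (1 - σ)) - ((c + 1) ^ (1 - σ) - (c + 1/2) ^ (1 - σ)))
        / (1 - σ) := by
  have h1σ : (0:ℝ) < 1 - σ := by linarith
  have key := key_ineq hσ0 hσ1 hc
  rw [← sub_nonneg]
  have hexp : ((c ^ (1 - σ) - (c - 1/2) ^ (1 - σ)) - ((c + 1) ^ (1 - σ) - (c + 1/2) ^ (1 - σ)))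
        / (1 - σ) - (c ^ (-σ) - ((c + 1) ^ (1 - σ) - c ^ (1 - σ)) / (1 - σ))
      = ((c + 1/2) ^ (1 - σ) - (c - 1/2) ^ (1 - σ) - (1 - σ) * c ^ (-σ)) / (1 - σ) := by
    field_simp
    ring
  rw [hexp]
  apply div_nonneg _ h1σ.le
  linarith

end NakamuraAux

open NakamuraAux

/-- **Nakamura's non-vanishing theorem.** For every real `a` with `1/2 ≤ a ≤ 1` and every real
`σ` with `0 < σ < 1`, the Hurwitz zeta function satisfies `ζ(σ, a) ≠ 0`. -/
theorem hurwitzZeta_ne_zero_of_half_le (a σ : ℝ) (ha : 1 / 2 ≤ a) (ha' : a ≤ 1)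
    (hσ : 0 < σ) (hσ' : σ < 1) :
    hurwitzZeta (a : UnitAddCircle) (σ : ℂ) ≠ 0 := by
  have ha0 : (0:ℝ) < a := by linarith
  have h1σ : (0:ℝ) < 1 - σ := by linarith
  set r : ℕ → ℝ := fun n =>
    ((n : ℝ) + a) ^ (-σ) - (((n : ℝ) + a + 1) ^ (1 - σ) - ((n : ℝ) + a) ^ (1 - σ)) / (1 - σ)
    with hrdef
  -- each complex term is real
  have hreal : ∀ n : ℕ, g a n (σ : ℂ) = ((r n : ℝ) : ℂ) := by
    intro n
    have hc0 : (0:ℝ) ≤ (n : ℝ) + a := by positivity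
    have hc1 : (0:ℝ) ≤ (n : ℝ) + a + 1 := by positivity
    rw [g, hrdef]
    rw [show -((σ : ℝ) : ℂ) = ((-σ : ℝ) : ℂ) from by push_cast; ring,
      show (1 : ℂ) - ((σ : ℝ) : ℂ) = ((1 - σ : ℝ) : ℂ) from by push_cast; ring,
      ← Complex.ofReal_cpow hc0, ← Complex.ofReal_cpow hc1, ← Complex.ofReal_cpow hc0]
    push_cast
    ring
  have hσre : (0:ℝ) < ((σ : ℝ) : ℂ).re := by simp [hσ]
  have hσne : ((σ : ℝ) : ℂ) ≠ 1 := by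
    intro h
    have := congrArg Complex.re h
    simp at this
    linarith
  have hsumg : HasSum (fun n => g a n (σ : ℂ)) (∑' n, g a n (σ : ℂ)) :=
    (g_summable ha0 hσre hσne).hasSum
  have hsumr : HasSum (fun n => ((r n : ℝ) : ℂ)) (∑' n, g a n (σ : ℂ)) :=
    hsumg.congr_fun (fun n => (hreal n).symm)
  set T : ℝ := (∑' n, g a n (σ : ℂ)).re with hT
  have hrT : HasSum r T := by
    have := hsumr.mapL Complex.reCLM
    simpa using this
  have him0 : (∑' n, g a n (σ : ℂ)).im = 0 := by
    have h2 : HasSum (fun _ : ℕ => (0:ℝ)) ((∑' n, g a n (σ : ℂ)).im) := by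
      have := hsumr.mapL Complex.imCLM
      simpa using this
    simpa using h2.unique hasSum_zero
  have htsum : (∑' n, g a n (σ : ℂ)) = ((T : ℝ) : ℂ) :=
    Complex.ext (by simp [hT]) (by simp [him0])
  -- value of hurwitz zeta as a real number
  have hval : HurwitzZeta.hurwitzZeta (a : UnitAddCircle) (σ : ℂ)
      = (((T - a ^ (1 - σ) / (1 - σ) : ℝ)) : ℂ) := by
    rw [continuation ha ha' hσ hσ', htsum,
      show (1 : ℂ) - ((σ : ℝ) : ℂ) = ((1 - σ : ℝ) : ℂ) from by push_cast; ring,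
      ← Complex.ofReal_cpow ha0.le]
    push_cast
    ring
  -- the telescoping comparison
  set w : ℕ → ℝ := fun k => ((k : ℝ) + 1 + a) ^ (1 - σ) - ((k : ℝ) + 1 + a - 1/2) ^ (1 - σ)
    with hwdef
  have hpt : ∀ k : ℕ, r (k + 1) ≤ (w k - w (k + 1)) / (1 - σ) := by
    intro k
    have hc : (1:ℝ) ≤ (k : ℝ) + 1 + a := by
      have : (0:ℝ) ≤ (k:ℝ) := Nat.cast_nonneg k
      linarith
    have H := pointwise_c hσ hσ' hc
    simp only [hrdef, hwdef]
    push_cast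
    rw [show ((k:ℝ) + 1 + 1 + a - 1/2) = ((k:ℝ) + 1 + a) + 1/2 from by ring,
      show ((k:ℝ) + 1 + 1 + a) = ((k:ℝ) + 1 + a) + 1 from by ring]
    exact H
  have hsumle : ∀ M : ℕ, ∑ n ∈ Finset.range (M + 1), r n ≤ r 0 + w 0 / (1 - σ) := by
    intro M
    rw [Finset.sum_range_succ']
    have h1 : ∑ k ∈ Finset.range M, r (k + 1)
        ≤ ∑ k ∈ Finset.range M, (w k - w (k + 1)) / (1 - σ) :=
      Finset.sum_le_sum fun k _ => hpt k
    have h2 : ∑ k ∈ Finset.range M, (w k - w (k + 1)) / (1 - σ) = (w 0 - w M) / (1 - σ) := by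
      rw [← Finset.sum_div, Finset.sum_range_sub' w M]
    have h3 : 0 ≤ w M := by
      have : (0:ℝ) ≤ (M:ℝ) := Nat.cast_nonneg M
      apply sub_nonneg.mpr
      exact Real.rpow_le_rpow (by linarith) (by linarith) (by linarith)
    have h4 : (w 0 - w M) / (1 - σ) ≤ w 0 / (1 - σ) :=
      (div_le_div_iff_of_pos_right h1σ).mpr (by linarith)
    linarith
  have hT_le : T ≤ r 0 + w 0 / (1 - σ) := by
    apply le_of_tendsto hrT.tendsto_sum_nat
    filter_upwards [eventually_ge_atTop 1] with N hN
    obtain ⟨M, rfl⟩ := Nat.exists_eq_add_of_le hN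
    rw [add_comm 1 M]
    exact hsumle M
  -- identify the bound
  have hrw : r 0 + w 0 / (1 - σ) - a ^ (1 - σ) / (1 - σ)
      = a ^ (-σ) - (a + 1/2) ^ (1 - σ) / (1 - σ) := by
    simp only [hrdef, hwdef]
    push_cast
    rw [show ((0:ℝ) + a) = a from by ring,
      show ((0:ℝ) + 1 + a - 1/2) = a + 1/2 from by ring,
      show ((0:ℝ) + 1 + a) = a + 1 from by ring]
    field_simp
    ring
  have hneg : T - a ^ (1 - σ) / (1 - σ) < 0 := by
    have hfin : T - a ^ (1 - σ) / (1 - σ) ≤ a ^ (-σ) - (a + 1/2) ^ (1 - σ) / (1 - σ) := by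
      rw [← hrw]; linarith
    have hscal := scalar_ineq ha hσ hσ'
    have : a ^ (-σ) < (a + 1/2) ^ (1 - σ) / (1 - σ) := by
      rw [lt_div_iff₀ h1σ]
      nlinarith [hscal]
    linarith
  rw [hval]
  exact Complex.ofReal_ne_zero.mpr (ne_of_lt hneg)
end

section
/- For $0 < a < 1/2$ let $\beta(a)$ denote the unique zero of $\sigma \mapsto \zeta(\sigma,a)$ in the interval $(0,1)$. Then the function $\beta : (0,1/2) \to (0,1)$ is strictly decreasing: if $0 < a_1 < a_2 < 1/2$ then $\beta(a_1) > \beta(a_2)$. -/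
open HurwitzZeta
open Complex Filter Topology Set


lemma conjconj_hasDerivAt {f : ℂ → ℂ} {f' z : ℂ} (h : HasDerivAt f f' ((starRingEnd ℂ) z)) :
    HasDerivAt (fun s => (starRingEnd ℂ) (f ((starRingEnd ℂ) s))) ((starRingEnd ℂ) f') z := by
  rw [hasDerivAt_iff_tendsto_slope] at h ⊢
  have h1 : Tendsto (starRingEnd ℂ) (𝓝[≠] z) (𝓝[≠] ((starRingEnd ℂ) z)) := by
    apply tendsto_nhdsWithin_of_tendsto_nhds_of_eventually_within
    · exact (Complex.continuous_conj.tendsto z).mono_left nhdsWithin_le_nhds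
    · filter_upwards [self_mem_nhdsWithin] with y hy
      simp only [mem_compl_iff, mem_singleton_iff] at hy ⊢
      exact fun hc => hy ((starRingEnd ℂ).injective hc)
  have h2 := (Complex.continuous_conj.tendsto f').comp (h.comp h1)
  refine h2.congr' ?_
  filter_upwards [self_mem_nhdsWithin] with y _
  simp [Function.comp, slope_def_field, map_div₀]


lemma conj_cpow_real {x : ℝ} (hx : 0 < x) (w : ℂ) :
    (starRingEnd ℂ) ((x : ℂ) ^ ((starRingEnd ℂ) w)) = (x : ℂ) ^ w := by
  rw [Complex.cpow_def_of_ne_zero (by exact_mod_cast hx.ne') ,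
      Complex.cpow_def_of_ne_zero (by exact_mod_cast hx.ne'), ← Complex.exp_conj, map_mul]
  congr 1
  rw [← Complex.ofReal_log hx.le]
  simp

lemma hurwitzZeta_conj {a : ℝ} (ha0 : 0 < a) (ha1 : a ≤ 1) {s : ℂ} (hs : s ≠ 1) :
    (starRingEnd ℂ) (hurwitzZeta a ((starRingEnd ℂ) s)) = hurwitzZeta a s := by
  have hU : IsPreconnected ({(1:ℂ)}ᶜ) := by
    refine (isConnected_compl_singleton_of_one_lt_rank ?_ 1).isPreconnected
    rw [Complex.rank_real_complex]; norm_num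
  have hF : AnalyticOnNhd ℂ (fun s => hurwitzZeta a s) ({(1:ℂ)}ᶜ) := by
    refine DifferentiableOn.analyticOnNhd (fun z hz => ?_) isOpen_compl_singleton
    exact (differentiableAt_hurwitzZeta a hz).differentiableWithinAt
  have hG : AnalyticOnNhd ℂ (fun s => (starRingEnd ℂ) (hurwitzZeta a ((starRingEnd ℂ) s)))
      ({(1:ℂ)}ᶜ) := by
    refine DifferentiableOn.analyticOnNhd (fun z hz => ?_) isOpen_compl_singleton
    have hz1 : (starRingEnd ℂ) z ≠ 1 := by
      simp only [mem_compl_iff, mem_singleton_iff] at hz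
      intro hc
      apply hz
      have := congrArg (starRingEnd ℂ) hc
      simpa using this
    exact (conjconj_hasDerivAt
      (differentiableAt_hurwitzZeta a hz1).hasDerivAt).differentiableAt.differentiableWithinAt
  have key : EqOn (fun s => hurwitzZeta a s)
      (fun s => (starRingEnd ℂ) (hurwitzZeta a ((starRingEnd ℂ) s))) ({(1:ℂ)}ᶜ) := by
    refine AnalyticOnNhd.eqOn_of_preconnected_of_eventuallyEq hF hG hU (z₀ := 2) (by norm_num) ?_
    have hopen : {s : ℂ | 1 < s.re} ∈ 𝓝 (2:ℂ) := by
      refine (isOpen_lt continuous_const Complex.continuous_re).mem_nhds ?_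
      norm_num
    filter_upwards [hopen] with w hw
    have hw' : 1 < ((starRingEnd ℂ) w).re := by simpa using hw
    have h1 := hasSum_hurwitzZeta_of_one_lt_re ⟨ha0.le, ha1⟩ hw
    have h2 := (hasSum_hurwitzZeta_of_one_lt_re ⟨ha0.le, ha1⟩ hw').mapL Complex.conjCLE.toContinuousLinearMap
    simp only [ContinuousLinearEquiv.coe_coe, Complex.conjCLE_apply] at h2
    have : (fun n : ℕ => (starRingEnd ℂ) (1 / ((n:ℂ) + a) ^ ((starRingEnd ℂ) w)))
        = fun n : ℕ => 1 / ((n:ℂ) + a) ^ w := by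
      funext n
      have hna : (0:ℝ) < n + a ∨ True := Or.inr trivial
      rw [map_div₀, map_one]
      congr 1
      have hpos : (0:ℝ) < (n:ℝ) + a := by
        have : (0:ℝ) ≤ (n:ℝ) := n.cast_nonneg
        linarith
      calc (starRingEnd ℂ) (((n:ℂ) + a) ^ ((starRingEnd ℂ) w))
          = (starRingEnd ℂ) ((((n:ℝ) + a : ℝ):ℂ) ^ ((starRingEnd ℂ) w)) := by push_cast; ring_nf
        _ = (((n:ℝ) + a : ℝ):ℂ) ^ w := conj_cpow_real hpos w
        _ = ((n:ℂ) + a) ^ w := by push_cast; ring_nf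
    rw [this] at h2
    exact (h1.unique h2).symm ▸ rfl
  exact (key hs).symm

lemma u_summable {a ε : ℝ} (ha : 0 < a) (hε : 0 < ε) :
    Summable (fun n : ℕ => ((n:ℝ) + a) ^ (-ε - 1)) := by
  have := (Real.summable_one_div_nat_add_rpow a (ε + 1)).mpr (by linarith)
  refine this.congr fun n => ?_
  have hpos : (0:ℝ) < (n:ℝ) + a := by positivity
  rw [abs_of_pos hpos, show -ε - 1 = -(ε+1) by ring, Real.rpow_neg hpos.le, one_div]

lemma term_bound {a₁ a₂ : ℝ} (h1 : 0 < a₁) (h12 : a₁ ≤ a₂) {w : ℂ} {ε R : ℝ}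
    (hε : 0 < ε) (hεw : ε ≤ w.re) (hwR : ‖w‖ ≤ R) (n : ℕ) :
    ‖1/((n:ℂ) + a₁) ^ w - 1/((n:ℂ) + a₂) ^ w‖ ≤
      R * (a₂ - a₁) * (((n:ℝ) + a₁) ^ (-ε - 1) + ((n:ℝ) + a₁) ^ (-R - 1)) := by
  set t₁ : ℝ := n + a₁ with ht₁
  set t₂ : ℝ := n + a₂ with ht₂
  have h₁pos : (0:ℝ) < t₁ := by positivity
  have h12' : t₁ ≤ t₂ := by rw [ht₁, ht₂]; linarith
  have h₂pos : (0:ℝ) < t₂ := h₁pos.trans_le h12'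
  have hRw : w.re ≤ R := (Complex.re_le_norm w).trans hwR
  have hR0 : 0 < R := lt_of_lt_of_le (lt_of_lt_of_le hε hεw) hRw
  set C : ℝ := R * (t₁ ^ (-ε - 1) + t₁ ^ (-R - 1)) with hC
  set g : ℝ → ℂ := fun t => (t:ℂ) ^ (-w) with hg
  have hderiv : ∀ t ∈ Icc t₁ t₂,
      HasDerivWithinAt g ((-w) * (t:ℂ) ^ (-w - 1)) (Icc t₁ t₂) t := by
    intro t ht
    have htpos : (0:ℝ) < t := lt_of_lt_of_le h₁pos ht.1
    have : HasDerivAt (fun z : ℂ => z ^ (-w)) ((-w) * (t:ℂ) ^ (-w - 1) * 1) (t:ℂ) := by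
      exact (hasDerivAt_id (t:ℂ)).cpow_const (by exact Or.inl (by exact_mod_cast htpos))
    have := this.comp_ofReal
    simpa [mul_one] using this.hasDerivWithinAt
  have hbound : ∀ t ∈ Icc t₁ t₂, ‖(-w) * (t:ℂ) ^ (-w - 1)‖ ≤ C := by
    intro t ht
    have htpos : (0:ℝ) < t := lt_of_lt_of_le h₁pos ht.1
    have hnorm : ‖(-w) * (t:ℂ) ^ (-w - 1)‖ = ‖w‖ * t ^ (-w.re - 1) := by
      rw [norm_mul, norm_neg,
        Complex.norm_cpow_eq_rpow_re_of_pos htpos]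
      norm_num
    rw [hnorm]
    have key : t ^ (-w.re - 1) ≤ t₁ ^ (-ε - 1) + t₁ ^ (-R - 1) := by
      rcases le_or_gt 1 t with h | h
      · have s1 : t ^ (-w.re - 1) ≤ t ^ (-ε - 1) :=
          Real.rpow_le_rpow_of_exponent_le h (by linarith)
        have s2 : t ^ (-ε - 1) ≤ t₁ ^ (-ε - 1) :=
          Real.rpow_le_rpow_of_nonpos h₁pos ht.1 (by linarith)
        have s3 : (0:ℝ) ≤ t₁ ^ (-R - 1) := Real.rpow_nonneg h₁pos.le _
        linarith
      · have s1 : t ^ (-w.re - 1) ≤ t ^ (-R - 1) :=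
          Real.rpow_le_rpow_of_exponent_ge htpos h.le (by linarith)
        have s2 : t ^ (-R - 1) ≤ t₁ ^ (-R - 1) :=
          Real.rpow_le_rpow_of_nonpos h₁pos ht.1 (by linarith)
        have s3 : (0:ℝ) ≤ t₁ ^ (-ε - 1) := Real.rpow_nonneg h₁pos.le _
        linarith
    calc ‖w‖ * t ^ (-w.re - 1) ≤ R * (t₁ ^ (-ε - 1) + t₁ ^ (-R - 1)) := by
          apply mul_le_mul hwR key (Real.rpow_nonneg htpos.le _) hR0.le
      _ = C := rfl
  have hmvt := Convex.norm_image_sub_le_of_norm_hasDerivWithin_le hderiv hbound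
    (convex_Icc t₁ t₂) (left_mem_Icc.mpr (by linarith)) (right_mem_Icc.mpr (by linarith))
  have heq1 : 1/((n:ℂ) + a₁) ^ w = g t₁ := by
    simp only [hg, ht₁, Complex.cpow_neg, one_div, Complex.ofReal_add, Complex.ofReal_natCast]
  have heq2 : 1/((n:ℂ) + a₂) ^ w = g t₂ := by
    simp only [hg, ht₂, Complex.cpow_neg, one_div, Complex.ofReal_add, Complex.ofReal_natCast]
  rw [heq1, heq2, norm_sub_rev]
  have : ‖t₂ - t₁‖ = a₂ - a₁ := by
    rw [Real.norm_eq_abs, _root_.abs_of_nonneg (by rw [ht₁, ht₂]; linarith)]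
    rw [ht₁, ht₂]; ring
  rw [this] at hmvt
  calc ‖g t₂ - g t₁‖ ≤ C * (a₂ - a₁) := hmvt
    _ = R * (a₂ - a₁) * (t₁ ^ (-ε - 1) + t₁ ^ (-R - 1)) := by rw [hC]; ring

lemma hurwitzZeta_sub_eq {a₁ a₂ : ℝ} (h1 : 0 < a₁) (h12 : a₁ < a₂) (h2 : a₂ ≤ 1)
    {s : ℂ} (hs : 0 < s.re) :
    hurwitzZeta a₁ s - hurwitzZeta a₂ s
      = ∑' n : ℕ, (1/((n:ℂ) + a₁) ^ s - 1/((n:ℂ) + a₂) ^ s) := by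
  set U : Set ℂ := {z | 0 < z.re} with hUdef
  have hUopen : IsOpen U := isOpen_lt continuous_const Complex.continuous_re
  have hUconn : IsPreconnected U := (convex_halfSpace_re_gt 0).isPreconnected
  set F : ℂ → ℂ := fun z => hurwitzZeta a₁ z - hurwitzZeta a₂ z with hF
  set G : ℂ → ℂ := fun z => ∑' n : ℕ, (1/((n:ℂ) + a₁) ^ z - 1/((n:ℂ) + a₂) ^ z) with hG
  have hFa : AnalyticOnNhd ℂ F U :=
    (differentiable_hurwitzZeta_sub_hurwitzZeta a₁ a₂).differentiableOn.analyticOnNhd hUopen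
  have hterm : ∀ (n : ℕ), Differentiable ℂ
      (fun z : ℂ => 1/((n:ℂ) + a₁) ^ z - 1/((n:ℂ) + a₂) ^ z) := by
    intro n
    have hne : ∀ b : ℝ, 0 < b → ((n:ℂ) + b) ≠ 0 := by
      intro b hb hc
      have : ((n:ℝ) + b : ℝ) = 0 := by exact_mod_cast hc
      have : (0:ℝ) < (n:ℝ) + b := by positivity
      linarith
    have d1 : Differentiable ℂ (fun z : ℂ => 1/((n:ℂ) + a₁) ^ z) := by
      simp only [one_div, ← Complex.cpow_neg]
      exact (differentiable_neg).const_cpow (Or.inl (hne a₁ h1))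
    have d2 : Differentiable ℂ (fun z : ℂ => 1/((n:ℂ) + a₂) ^ z) := by
      simp only [one_div, ← Complex.cpow_neg]
      exact (differentiable_neg).const_cpow (Or.inl (hne a₂ (h1.trans h12)))
    exact d1.sub d2
  have hGa : AnalyticOnNhd ℂ G U := by
    intro z hz
    have hzre : 0 < z.re := hz
    set ε : ℝ := z.re / 2 with hε
    set R : ℝ := ‖z‖ + ε with hR
    have hεpos : 0 < ε := by positivity
    have hball : Metric.ball z ε ⊆ {w : ℂ | ε ≤ w.re ∧ ‖w‖ ≤ R} := by
      intro w hw
      rw [Metric.mem_ball, dist_eq_norm] at hw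
      constructor
      · have : |w.re - z.re| ≤ ‖w - z‖ := by
          simpa using Complex.abs_re_le_norm (w - z)
        have := abs_le.mp this
        have h' : z.re - w.re ≤ ‖w - z‖ := by linarith [this.1]
        have : z.re - ε < w.re := by linarith [hw]
        rw [hε] at *
        linarith
      · calc ‖w‖ = ‖z + (w - z)‖ := by ring_nf
          _ ≤ ‖z‖ + ‖w - z‖ := norm_add_le _ _
          _ ≤ ‖z‖ + ε := by linarith [hw.le]
    have hdiff : DifferentiableOn ℂ G (Metric.ball z ε) := by
      refine differentiableOn_tsum_of_summable_norm
        (u := fun n => R * (a₂ - a₁) * (((n:ℝ) + a₁) ^ (-ε - 1) + ((n:ℝ) + a₁) ^ (-R - 1)))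
        ?_ (fun n => (hterm n).differentiableOn) Metric.isOpen_ball ?_
      · apply Summable.mul_left
        exact ((u_summable h1 hεpos).add (u_summable h1 (by positivity)))
      · intro n w hw
        obtain ⟨hw1, hw2⟩ := hball hw
        exact term_bound h1 h12.le hεpos hw1 hw2 n
    exact (hdiff.analyticOnNhd Metric.isOpen_ball) z (Metric.mem_ball_self hεpos)
  have hkey : EqOn F G U := by
    refine AnalyticOnNhd.eqOn_of_preconnected_of_eventuallyEq hFa hGa hUconn (z₀ := 2)
      (by norm_num [hUdef]) ?_
    have hopen : {w : ℂ | 1 < w.re} ∈ 𝓝 (2:ℂ) := by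
      refine (isOpen_lt continuous_const Complex.continuous_re).mem_nhds ?_
      norm_num
    filter_upwards [hopen] with w hw
    have hs1 := hasSum_hurwitzZeta_of_one_lt_re ⟨h1.le, by linarith⟩ (a := a₁) hw
    have hs2 := hasSum_hurwitzZeta_of_one_lt_re ⟨by linarith, h2⟩ (a := a₂) hw
    exact ((hs1.sub hs2).tsum_eq).symm
  exact hkey (by exact hs)

lemma tsum_re_pos {a₁ a₂ : ℝ} (h1 : 0 < a₁) (h12 : a₁ < a₂) {σ : ℝ} (hσ : 0 < σ) :
    0 < (∑' n : ℕ, (1/((n:ℂ) + a₁) ^ (σ:ℂ) - 1/((n:ℂ) + a₂) ^ (σ:ℂ))).re := by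
  set d : ℕ → ℝ := fun n => 1/((n:ℝ) + a₁) ^ σ - 1/((n:ℝ) + a₂) ^ σ with hd
  have hcoe : ∀ n : ℕ, (1/((n:ℂ) + a₁) ^ (σ:ℂ) - 1/((n:ℂ) + a₂) ^ (σ:ℂ)) = ((d n : ℝ) : ℂ) := by
    intro n
    have p1 : (0:ℝ) ≤ (n:ℝ) + a₁ := by positivity
    have p2 : (0:ℝ) ≤ (n:ℝ) + a₂ := by have h2 := h1.trans h12; positivity
    rw [hd]
    dsimp only
    rw [one_div, one_div, one_div, one_div, Complex.ofReal_sub, Complex.ofReal_inv,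
      Complex.ofReal_inv, Complex.ofReal_cpow p1, Complex.ofReal_cpow p2]
    push_cast
    ring
  have hnonneg : ∀ n : ℕ, 0 ≤ d n := by
    intro n
    have p1 : (0:ℝ) < (n:ℝ) + a₁ := by positivity
    have hle : ((n:ℝ) + a₁) ^ σ ≤ ((n:ℝ) + a₂) ^ σ :=
      Real.rpow_le_rpow p1.le (by linarith) hσ.le
    have := one_div_le_one_div_of_le (Real.rpow_pos_of_pos p1 σ) hle
    rw [hd]; dsimp only; linarith
  have h0 : 0 < d 0 := by
    have p1 : (0:ℝ) < (0:ℕ) + a₁ := by positivity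
    have hlt : (((0:ℕ):ℝ) + a₁) ^ σ < (((0:ℕ):ℝ) + a₂) ^ σ :=
      Real.rpow_lt_rpow p1.le (by push_cast; linarith) hσ
    have := one_div_lt_one_div_of_lt (Real.rpow_pos_of_pos p1 σ) hlt
    rw [hd]; dsimp only; linarith
  have hsum : Summable d := by
    have hb : ∀ n : ℕ, ‖d n‖ ≤
        σ * (a₂ - a₁) * (((n:ℝ) + a₁) ^ (-σ - 1) + ((n:ℝ) + a₁) ^ (-σ - 1)) := by
      intro n
      have hnorm : ‖d n‖ = ‖((d n : ℝ) : ℂ)‖ := by rw [Complex.norm_real]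
      rw [hnorm, ← hcoe n]
      have := term_bound h1 h12.le (w := (σ:ℂ)) (ε := σ) (R := σ) hσ (by simp)
        (by simp [Complex.norm_real, abs_of_pos hσ]) n
      simpa using this
    refine Summable.of_norm_bounded ?_ hb
    exact (((u_summable h1 hσ).add (u_summable h1 hσ))).mul_left _
  have : (∑' n : ℕ, (1/((n:ℂ) + a₁) ^ (σ:ℂ) - 1/((n:ℂ) + a₂) ^ (σ:ℂ)))
      = ((∑' n, d n : ℝ) : ℂ) := by
    rw [Complex.ofReal_tsum]
    exact tsum_congr hcoe
  rw [this, Complex.ofReal_re]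
  exact Summable.tsum_pos hsum hnonneg 0 h0

lemma re_hurwitzZeta_tendsto_atBot (a : ℝ) :
    Tendsto (fun σ : ℝ => (hurwitzZeta a (σ:ℂ)).re) (𝓝[<] (1:ℝ)) atBot := by
  have hmap : Tendsto (fun σ : ℝ => (σ:ℂ)) (𝓝[<] (1:ℝ)) (𝓝[≠] (1:ℂ)) := by
    apply tendsto_nhdsWithin_of_tendsto_nhds_of_eventually_within
    · exact (Complex.continuous_ofReal.tendsto 1).mono_left nhdsWithin_le_nhds
    · filter_upwards [self_mem_nhdsWithin] with σ hσ
      simp only [mem_Iio] at hσ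
      simp only [mem_compl_iff, mem_singleton_iff]
      exact_mod_cast hσ.ne
  have h1 : Tendsto (fun σ : ℝ => ((σ:ℂ) - 1) * hurwitzZeta a σ) (𝓝[<] (1:ℝ)) (𝓝 1) :=
    (hurwitzZeta_residue_one a).comp hmap
  have h2 : Tendsto (fun σ : ℝ => (σ - 1) * (hurwitzZeta a (σ:ℂ)).re) (𝓝[<] (1:ℝ)) (𝓝 1) := by
    have := (Complex.continuous_re.tendsto 1).comp h1
    simp only [Complex.one_re] at this
    refine this.congr fun σ => ?_
    simp only [Function.comp_apply]
    rw [show ((σ:ℂ) - 1) = ((σ - 1 : ℝ) : ℂ) by push_cast; ring, Complex.re_ofReal_mul]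
  have h3 : Tendsto (fun σ : ℝ => (1 - σ)⁻¹) (𝓝[<] (1:ℝ)) atTop := by
    refine tendsto_inv_nhdsGT_zero.comp ?_
    apply tendsto_nhdsWithin_of_tendsto_nhds_of_eventually_within
    · have : Tendsto (fun σ : ℝ => 1 - σ) (𝓝 (1:ℝ)) (𝓝 0) := by
        have h := tendsto_const_nhds (x := (1:ℝ)) (f := 𝓝 (1:ℝ))
        have := h.sub (tendsto_id (x := 𝓝 (1:ℝ)))
        simpa using this
      exact this.mono_left nhdsWithin_le_nhds
    · filter_upwards [self_mem_nhdsWithin] with σ hσ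
      simp only [mem_Iio] at hσ
      simp only [mem_Ioi]
      linarith
  have h4 := Filter.Tendsto.pos_mul_atTop one_pos h2 h3
  have h5 : Tendsto (fun σ : ℝ => -(((σ - 1) * (hurwitzZeta a (σ:ℂ)).re) * (1 - σ)⁻¹))
      (𝓝[<] (1:ℝ)) atBot := tendsto_neg_atTop_atBot.comp h4
  refine h5.congr' ?_
  filter_upwards [self_mem_nhdsWithin] with σ hσ
  simp only [mem_Iio] at hσ
  have hne : (1:ℝ) - σ ≠ 0 := by linarith
  field_simp
  ring

/-- If `β : (0,1/2) → (0,1)` assigns to each `a` the unique zero of `σ ↦ ζ(σ, a)` in `(0,1)`,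
then `β` is strictly decreasing: `0 < a₁ < a₂ < 1/2` implies `β a₁ > β a₂`. -/
theorem hurwitzZeta_real_zero_strictAnti (β : ℝ → ℝ)
    (hβ : ∀ a ∈ Set.Ioo (0 : ℝ) (1 / 2),
      β a ∈ Set.Ioo (0 : ℝ) 1 ∧ hurwitzZeta (a : UnitAddCircle) (β a : ℂ) = 0 ∧
        ∀ σ ∈ Set.Ioo (0 : ℝ) 1, hurwitzZeta (a : UnitAddCircle) (σ : ℂ) = 0 → σ = β a) :
    ∀ a₁ a₂ : ℝ, 0 < a₁ → a₁ < a₂ → a₂ < 1 / 2 → β a₂ < β a₁ := by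
  intro a₁ a₂ ha1 h12 ha2
  obtain ⟨hb1mem, hb1zero, hb1uniq⟩ := hβ a₁ ⟨ha1, h12.trans ha2⟩
  obtain ⟨hb2mem, hb2zero, -⟩ := hβ a₂ ⟨ha1.trans h12, ha2⟩
  by_contra hcon
  push_neg at hcon
  have ha2' : a₂ ≤ 1 := by linarith
  -- the value of `ζ(·, a₁)` at `β a₂` has positive real part
  have hpos : 0 < (hurwitzZeta (a₁ : UnitAddCircle) ((β a₂ : ℝ) : ℂ)).re := by
    have hdiff := hurwitzZeta_sub_eq ha1 h12 ha2' (s := ((β a₂ : ℝ) : ℂ))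
      (by simpa using hb2mem.1)
    have hp := tsum_re_pos ha1 h12 hb2mem.1
    rw [← hdiff, Complex.sub_re, hb2zero] at hp
    simpa using hp
  -- a point `σ'` past `β a₂` where the real part is negative
  have hneg : ∃ σ' : ℝ, σ' ∈ Set.Ioo (β a₂) 1 ∧
      (hurwitzZeta (a₁ : UnitAddCircle) ((σ' : ℝ) : ℂ)).re < 0 := by
    have h := re_hurwitzZeta_tendsto_atBot a₁
    have hev : ∀ᶠ σ in 𝓝[<] (1:ℝ), (hurwitzZeta (a₁ : UnitAddCircle) ((σ : ℝ) : ℂ)).re < 0 :=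
      h.eventually_lt_atBot 0
    have hmem : Set.Ioo (β a₂) 1 ∈ 𝓝[<] (1:ℝ) :=
      Ioo_mem_nhdsLT_of_mem ⟨hb2mem.2, le_refl 1⟩
    obtain ⟨σ', h2', h1'⟩ := (hev.and (eventually_of_mem hmem fun x hx => hx)).exists
    exact ⟨σ', h1', h2'⟩
  obtain ⟨σ', hσ'mem, hσ'neg⟩ := hneg
  have hcont : ContinuousOn (fun σ : ℝ => (hurwitzZeta (a₁ : UnitAddCircle) ((σ : ℝ) : ℂ)).re)
      (Set.Icc (β a₂) σ') := by
    intro x hx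
    have hx1 : ((x : ℝ) : ℂ) ≠ 1 := by
      have hlt : x < 1 := lt_of_le_of_lt hx.2 hσ'mem.2
      exact_mod_cast hlt.ne
    exact ((Complex.continuous_re.continuousAt.comp
      ((differentiableAt_hurwitzZeta _ hx1).continuousAt.comp
        Complex.continuous_ofReal.continuousAt)).continuousWithinAt)
  have hsub : (0:ℝ) ∈ Set.Ioo ((hurwitzZeta (a₁ : UnitAddCircle) ((σ' : ℝ) : ℂ)).re)
      ((hurwitzZeta (a₁ : UnitAddCircle) (((β a₂) : ℝ) : ℂ)).re) := ⟨hσ'neg, hpos⟩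
  obtain ⟨c, hcmem, hczero⟩ := intermediate_value_Ioo' (le_of_lt hσ'mem.1) hcont hsub
  have hc01 : c ∈ Set.Ioo (0:ℝ) 1 := ⟨lt_trans hb2mem.1 hcmem.1, lt_trans hcmem.2 hσ'mem.2⟩
  have hcne1 : ((c : ℝ) : ℂ) ≠ 1 := by exact_mod_cast hc01.2.ne
  have hreal : (hurwitzZeta (a₁ : UnitAddCircle) ((c : ℝ) : ℂ)).im = 0 := by
    have hconj := hurwitzZeta_conj ha1 (le_of_lt (lt_of_lt_of_le h12 ha2')) hcne1
    rw [Complex.conj_ofReal] at hconj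
    have : (starRingEnd ℂ) (hurwitzZeta (a₁ : UnitAddCircle) ((c : ℝ) : ℂ))
        = hurwitzZeta (a₁ : UnitAddCircle) ((c : ℝ) : ℂ) := hconj
    exact (Complex.conj_eq_iff_im.mp this)
  have hzero : hurwitzZeta (a₁ : UnitAddCircle) ((c : ℝ) : ℂ) = 0 := by
    apply Complex.ext
    · simpa using hczero
    · simpa using hreal
  have hcb1 : c = β a₁ := hb1uniq c hc01 hzero
  have : β a₂ < c := hcmem.1
  rw [hcb1] at this
  exact absurd hcon (not_le.mpr this)
end

section
/- For $0 < a < 1/2$ let $\beta(a)$ denote the unique zero of $\sigma \mapsto \zeta(\sigma,a)$ in the interval $(0,1)$. Then $\beta : (0,1/2) \to (0,1)$ is a bijection. -/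
open HurwitzZeta

section HurwitzAux

open HurwitzZeta Complex Set

noncomputable def dterm (a b : ℝ) (s : ℂ) (n : ℕ) : ℂ :=
  1 / ((n : ℂ) + a) ^ s - 1 / ((n : ℂ) + b) ^ s

noncomputable def FF (a b : ℝ) (s : ℂ) : ℂ := ∑' n : ℕ, dterm a b s n

lemma key_bound {x y : ℝ} (hx : 0 < x) (hxy : x ≤ y) {s : ℂ} (hs : 0 ≤ s.re) :
    ‖1 / (y : ℂ) ^ s - 1 / (x : ℂ) ^ s‖ ≤ ‖s‖ * x ^ (-s.re - 1) * (y - x) := by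
  rcases eq_or_ne s 0 with rfl | hs0
  · simp
  have hy : 0 < y := hx.trans_le hxy
  have hderiv : ∀ t ∈ Icc x y,
      HasDerivWithinAt (fun u : ℝ => ((u : ℂ)) ^ (-s)) (-s * (t : ℂ) ^ (-s - 1)) (Icc x y) t := by
    intro t ht
    have ht0 : t ≠ 0 := (hx.trans_le ht.1).ne'
    have hr : (-s - 1 : ℂ) ≠ -1 := by
      intro h; apply hs0; linear_combination -h
    have h1 := (hasDerivAt_ofReal_cpow_const' ht0 hr).const_mul (-s)
    have h2 : (fun u : ℝ => (-s) * ((u : ℂ) ^ (-s - 1 + 1) / (-s - 1 + 1)))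
        = fun u : ℝ => (u : ℂ) ^ (-s) := by
      funext u
      have : (-s - 1 + 1 : ℂ) = -s := by ring
      rw [this, mul_div_cancel₀]
      simpa using hs0
    rw [h2] at h1
    have : (-s - 1 + 1 : ℂ) = -s := by ring
    exact (h1.congr_deriv (by rw [mul_comm])).hasDerivWithinAt
  have hbound : ∀ t ∈ Icc x y, ‖-s * (t : ℂ) ^ (-s - 1)‖ ≤ ‖s‖ * x ^ (-s.re - 1) := by
    intro t ht
    have ht0 : (0:ℝ) < t := hx.trans_le ht.1
    rw [norm_mul, norm_neg,
      Complex.norm_cpow_eq_rpow_re_of_pos ht0,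
      show ((-s - 1 : ℂ)).re = -s.re - 1 by simp]
    exact mul_le_mul_of_nonneg_left
      (Real.rpow_le_rpow_of_nonpos hx ht.1 (by linarith)) (norm_nonneg s)
  have key := (convex_Icc x y).norm_image_sub_le_of_norm_hasDerivWithin_le hderiv hbound
    (left_mem_Icc.2 hxy) (right_mem_Icc.2 hxy)
  calc ‖1 / (y : ℂ) ^ s - 1 / (x : ℂ) ^ s‖
      = ‖(y : ℂ) ^ (-s) - (x : ℂ) ^ (-s)‖ := by rw [cpow_neg, cpow_neg, one_div, one_div]
    _ ≤ ‖s‖ * x ^ (-s.re - 1) * ‖y - x‖ := key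
    _ = ‖s‖ * x ^ (-s.re - 1) * (y - x) := by
        rw [Real.norm_eq_abs, _root_.abs_of_nonneg (by linarith : (0:ℝ) ≤ y - x)]

lemma norm_dterm_le {a b : ℝ} (ha : 0 < a) (hab : a ≤ b) {s : ℂ} (hs : 0 ≤ s.re) (n : ℕ) :
    ‖dterm a b s n‖ ≤ ‖s‖ * ((n : ℝ) + a) ^ (-s.re - 1) * (b - a) := by
  have hna : (0:ℝ) < (n : ℝ) + a := by positivity
  have := key_bound (x := (n : ℝ) + a) (y := (n : ℝ) + b) hna (by linarith) hs
  rw [norm_sub_rev] at this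
  have h2 : ((n : ℝ) + b) - ((n : ℝ) + a) = b - a := by ring
  rw [h2] at this
  simpa [dterm] using this

lemma summable_aux {c : ℝ} (hc : 0 < c) {p : ℝ} (hp : p < -1) :
    Summable (fun n : ℕ => ((n : ℝ) + c) ^ p) := by
  have h := (Real.summable_one_div_nat_add_rpow c (-p)).mpr (by linarith)
  refine h.congr fun n => ?_
  have hnc : (0:ℝ) < (n : ℝ) + c := by positivity
  rw [abs_of_pos hnc, one_div, ← Real.rpow_neg hnc.le, neg_neg]

lemma summable_dterm {a b : ℝ} (ha : 0 < a) (hab : a ≤ b) {s : ℂ} (hs : 0 < s.re) :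
    Summable (dterm a b s) := by
  refine Summable.of_norm_bounded
    (((summable_aux (c := a) ha (p := -s.re - 1) (by linarith)).mul_left ‖s‖).mul_right (b - a))
    fun n => norm_dterm_le ha hab hs.le n

lemma differentiableOn_FF {a b : ℝ} (ha : 0 < a) (hab : a ≤ b) :
    DifferentiableOn ℂ (FF a b) {s : ℂ | 0 < s.re} := by
  intro s hs
  have hs0 : 0 < s.re := hs
  set U : Set ℂ := {w : ℂ | s.re / 2 < w.re} ∩ {w : ℂ | ‖w‖ < ‖s‖ + 1} with hU
  have hUo : IsOpen U := (isOpen_lt continuous_const Complex.continuous_re).inter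
    (isOpen_lt continuous_norm continuous_const)
  have hsU : s ∈ U := ⟨by simpa using by linarith, by simp⟩
  set u : ℕ → ℝ := fun n => (‖s‖ + 1) *
      ((((n : ℝ) + a) ^ (-(‖s‖ + 1) - 1)) + (((n : ℝ) + a) ^ (-(s.re / 2) - 1))) * (b - a) with hu
  have hsum : Summable u := by
    have h1 : (-(‖s‖ + 1) - 1 : ℝ) < -1 := by have := norm_nonneg s; linarith
    have h2 : (-(s.re / 2) - 1 : ℝ) < -1 := by linarith
    exact (((summable_aux ha h1).add (summable_aux ha h2)).mul_left _).mul_right _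
  have hdiff : ∀ n : ℕ, DifferentiableOn ℂ (fun w => dterm a b w n) U := by
    intro n
    have hne : ∀ c : ℝ, 0 < c → ∀ w : ℂ, ((n : ℂ) + c) ^ w ≠ 0 := by
      intro c hc w
      simp only [Ne, cpow_eq_zero_iff, not_and_or, not_ne_iff]
      left
      intro h
      have h2 : ((n : ℝ) + c : ℝ) = 0 := by exact_mod_cast h
      nlinarith [Nat.cast_nonneg (α := ℝ) n]
    have hd : ∀ c : ℝ, 0 < c → Differentiable ℂ (fun w : ℂ => 1 / ((n : ℂ) + c) ^ w) := by
      intro c hc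
      refine (differentiable_const 1).div (differentiable_id.const_cpow (Or.inl ?_)) fun w => hne c hc w
      intro h
      have h2 : ((n : ℝ) + c : ℝ) = 0 := by exact_mod_cast h
      nlinarith [Nat.cast_nonneg (α := ℝ) n]
    exact (((hd a ha).sub (hd b (ha.trans_le hab))).differentiableOn)
  have hbound : ∀ (n : ℕ) (w : ℂ), w ∈ U → ‖dterm a b w n‖ ≤ u n := by
    rintro n w ⟨hw1, hw2⟩
    have hw1' : s.re / 2 < w.re := hw1
    have hw2' : ‖w‖ < ‖s‖ + 1 := hw2
    have hwre : 0 < w.re := by linarith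
    have hna : (0:ℝ) < (n : ℝ) + a := by positivity
    refine (norm_dterm_le ha hab hwre.le n).trans ?_
    have hre_le : w.re ≤ ‖s‖ + 1 := (Complex.re_le_norm w).trans hw2'.le
    have hrp : ((n : ℝ) + a) ^ (-w.re - 1) ≤
        (((n : ℝ) + a) ^ (-(‖s‖ + 1) - 1)) + (((n : ℝ) + a) ^ (-(s.re / 2) - 1)) := by
      rcases le_or_gt 1 ((n : ℝ) + a) with h1 | h1
      · refine le_add_of_nonneg_left (by positivity) |>.trans' ?_
        exact Real.rpow_le_rpow_of_exponent_le h1 (by linarith)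
      · refine le_add_of_nonneg_right (by positivity) |>.trans' ?_
        exact Real.rpow_le_rpow_of_exponent_ge hna h1.le (by linarith)
    calc ‖w‖ * ((n : ℝ) + a) ^ (-w.re - 1) * (b - a)
        ≤ (‖s‖ + 1) * ((((n : ℝ) + a) ^ (-(‖s‖ + 1) - 1)) + (((n : ℝ) + a) ^ (-(s.re / 2) - 1)))
            * (b - a) := by
          have hba : (0:ℝ) ≤ b - a := by linarith
          gcongr
      _ = u n := rfl
  have := differentiableOn_tsum_of_summable_norm hsum hdiff hUo hbound
  exact ((this.differentiableAt (hUo.mem_nhds hsU)).differentiableWithinAt)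

lemma hz_sub_eq_FF_of_lt {a b : ℝ} (ha : 0 ≤ a) (ha1 : a ≤ 1) (hb : 0 ≤ b) (hb1 : b ≤ 1)
    {s : ℂ} (hs : 1 < s.re) :
    hurwitzZeta (a : UnitAddCircle) s - hurwitzZeta (b : UnitAddCircle) s = FF a b s :=
  ((hasSum_hurwitzZeta_of_one_lt_re ⟨ha, ha1⟩ hs).sub
    (hasSum_hurwitzZeta_of_one_lt_re ⟨hb, hb1⟩ hs)).tsum_eq.symm

lemma hz_sub_eq_FF {a b : ℝ} (ha : 0 < a) (hab : a ≤ b) (hb : b ≤ 1) {s : ℂ} (hs : 0 < s.re) :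
    hurwitzZeta (a : UnitAddCircle) s - hurwitzZeta (b : UnitAddCircle) s = FF a b s := by
  have hopen : IsOpen {s : ℂ | 0 < s.re} := isOpen_lt continuous_const Complex.continuous_re
  have h1 : AnalyticOnNhd ℂ
      (fun s => hurwitzZeta (a : UnitAddCircle) s - hurwitzZeta (b : UnitAddCircle) s)
      {s : ℂ | 0 < s.re} :=
    ((differentiable_hurwitzZeta_sub_hurwitzZeta _ _).differentiableOn).analyticOnNhd hopen
  have h2 : AnalyticOnNhd ℂ (FF a b) {s : ℂ | 0 < s.re} :=
    (differentiableOn_FF ha hab).analyticOnNhd hopen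
  have hpre : IsPreconnected {s : ℂ | 0 < s.re} := (convex_halfSpace_re_gt 0).isPreconnected
  have h2mem : (2 : ℂ) ∈ {s : ℂ | 0 < s.re} := by norm_num
  have hev : (fun s => hurwitzZeta (a : UnitAddCircle) s - hurwitzZeta (b : UnitAddCircle) s)
      =ᶠ[nhds 2] FF a b := by
    have ho : IsOpen {s : ℂ | 1 < s.re} := isOpen_lt continuous_const Complex.continuous_re
    filter_upwards [ho.mem_nhds (by norm_num : (2:ℂ) ∈ {s : ℂ | 1 < s.re})] with w hw
    exact hz_sub_eq_FF_of_lt ha.le (hab.trans hb) (ha.trans_le hab).le hb hw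
  exact h1.eqOn_of_preconnected_of_eventuallyEq h2 hpre h2mem hev hs


lemma hz_one_eq : hurwitzZeta ((1 : ℝ) : UnitAddCircle) = riemannZeta := by
  rw [show ((1 : ℝ) : UnitAddCircle) = 0 from AddCircle.coe_period 1, hurwitzZeta_zero]

lemma FF_half_one_of_lt {s : ℂ} (hs : 1 < s.re) :
    FF (1/2) 1 s = ((2 : ℂ) ^ s - 2) * riemannZeta s := by
  set u : ℕ → ℂ := fun n => 1 / ((n : ℂ) + 1) ^ s with hu
  have hU : HasSum u (riemannZeta s) := by
    have := hasSum_hurwitzZeta_of_one_lt_re (a := (1:ℝ)) ⟨by norm_num, le_refl 1⟩ hs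
    rw [hz_one_eq] at this
    simpa [hu] using this
  have h2s : (2 : ℂ) ^ s ≠ 0 := by simp [cpow_eq_zero_iff]
  have hcne : ∀ x : ℝ, 0 < x → ((x : ℂ)) ^ s ≠ 0 := by
    intro x hx
    simp only [Ne, cpow_eq_zero_iff, not_and_or, not_ne_iff]
    left
    exact_mod_cast hx.ne'
  -- odd-index terms
  have hodd : HasSum (fun k => u (2 * k + 1)) (((2:ℂ) ^ s)⁻¹ * riemannZeta s) := by
    refine (hU.mul_left ((2:ℂ) ^ s)⁻¹).congr_fun fun k => ?_
    have hb : ((2 * k + 1 : ℕ) : ℂ) + 1 = (((2 : ℝ) * ((k : ℝ) + 1) : ℝ) : ℂ) := by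
      push_cast; ring
    have hsplit := Complex.mul_cpow_ofReal_nonneg (a := 2) (b := (k : ℝ) + 1)
      (by norm_num) (by positivity) s
    have hk1 : ((k : ℂ)) + 1 = (((k : ℝ) + 1 : ℝ) : ℂ) := by push_cast; ring
    rw [hu]
    simp only [hb, hk1]
    rw [Complex.ofReal_mul, hsplit, show (((2:ℝ)) : ℂ) = (2:ℂ) from by norm_num]
    simp [one_div, mul_inv, mul_comm]
  -- even-index terms are summable
  have hevensummable : Summable (fun k => u (2 * k)) := by
    refine Summable.of_norm_bounded (summable_aux (c := 1) one_pos (p := -s.re) (by linarith))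
      fun k => ?_
    have hb : ((2 * k : ℕ) : ℂ) + 1 = (((2 * (k:ℝ) + 1 : ℝ)) : ℂ) := by push_cast; ring
    have hpos : (0:ℝ) < 2 * (k:ℝ) + 1 := by positivity
    rw [hu]
    simp only [hb, norm_div, norm_one,
      Complex.norm_cpow_eq_rpow_re_of_pos hpos]
    rw [one_div, ← Real.rpow_neg hpos.le]
    exact Real.rpow_le_rpow_of_nonpos (by positivity) (by push_cast; linarith) (by linarith)
  obtain ⟨E, hE⟩ := hevensummable
  have huniq : E + ((2:ℂ) ^ s)⁻¹ * riemannZeta s = riemannZeta s :=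
    (hE.even_add_odd hodd).unique hU
  -- sum over n + 1/2
  have hhalf : HasSum (fun n : ℕ => 1 / ((n : ℂ) + (((1:ℝ)/2 : ℝ) : ℂ)) ^ s) ((2:ℂ) ^ s * E) := by
    refine (hE.mul_left ((2:ℂ) ^ s)).congr_fun fun n => ?_
    have hb : ((2 * n : ℕ) : ℂ) + 1 = (((2 : ℝ) * ((n : ℝ) + 1/2) : ℝ) : ℂ) := by
      push_cast; ring
    have hsplit := Complex.mul_cpow_ofReal_nonneg (a := 2) (b := (n : ℝ) + 1/2)
      (by norm_num) (by positivity) s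
    have hk1 : ((n : ℂ)) + (((1:ℝ)/2 : ℝ) : ℂ) = (((n : ℝ) + 1/2 : ℝ) : ℂ) := by push_cast; ring
    have hCne : ((((n : ℝ) + 1/2 : ℝ)) : ℂ) ^ s ≠ 0 := hcne _ (by positivity)
    rw [hu]
    simp only [hb, hk1]
    rw [Complex.ofReal_mul, hsplit, show (((2:ℝ)) : ℂ) = (2:ℂ) from by norm_num]
    field_simp
  have hFF : FF (1/2) 1 s = (2:ℂ) ^ s * E - riemannZeta s := by
    have hsub := hhalf.sub hU
    rw [FF, ← hsub.tsum_eq]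
    congr 1
  rw [hFF, eq_sub_of_add_eq huniq]
  field_simp
  ring

lemma preconn_aux : IsPreconnected ({s : ℂ | 0 < s.re} \ {1}) := by
  have hA : IsPreconnected {s : ℂ | 0 < s.re ∧ 0 < s.im} :=
    ((convex_halfSpace_re_gt 0).inter (convex_halfSpace_im_gt 0)).isPreconnected
  have hB : IsPreconnected {s : ℂ | 0 < s.re ∧ s.im < 0} :=
    ((convex_halfSpace_re_gt 0).inter (convex_halfSpace_im_lt 0)).isPreconnected
  have hC : IsPreconnected {s : ℂ | 0 < s.re ∧ s.re < 1} :=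
    ((convex_halfSpace_re_gt 0).inter (convex_halfSpace_re_lt 1)).isPreconnected
  have hD : IsPreconnected {s : ℂ | 1 < s.re} :=
    (convex_halfSpace_re_gt 1).isPreconnected
  have hAC : IsPreconnected ({s : ℂ | 0 < s.re ∧ 0 < s.im} ∪ {s : ℂ | 0 < s.re ∧ s.re < 1}) := by
    refine IsPreconnected.union (⟨1/2, 1⟩ : ℂ) ?_ ?_ hA hC
    · constructor <;> norm_num
    · constructor <;> norm_num
  have hACB : IsPreconnected (({s : ℂ | 0 < s.re ∧ 0 < s.im} ∪ {s : ℂ | 0 < s.re ∧ s.re < 1})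
      ∪ {s : ℂ | 0 < s.re ∧ s.im < 0}) := by
    refine IsPreconnected.union (⟨1/2, -1⟩ : ℂ) ?_ ?_ hAC hB
    · right; constructor <;> norm_num
    · constructor <;> norm_num
  have hall : IsPreconnected ((({s : ℂ | 0 < s.re ∧ 0 < s.im} ∪ {s : ℂ | 0 < s.re ∧ s.re < 1})
      ∪ {s : ℂ | 0 < s.re ∧ s.im < 0}) ∪ {s : ℂ | 1 < s.re}) := by
    refine IsPreconnected.union (⟨2, 1⟩ : ℂ) ?_ ?_ hACB hD
    · left; left; constructor <;> norm_num
    · show (1:ℝ) < _; norm_num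
  have hset : {s : ℂ | 0 < s.re} \ {1} = (({s : ℂ | 0 < s.re ∧ 0 < s.im}
      ∪ {s : ℂ | 0 < s.re ∧ s.re < 1}) ∪ {s : ℂ | 0 < s.re ∧ s.im < 0})
      ∪ {s : ℂ | 1 < s.re} := by
    ext s
    simp only [mem_diff, mem_union, mem_setOf_eq, mem_singleton_iff]
    constructor
    · rintro ⟨h0, h1⟩
      rcases lt_trichotomy s.im 0 with him | him | him
      · exact Or.inl (Or.inr ⟨h0, him⟩)
      · have hre : s.re ≠ 1 := by
          intro h
          exact h1 (Complex.ext h (by simpa using him))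
        rcases hre.lt_or_gt with h | h
        · exact Or.inl (Or.inl (Or.inr ⟨h0, h⟩))
        · exact Or.inr h
      · exact Or.inl (Or.inl (Or.inl ⟨h0, him⟩))
    · rintro ((((⟨h0, h2⟩ | ⟨h0, h2⟩) | ⟨h0, h2⟩) | h))
      · exact ⟨h0, fun h => by rw [h] at h2; simp at h2⟩
      · exact ⟨h0, fun h => by rw [h] at h2; simp at h2⟩
      · exact ⟨h0, fun h => by rw [h] at h2; simp at h2⟩
      · refine ⟨lt_trans one_pos h, fun hh => ?_⟩
        rw [hh] at h; simp at h
  rw [hset]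
  exact hall

lemma FF_half_one_eq {s : ℂ} (hs : 0 < s.re) (hs1 : s ≠ 1) :
    FF (1/2) 1 s = ((2 : ℂ) ^ s - 2) * riemannZeta s := by
  have hopen : IsOpen ({s : ℂ | 0 < s.re} \ {1}) :=
    (isOpen_lt continuous_const Complex.continuous_re).sdiff isClosed_singleton
  have h1 : AnalyticOnNhd ℂ (FF (1/2) 1) ({s : ℂ | 0 < s.re} \ {1}) :=
    ((differentiableOn_FF (by norm_num) (by norm_num)).mono diff_subset).analyticOnNhd hopen
  have h2 : AnalyticOnNhd ℂ (fun s => ((2 : ℂ) ^ s - 2) * riemannZeta s)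
      ({s : ℂ | 0 < s.re} \ {1}) := by
    refine DifferentiableOn.analyticOnNhd (fun w hw => ?_) hopen
    exact (((differentiable_id.const_cpow (Or.inl two_ne_zero)) w).sub
      (differentiableAt_const 2)).mul (differentiableAt_riemannZeta hw.2)
      |>.differentiableWithinAt
  have h2mem : (2 : ℂ) ∈ {s : ℂ | 0 < s.re} \ {1} := by
    constructor
    · norm_num
    · simp only [mem_singleton_iff]
      intro h
      have := congrArg Complex.re h
      norm_num at this
  have hev : FF (1/2) 1 =ᶠ[nhds 2] fun s => ((2 : ℂ) ^ s - 2) * riemannZeta s := by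
    have ho : IsOpen {s : ℂ | 1 < s.re} := isOpen_lt continuous_const Complex.continuous_re
    filter_upwards [ho.mem_nhds (by norm_num : (2:ℂ) ∈ {s : ℂ | 1 < s.re})] with w hw
    exact FF_half_one_of_lt hw
  exact h1.eqOn_of_preconnected_of_eventuallyEq h2 preconn_aux h2mem hev ⟨hs, hs1⟩

noncomputable def rterm (a b σ : ℝ) (n : ℕ) : ℝ :=
  ((n : ℝ) + a) ^ (-σ) - ((n : ℝ) + b) ^ (-σ)

lemma ofReal_term {x : ℝ} (hx : 0 ≤ x) (σ : ℝ) :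
    ((x ^ (-σ) : ℝ) : ℂ) = 1 / (x : ℂ) ^ (σ : ℂ) := by
  rw [Complex.ofReal_cpow hx, Complex.ofReal_neg, cpow_neg, one_div]

lemma ofReal_rterm {a b : ℝ} (ha : 0 ≤ a) (hb : 0 ≤ b) (σ : ℝ) (n : ℕ) :
    ((rterm a b σ n : ℝ) : ℂ) = dterm a b (σ : ℂ) n := by
  rw [rterm, dterm, Complex.ofReal_sub,
    ofReal_term (by positivity) σ, ofReal_term (by positivity) σ]
  push_cast
  ring

lemma summable_rterm {a b : ℝ} (ha : 0 < a) (hab : a ≤ b) {σ : ℝ} (hσ : 0 < σ) :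
    Summable (rterm a b σ) := by
  have h := summable_dterm ha hab (s := (σ : ℂ)) (by simpa using hσ)
  exact Complex.summable_ofReal.mp
    (h.congr fun n => (ofReal_rterm ha.le (ha.trans_le hab).le σ n).symm)

lemma FF_real {a b : ℝ} (ha : 0 ≤ a) (hb : 0 ≤ b) (σ : ℝ) :
    FF a b (σ : ℂ) = ((∑' n, rterm a b σ n : ℝ) : ℂ) := by
  rw [FF, Complex.ofReal_tsum]
  exact tsum_congr fun n => (ofReal_rterm ha hb σ n).symm

lemma rterm_nonneg {a b : ℝ} (ha : 0 < a) (hab : a ≤ b) {σ : ℝ} (hσ : 0 < σ) (n : ℕ) :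
    0 ≤ rterm a b σ n := by
  rw [rterm, sub_nonneg]
  exact Real.rpow_le_rpow_of_nonpos (by positivity) (by linarith) (by linarith)

lemma tsum_rterm_pos {a b : ℝ} (ha : 0 < a) (hab : a < b) {σ : ℝ} (hσ : 0 < σ) :
    0 < ∑' n, rterm a b σ n := by
  refine Summable.tsum_pos (summable_rterm ha hab.le hσ) (fun n => rterm_nonneg ha hab.le hσ n) 0 ?_
  rw [rterm]
  simp only [Nat.cast_zero, zero_add]
  have := Real.rpow_lt_rpow_of_neg ha hab (by linarith : -σ < 0)
  linarith

lemma hz_ne {a b : ℝ} (ha : 0 < a) (hab : a < b) (hb : b ≤ 1) {σ : ℝ} (hσ : 0 < σ) :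
    hurwitzZeta (a : UnitAddCircle) (σ : ℂ) ≠ hurwitzZeta (b : UnitAddCircle) (σ : ℂ) := by
  intro h
  have h1 := hz_sub_eq_FF ha hab.le hb (s := (σ : ℂ)) (by simpa using hσ)
  rw [h, sub_self, FF_real ha.le (ha.trans hab).le σ] at h1
  have h2 : (∑' n, rterm a b σ n) = 0 := by exact_mod_cast h1.symm
  linarith [tsum_rterm_pos ha hab hσ]

lemma zeta_eq_zv {σ : ℝ} (hσ0 : 0 < σ) (hσ1 : σ < 1) :
    riemannZeta (σ : ℂ) = (((∑' n, rterm (1/2) 1 σ n) / ((2:ℝ) ^ σ - 2) : ℝ) : ℂ) := by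
  have hFe := FF_half_one_eq (s := (σ : ℂ)) (by simpa using hσ0)
    (by exact_mod_cast hσ1.ne)
  rw [FF_real (by norm_num) (by norm_num) σ] at hFe
  have h2 : ((2:ℂ)) ^ (σ : ℂ) = (((2:ℝ) ^ σ : ℝ) : ℂ) := by
    rw [Complex.ofReal_cpow (by norm_num)]
    norm_num
  have hden : ((2:ℝ) ^ σ - 2 : ℝ) ≠ 0 := by
    have h3 : (2:ℝ) ^ σ < 2 := by
      have := Real.rpow_lt_rpow_of_exponent_lt (by norm_num : (1:ℝ) < 2) hσ1
      rwa [Real.rpow_one] at this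
    linarith
  rw [h2] at hFe
  rw [Complex.ofReal_div]
  rw [eq_div_iff (by exact_mod_cast hden)]
  rw [hFe]
  push_cast
  ring

lemma abs_rterm_le {a b : ℝ} (ha : 0 < a) (hab : a ≤ b) {σ : ℝ} (hσ : 0 < σ) (n : ℕ) :
    |rterm a b σ n| ≤ σ * ((n : ℝ) + a) ^ (-σ - 1) * (b - a) := by
  have h := norm_dterm_le ha hab (s := (σ : ℂ)) (by simpa using hσ.le) n
  rw [← ofReal_rterm ha.le (ha.trans_le hab).le σ n, Complex.norm_real, Real.norm_eq_abs] at h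
  have hre : ((σ : ℂ)).re = σ := Complex.ofReal_re σ
  have hn : ‖(σ : ℂ)‖ = σ := by
    rw [Complex.norm_real, Real.norm_eq_abs, abs_of_pos hσ]
  rwa [hre, hn] at h

lemma contOn_tsum_rterm {σ : ℝ} (hσ : 0 < σ) {ε : ℝ} (hε : 0 < ε) (hε1 : ε ≤ 1) :
    ContinuousOn (fun a : ℝ => ∑' n, rterm a 1 σ n) (Icc ε 1) := by
  refine continuousOn_tsum (f := fun n (a : ℝ) => rterm a 1 σ n) (fun n => ?_)
    ((summable_aux hε (p := -σ - 1) (by linarith)).mul_left σ) (fun n a haI => ?_)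
  · refine ContinuousOn.sub ?_ continuousOn_const
    refine continuousOn_of_forall_continuousAt fun x hx => ?_
    have hx0 : ((n : ℝ) + x) ≠ 0 := by
      have hx1 : 0 < x := lt_of_lt_of_le hε hx.1
      positivity
    exact (Real.continuousAt_rpow_const _ _ (Or.inl hx0)).comp
      ((continuous_const.add continuous_id).continuousAt)
  · have haε : 0 < a := lt_of_lt_of_le hε haI.1
    have h := abs_rterm_le haε haI.2 hσ n
    rw [Real.norm_eq_abs]
    refine h.trans ?_
    have h1 : ((n : ℝ) + a) ^ (-σ - 1) ≤ ((n : ℝ) + ε) ^ (-σ - 1) :=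
      Real.rpow_le_rpow_of_nonpos (by positivity) (by linarith [haI.1]) (by linarith)
    have h2 : (1 : ℝ) - a ≤ 1 := by linarith [haI.1]
    calc σ * ((n : ℝ) + a) ^ (-σ - 1) * (1 - a)
        ≤ σ * ((n : ℝ) + ε) ^ (-σ - 1) * 1 := by
          apply mul_le_mul (by gcongr) h2 (by linarith [haI.2]) (by positivity)
      _ = σ * ((n : ℝ) + ε) ^ (-σ - 1) := mul_one _

lemma hz_val {σ : ℝ} (hσ0 : 0 < σ) (hσ1 : σ < 1) {a : ℝ} (ha : 0 < a) (ha1 : a ≤ 1) :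
    hurwitzZeta (a : UnitAddCircle) (σ : ℂ)
      = (((∑' n, rterm (1/2) 1 σ n) / ((2:ℝ) ^ σ - 2) + ∑' n, rterm a 1 σ n : ℝ) : ℂ) := by
  have h1 := hz_sub_eq_FF ha ha1 le_rfl (s := (σ : ℂ)) (by simpa using hσ0)
  rw [hz_one_eq, FF_real ha.le (by norm_num) σ, zeta_eq_zv hσ0 hσ1] at h1
  rw [Complex.ofReal_add]
  linear_combination h1

lemma exists_zero {σ : ℝ} (hσ0 : 0 < σ) (hσ1 : σ < 1) :
    ∃ a ∈ Ioo (0:ℝ) (1/2), hurwitzZeta (a : UnitAddCircle) (σ : ℂ) = 0 := by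
  set zv : ℝ := (∑' n, rterm (1/2) 1 σ n) / ((2:ℝ) ^ σ - 2) with hzv
  set G : ℝ → ℝ := fun a => zv + ∑' n, rterm a 1 σ n with hGdef
  have hr : 0 < ∑' n, rterm (1/2) 1 σ n := tsum_rterm_pos (by norm_num) (by norm_num) hσ0
  have hden : (2:ℝ) ^ σ - 2 < 0 := by
    have h3 : (2:ℝ) ^ σ < 2 := by
      have := Real.rpow_lt_rpow_of_exponent_lt (by norm_num : (1:ℝ) < 2) hσ1
      rwa [Real.rpow_one] at this
    linarith
  have hone : (1:ℝ) < (2:ℝ) ^ σ := by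
    have := Real.rpow_lt_rpow_of_exponent_lt (by norm_num : (1:ℝ) < 2) hσ0
    rwa [Real.rpow_zero] at this
  have hzvneg : zv < 0 := div_neg_of_pos_of_neg hr hden
  have hG12 : G (1/2) < 0 := by
    have hsum12 : (∑' n, rterm (1/2) 1 σ n) = zv * ((2:ℝ) ^ σ - 2) := by
      rw [hzv, div_mul_cancel₀ _ hden.ne]
    have hGeq : G (1/2) = zv * ((2:ℝ) ^ σ - 1) := by
      show zv + _ = _
      rw [hsum12]; ring
    rw [hGeq]
    nlinarith
  -- choose a₀
  set M : ℝ := 2 - zv with hM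
  have hM1 : (1:ℝ) < M := by simp only [hM]; linarith
  set a₀ : ℝ := min (1/4) (M ^ (-σ⁻¹)) with ha₀
  have ha₀pos : 0 < a₀ := lt_min (by norm_num) (Real.rpow_pos_of_pos (by linarith) _)
  have ha₀lt : a₀ < 1/2 := lt_of_le_of_lt (min_le_left _ _) (by norm_num)
  have ha₀le1 : a₀ ≤ 1 := by linarith
  have hG₀ : 0 < G a₀ := by
    have hsum := summable_rterm ha₀pos ha₀le1 hσ0
    have hlow : rterm a₀ 1 σ 0 ≤ ∑' n, rterm a₀ 1 σ n :=
      Summable.le_tsum hsum 0 fun i _ => rterm_nonneg ha₀pos ha₀le1 hσ0 i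
    have h0 : rterm a₀ 1 σ 0 = a₀ ^ (-σ) - 1 := by
      rw [rterm]
      norm_num
    have hpow : M ≤ a₀ ^ (-σ) := by
      have hle : a₀ ≤ M ^ (-σ⁻¹) := min_le_right _ _
      have := Real.rpow_le_rpow_of_nonpos ha₀pos hle (by linarith : -σ ≤ 0)
      calc M = M ^ ((-σ⁻¹) * (-σ)) := by
            rw [neg_mul_neg, inv_mul_cancel₀ hσ0.ne', Real.rpow_one]
        _ = (M ^ (-σ⁻¹)) ^ (-σ) := Real.rpow_mul (by linarith) _ _
        _ ≤ a₀ ^ (-σ) := this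
    have : (1:ℝ) ≤ G a₀ := by
      show (1:ℝ) ≤ zv + _
      have : M - 1 + zv = 1 := by rw [hM]; ring
      linarith [hlow, h0.symm.le]
    linarith
  have hc : ContinuousOn G (Icc a₀ (1/2)) := by
    refine continuousOn_const.add ?_
    exact (contOn_tsum_rterm hσ0 ha₀pos ha₀le1).mono (Icc_subset_Icc_right (by norm_num))
  have hIV := intermediate_value_Ioo' ha₀lt.le hc
  obtain ⟨c, hcmem, hc0⟩ := hIV (show (0:ℝ) ∈ Ioo (G (1/2)) (G a₀) from ⟨hG12, hG₀⟩)
  refine ⟨c, ⟨lt_trans ha₀pos hcmem.1, hcmem.2⟩, ?_⟩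
  rw [hz_val hσ0 hσ1 (lt_trans ha₀pos hcmem.1) (by linarith [hcmem.2] : c ≤ 1)]
  have : G c = 0 := hc0
  rw [hGdef] at this
  simp only [hzv] at this
  exact_mod_cast congrArg (fun x : ℝ => (x : ℂ)) this

end HurwitzAux

/-- If `β : (0,1/2) → (0,1)` assigns to each `a` the unique zero of `σ ↦ ζ(σ, a)` in `(0,1)`,
then `β` is a bijection from `(0,1/2)` onto `(0,1)`. -/
theorem hurwitzZeta_real_zero_bijOn (β : ℝ → ℝ)
    (hβ : ∀ a ∈ Set.Ioo (0 : ℝ) (1 / 2),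
      β a ∈ Set.Ioo (0 : ℝ) 1 ∧ hurwitzZeta (a : UnitAddCircle) (β a : ℂ) = 0 ∧
        ∀ σ ∈ Set.Ioo (0 : ℝ) 1, hurwitzZeta (a : UnitAddCircle) (σ : ℂ) = 0 → σ = β a) :
    Set.BijOn β (Set.Ioo (0 : ℝ) (1 / 2)) (Set.Ioo (0 : ℝ) 1) := by

  have key : ∀ x y, x ∈ Set.Ioo (0:ℝ) (1/2) → y ∈ Set.Ioo (0:ℝ) (1/2) → x < y →
      β x = β y → False := by
    intro x y hx hy hxy he
    have hzx := (hβ x hx).2.1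
    have hzy := (hβ y hy).2.1
    rw [← he] at hzy
    exact hz_ne hx.1 hxy (by linarith [hy.2] : y ≤ 1) (hβ x hx).1.1 (by rw [hzx, hzy])
  refine ⟨fun a ha => (hβ a ha).1, ?_, ?_⟩
  · intro x hx y hy he
    by_contra hne
    rcases Ne.lt_or_gt hne with h | h
    · exact key x y hx hy h he
    · exact key y x hy hx h he.symm
  · intro σ hσ
    obtain ⟨a, haI, h0⟩ := exists_zero hσ.1 hσ.2
    exact ⟨a, haI, ((hβ a haI).2.2 σ hσ h0).symm⟩
end

section
/- For every real $a$ with $0 < a < 1/2$, there exists $x_0 > 0$ such that $H(a, x_0) = 0$, $H(a,x) > 0$ for all $0 < x < x_0$, and $H(a,x) < 0$ for all $x > x_0$. -/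
/-- The kernel `H(a,x) = e^{(1-a)x}/(e^x - 1) - 1/x`. -/
noncomputable def H (a x : ℝ) : ℝ := Real.exp ((1 - a) * x) / (Real.exp x - 1) - 1 / x

open Real
noncomputable def gK (a x : ℝ) : ℝ := x - exp (a*x) + exp ((a-1)*x)
noncomputable def gdK (a x : ℝ) : ℝ := 1 - a * exp (a*x) + (a-1) * exp ((a-1)*x)
noncomputable def gddK (a x : ℝ) : ℝ := -(a^2) * exp (a*x) + (a-1)^2 * exp ((a-1)*x)

lemma hasDerivAt_gK (a x : ℝ) : HasDerivAt (gK a) (gdK a x) x := by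
  have h1 : HasDerivAt (fun x : ℝ => exp (a*x)) (exp (a*x) * (a*1)) x :=
    (((hasDerivAt_id x).const_mul a)).exp
  have h2 : HasDerivAt (fun x : ℝ => exp ((a-1)*x)) (exp ((a-1)*x) * ((a-1)*1)) x :=
    (((hasDerivAt_id x).const_mul (a-1))).exp
  have := ((hasDerivAt_id x).sub h1).add h2
  convert this using 1
  · rfl
  · rfl
  · rfl
  unfold gdK; ring

lemma hasDerivAt_gdK (a x : ℝ) : HasDerivAt (gdK a) (gddK a x) x := by
  have h1 : HasDerivAt (fun x : ℝ => exp (a*x)) (exp (a*x) * (a*1)) x :=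
    (((hasDerivAt_id x).const_mul a)).exp
  have h2 : HasDerivAt (fun x : ℝ => exp ((a-1)*x)) (exp ((a-1)*x) * ((a-1)*1)) x :=
    (((hasDerivAt_id x).const_mul (a-1))).exp
  have := ((hasDerivAt_const x (1:ℝ)).sub (h1.const_mul a)).add (h2.const_mul (a-1))
  convert this using 1
  · rfl
  · rfl
  · rfl
  unfold gddK; ring

lemma cont_gK (a : ℝ) : Continuous (gK a) := by unfold gK; continuity
lemma cont_gdK (a : ℝ) : Continuous (gdK a) := by unfold gdK; continuity

lemma gddK_factor (a x : ℝ) : gddK a x = exp ((a-1)*x) * ((a-1)^2 - a^2 * exp x) := by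
  unfold gddK
  have : exp ((a-1)*x) * exp x = exp (a*x) := by rw [← Real.exp_add]; ring_nf
  nlinarith [this]

section main
variable {a : ℝ} (ha : 0 < a) (ha' : a < 1/2)

lemma expx1 (ha : 0 < a) (ha' : a < 1/2) :
    a^2 * Real.exp (2 * Real.log ((1-a)/a)) = (a-1)^2 := by
  have h : Real.exp (2 * Real.log ((1-a)/a)) = ((1-a)/a)^2 := by
    rw [two_mul, Real.exp_add, Real.exp_log (div_pos (by linarith) ha), sq]
  rw [h]; field_simp; ring

lemma gddK_pos (ha : 0 < a) (ha' : a < 1/2) {x : ℝ} (hx : x < 2 * Real.log ((1-a)/a)) :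
    0 < gddK a x := by
  rw [gddK_factor]
  have h1 := expx1 ha ha'
  have h2 : Real.exp x < Real.exp (2 * Real.log ((1-a)/a)) := Real.exp_lt_exp.mpr hx
  have hfac : 0 < (a-1)^2 - a^2 * Real.exp x := by nlinarith [mul_pos (pow_pos ha 2) (sub_pos.mpr h2)]
  exact mul_pos (Real.exp_pos _) hfac

lemma gddK_neg (ha : 0 < a) (ha' : a < 1/2) {x : ℝ} (hx : 2 * Real.log ((1-a)/a) < x) :
    gddK a x < 0 := by
  rw [gddK_factor]
  have h1 := expx1 ha ha'
  have h2 : Real.exp (2 * Real.log ((1-a)/a)) < Real.exp x := Real.exp_lt_exp.mpr hx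
  have hfac : (a-1)^2 - a^2 * Real.exp x < 0 := by nlinarith [mul_pos (pow_pos ha 2) (sub_pos.mpr h2)]
  exact mul_neg_of_pos_of_neg (Real.exp_pos _) hfac


lemma gdK_sign (ha : 0 < a) (ha' : a < 1/2) :
    ∃ x₂ : ℝ, 0 < x₂ ∧ (∀ x, 0 < x → x < x₂ → 0 < gdK a x) ∧ (∀ x, x₂ < x → gdK a x < 0) := by
  set x₁ := 2*Real.log ((1-a)/a) with hx1
  have hx₁pos : 0 < x₁ := by
    have h : 1 < (1-a)/a := by rw [lt_div_iff₀ ha]; linarith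
    have := Real.log_pos h; linarith
  have hmono : StrictMonoOn (gdK a) (Set.Icc 0 x₁) := by
    apply strictMonoOn_of_deriv_pos (convex_Icc _ _) ((cont_gdK a).continuousOn)
    intro x hx
    rw [interior_Icc] at hx
    rw [(hasDerivAt_gdK a x).deriv]
    exact gddK_pos ha ha' hx.2
  have hanti : StrictAntiOn (gdK a) (Set.Ici x₁) := by
    apply strictAntiOn_of_deriv_neg (convex_Ici _) ((cont_gdK a).continuousOn)
    intro x hx
    rw [interior_Ici] at hx
    rw [(hasDerivAt_gdK a x).deriv]
    exact gddK_neg ha ha' hx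
  have hgd0 : gdK a 0 = 0 := by unfold gdK; simp
  have hgdx₁ : 0 < gdK a x₁ := by
    have := hmono (Set.left_mem_Icc.mpr hx₁pos.le) (Set.right_mem_Icc.mpr hx₁pos.le) hx₁pos
    rwa [hgd0] at this
  set M₁ := x₁ + 1/a^2 with hM1
  have hM₁ : x₁ < M₁ := by
    have h : (0:ℝ) < 1/a^2 := by positivity
    rw [hM1]; linarith
  have hgdM₁ : gdK a M₁ < 0 := by
    unfold gdK
    have h1 := Real.add_one_le_exp (a*M₁)
    have h2 := Real.exp_pos ((a-1)*M₁)
    have haM : 1 ≤ a^2 * M₁ := by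
      rw [hM1]
      have : a^2 * (1/a^2) = 1 := by field_simp
      nlinarith
    nlinarith
  obtain ⟨x₂, hmem, hval⟩ := intermediate_value_Icc' hM₁.le ((cont_gdK a).continuousOn)
    (Set.mem_Icc.mpr ⟨hgdM₁.le, hgdx₁.le⟩)
  have hx₂gt : x₁ < x₂ := by
    rcases lt_or_eq_of_le hmem.1 with h|h
    · exact h
    · exfalso; rw [← h] at hval; linarith
  refine ⟨x₂, by linarith, ?_, ?_⟩
  · intro x hx hxlt
    rcases le_or_gt x x₁ with h|h
    · have := hmono (Set.left_mem_Icc.mpr hx₁pos.le) ⟨hx.le, h⟩ hx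
      rwa [hgd0] at this
    · have := hanti h.le (Set.mem_Ici.mpr hx₂gt.le) hxlt
      rwa [hval] at this
  · intro x hx
    have := hanti (Set.mem_Ici.mpr hx₂gt.le) (Set.mem_Ici.mpr (by linarith)) hx
    rwa [hval] at this


lemma gK_sign (ha : 0 < a) (ha' : a < 1/2) :
    ∃ x₀ : ℝ, 0 < x₀ ∧ gK a x₀ = 0 ∧ (∀ x, 0 < x → x < x₀ → 0 < gK a x) ∧
      (∀ x, x₀ < x → gK a x < 0) := by
  obtain ⟨x₂, hx₂pos, hgdpos, hgdneg⟩ := gdK_sign ha ha'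
  have hmono : StrictMonoOn (gK a) (Set.Icc 0 x₂) := by
    apply strictMonoOn_of_deriv_pos (convex_Icc _ _) ((cont_gK a).continuousOn)
    intro x hx
    rw [interior_Icc] at hx
    rw [(hasDerivAt_gK a x).deriv]
    exact hgdpos x hx.1 hx.2
  have hanti : StrictAntiOn (gK a) (Set.Ici x₂) := by
    apply strictAntiOn_of_deriv_neg (convex_Ici _) ((cont_gK a).continuousOn)
    intro x hx
    rw [interior_Ici] at hx
    rw [(hasDerivAt_gK a x).deriv]
    exact hgdneg x hx
  have hg0 : gK a 0 = 0 := by unfold gK; simp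
  have hgx₂ : 0 < gK a x₂ := by
    have := hmono (Set.left_mem_Icc.mpr hx₂pos.le) (Set.right_mem_Icc.mpr hx₂pos.le) hx₂pos
    rwa [hg0] at this
  set M₂ := x₂ + 4/a^2 with hM2
  clear_value M₂
  have hM₂ : x₂ < M₂ := by
    have h : (0:ℝ) < 4/a^2 := by positivity
    rw [hM2]; linarith
  have hM₂pos : 0 < M₂ := lt_trans hx₂pos hM₂
  have hgM₂ : gK a M₂ < 0 := by
    unfold gK
    have e : Real.exp (a*M₂) = Real.exp (a*M₂/2)^2 := by
      rw [sq, ← Real.exp_add]; ring_nf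
    have h1 := Real.add_one_le_exp (a*M₂/2)
    have h2 : Real.exp ((a-1)*M₂) ≤ 1 := by
      rw [Real.exp_le_one_iff]
      nlinarith
    have haM : 4 ≤ a^2 * M₂ := by
      rw [hM2]
      have h : a^2 * (4/a^2) = 4 := by field_simp
      nlinarith
    have h3 : 0 ≤ a*M₂/2 := by positivity
    have h4 : (a*M₂/2+1)^2 ≤ Real.exp (a*M₂/2)^2 := by nlinarith [Real.exp_pos (a*M₂/2)]
    have h5 : 4*M₂ ≤ a^2*M₂^2 := by nlinarith [mul_le_mul_of_nonneg_left haM hM₂pos.le]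
    have h6 : a^2*M₂^2/4 + a*M₂ + 1 ≤ Real.exp (a*M₂) := by rw [e]; nlinarith
    have h7 : 0 < a * M₂ := mul_pos ha hM₂pos
    linarith [h6, h2, h5, h7]
  obtain ⟨x₀, hmem, hval⟩ := intermediate_value_Icc' hM₂.le ((cont_gK a).continuousOn)
    (Set.mem_Icc.mpr ⟨hgM₂.le, hgx₂.le⟩)
  have hx₀gt : x₂ < x₀ := by
    rcases lt_or_eq_of_le hmem.1 with h|h
    · exact h
    · exfalso; rw [← h] at hval; linarith
  refine ⟨x₀, by linarith, hval, ?_, ?_⟩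
  · intro x hx hxlt
    rcases le_or_gt x x₂ with h|h
    · have := hmono (Set.left_mem_Icc.mpr hx₂pos.le) ⟨hx.le, h⟩ hx
      rwa [hg0] at this
    · have := hanti h.le (Set.mem_Ici.mpr hx₀gt.le) hxlt
      rwa [hval] at this
  · intro x hx
    have := hanti (Set.mem_Ici.mpr hx₀gt.le) (Set.mem_Ici.mpr (by linarith)) hx
    rwa [hval] at this

end main

lemma H_eq (a : ℝ) {x : ℝ} (hx : 0 < x) :
    H a x = gK a x * (Real.exp ((1-a)*x) / (x * (Real.exp x - 1))) := by
  have hex : 1 < Real.exp x := by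
    have := Real.add_one_le_exp x; linarith
  have hne : Real.exp x - 1 ≠ 0 := ne_of_gt (by linarith)
  have e1 : Real.exp ((1-a)*x) * Real.exp (a*x) = Real.exp x := by
    rw [← Real.exp_add]; ring_nf
  have e2 : Real.exp ((1-a)*x) * Real.exp ((a-1)*x) = 1 := by
    have h : (1-a)*x + (a-1)*x = 0 := by ring
    rw [← Real.exp_add, h, Real.exp_zero]
  have key : gK a x * Real.exp ((1-a)*x) = x * Real.exp ((1-a)*x) - (Real.exp x - 1) := by
    unfold gK
    linear_combination e2 - e1
  have lhs : H a x = (x * Real.exp ((1-a)*x) - (Real.exp x - 1)) / (x*(Real.exp x - 1)) := by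
    unfold H
    field_simp
  rw [lhs, ← key]
  ring


/-- For `0 < a < 1/2` there exists `x₀ > 0` with `H(a,x₀) = 0`, `H(a,x) > 0` on `(0,x₀)`,
and `H(a,x) < 0` on `(x₀,∞)`. -/
theorem exists_sign_change_of_H (a : ℝ) (ha : 0 < a) (ha' : a < 1 / 2) :
    ∃ x₀ : ℝ, 0 < x₀ ∧ H a x₀ = 0 ∧
      (∀ x : ℝ, 0 < x → x < x₀ → 0 < H a x) ∧
      (∀ x : ℝ, x₀ < x → H a x < 0) := by
  obtain ⟨x₀, hx₀pos, hg0, hgpos, hgneg⟩ := gK_sign ha ha'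
  have hc : ∀ x : ℝ, 0 < x → 0 < Real.exp ((1-a)*x) / (x * (Real.exp x - 1)) := by
    intro x hx
    have hex : 1 < Real.exp x := by have := Real.add_one_le_exp x; linarith
    exact div_pos (Real.exp_pos _) (mul_pos hx (by linarith))
  refine ⟨x₀, hx₀pos, ?_, ?_, ?_⟩
  · rw [H_eq a hx₀pos, hg0, zero_mul]
  · intro x hx hxlt
    rw [H_eq a hx]
    exact mul_pos (hgpos x hx hxlt) (hc x hx)
  · intro x hx
    have hx' : 0 < x := lt_trans hx₀pos hx
    rw [H_eq a hx']
    exact mul_neg_of_neg_of_pos (hgneg x hx) (hc x hx')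
end

section
/- For every real $a$ with $0 < a < 1/2$, the function $h(a,x) = x e^{(1-a)x} - e^x + 1$ of $x > 0$ has exactly one positive zero $x_0$; moreover $h(a,x) > 0$ for $0 < x < x_0$ and $h(a,x) < 0$ for $x > x_0$. -/
/-- The function `h(a,x) = x e^{(1-a)x} - e^x + 1`. -/
noncomputable def h (a x : ℝ) : ℝ := x * Real.exp ((1 - a) * x) - Real.exp x + 1


private lemma aux_F_neg (a X : ℝ) (ha : 0 < a) (ha1 : a < 1) (hX : 0 < X)
    (hbig : 4 * (1 - a) < a ^ 2 * X) :
    X + Real.exp (-(1 - a) * X) - Real.exp (a * X) < 0 := by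
  have h1 : Real.exp (-(1 - a) * X) ≤ 1 := by
    rw [Real.exp_le_one_iff]
    nlinarith
  have h2 : 1 + a * X / 2 ≤ Real.exp (a * X / 2) := by
    linarith [Real.add_one_le_exp (a * X / 2)]
  have h3 : Real.exp (a * X) = Real.exp (a * X / 2) * Real.exp (a * X / 2) := by
    rw [← Real.exp_add]; ring_nf
  have h4 : 1 + a * X + (a * X) ^ 2 / 4 ≤ Real.exp (a * X) := by
    rw [h3]; nlinarith [Real.exp_pos (a * X / 2), mul_pos ha hX]
  have h6 : 4 * (1 - a) * X < (a * X) ^ 2 := by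
    nlinarith [mul_lt_mul_of_pos_right hbig hX]
  linarith

/-- For `0 < a < 1/2`, the function `x ↦ h(a,x)` has exactly one positive zero `x₀`; moreover
`h(a,x) > 0` for `0 < x < x₀` and `h(a,x) < 0` for `x > x₀`. -/
theorem h_exactly_one_positive_zero (a : ℝ) (ha : 0 < a) (ha' : a < 1 / 2) :
    ∃ x₀ : ℝ, 0 < x₀ ∧ h a x₀ = 0 ∧
      (∀ x : ℝ, 0 < x → x < x₀ → 0 < h a x) ∧
      (∀ x : ℝ, x₀ < x → h a x < 0) ∧
      (∀ y : ℝ, 0 < y → h a y = 0 → y = x₀) := by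
  set b : ℝ := 1 - a with hbdef
  have hb0 : 0 < b := by rw [hbdef]; linarith
  have hab : a < b := by rw [hbdef]; linarith
  set F : ℝ → ℝ := fun x => x + Real.exp (-b * x) - Real.exp (a * x) with hFdef
  set G : ℝ → ℝ := fun x => 1 - b * Real.exp (-b * x) - a * Real.exp (a * x) with hGdef
  have hexp : ∀ x : ℝ, Real.exp (a * x) = Real.exp x * Real.exp (-b * x) := by
    intro x; rw [← Real.exp_add]; congr 1; rw [hbdef]; ring
  have hFd : ∀ x : ℝ, HasDerivAt F (G x) x := by
    intro x
    have h1 : HasDerivAt (fun x : ℝ => Real.exp (-b * x)) (Real.exp (-b * x) * (-b)) x := by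
      simpa using (((hasDerivAt_id x).const_mul (-b)).exp)
    have h2 : HasDerivAt (fun x : ℝ => Real.exp (a * x)) (Real.exp (a * x) * a) x := by
      simpa using (((hasDerivAt_id x).const_mul a).exp)
    have := ((hasDerivAt_id x).add h1).sub h2
    convert this using 1
    iterate 3 rfl
    simp only [hGdef]; ring
  have hGd : ∀ x : ℝ,
      HasDerivAt G (b ^ 2 * Real.exp (-b * x) - a ^ 2 * Real.exp (a * x)) x := by
    intro x
    have h1 : HasDerivAt (fun x : ℝ => Real.exp (-b * x)) (Real.exp (-b * x) * (-b)) x := by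
      simpa using (((hasDerivAt_id x).const_mul (-b)).exp)
    have h2 : HasDerivAt (fun x : ℝ => Real.exp (a * x)) (Real.exp (a * x) * a) x := by
      simpa using (((hasDerivAt_id x).const_mul a).exp)
    have := ((hasDerivAt_const x (1 : ℝ)).sub (h1.const_mul b)).sub (h2.const_mul a)
    convert this using 1
    iterate 3 rfl
    ring
  have hFc : Continuous F := by
    simp only [hFdef]; fun_prop
  have hGc : Continuous G := by
    simp only [hGdef]; fun_prop
  set x₁ : ℝ := Real.log (b ^ 2 / a ^ 2) with hx1def
  have hratio : 1 < b ^ 2 / a ^ 2 := by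
    rw [lt_div_iff₀ (by positivity)]
    nlinarith
  have hx1pos : 0 < x₁ := Real.log_pos hratio
  have hexpx1 : Real.exp x₁ = b ^ 2 / a ^ 2 := Real.exp_log (by positivity)
  -- G is strictly increasing on [0, x₁]
  have hGmono : StrictMonoOn G (Set.Icc 0 x₁) := by
    apply strictMonoOn_of_deriv_pos (convex_Icc _ _) hGc.continuousOn
    intro x hx
    rw [interior_Icc] at hx
    rw [(hGd x).deriv]
    have h3 : Real.exp x < b ^ 2 / a ^ 2 := by
      rw [← hexpx1]; exact Real.exp_lt_exp.mpr hx.2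
    have h4 : a ^ 2 * Real.exp x < b ^ 2 := by
      have := (lt_div_iff₀ (by positivity : (0:ℝ) < a ^ 2)).mp h3
      linarith
    rw [hexp x]
    nlinarith [Real.exp_pos (-b * x)]
  have hG0 : G 0 = 0 := by
    simp only [hGdef, mul_zero, Real.exp_zero, mul_one]; rw [hbdef]; ring
  have hGpos1 : ∀ x : ℝ, 0 < x → x ≤ x₁ → 0 < G x := by
    intro x hx hx'
    have := hGmono (Set.left_mem_Icc.mpr hx1pos.le) ⟨hx.le, hx'⟩ hx
    rwa [hG0] at this
  -- G is strictly decreasing on [x₁, ∞)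
  have hGanti : StrictAntiOn G (Set.Ici x₁) := by
    apply strictAntiOn_of_deriv_neg (convex_Ici _) hGc.continuousOn
    intro x hx
    rw [interior_Ici] at hx
    rw [(hGd x).deriv]
    have h3 : b ^ 2 / a ^ 2 < Real.exp x := by
      rw [← hexpx1]; exact Real.exp_lt_exp.mpr hx
    have h4 : b ^ 2 < a ^ 2 * Real.exp x := by
      have := (div_lt_iff₀ (by positivity : (0:ℝ) < a ^ 2)).mp h3
      linarith
    rw [hexp x]
    nlinarith [Real.exp_pos (-b * x)]
  -- G is eventually negative
  set X₂ : ℝ := x₁ + 1 / a ^ 2 with hX2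
  have hx1X₂ : x₁ < X₂ := by
    rw [hX2]
    have : (0:ℝ) < 1 / a ^ 2 := by positivity
    linarith
  have hGX₂ : G X₂ < 0 := by
    have key : 1 < a * Real.exp (a * X₂) := by
      calc (1:ℝ) < a ^ 2 * x₁ + 1 + a := by nlinarith [mul_pos (mul_pos ha ha) hx1pos]
        _ = a * (a * X₂ + 1) := by rw [hX2]; field_simp
        _ ≤ a * Real.exp (a * X₂) := by
            apply mul_le_mul_of_nonneg_left _ ha.le
            linarith [Real.add_one_le_exp (a * X₂)]
    have hpos : 0 < b * Real.exp (-b * X₂) := by positivity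
    show 1 - b * Real.exp (-b * X₂) - a * Real.exp (a * X₂) < 0
    linarith
  -- m : the unique zero of G, located in (x₁, X₂]
  obtain ⟨m, hmmem, hGm⟩ : ∃ m ∈ Set.Icc x₁ X₂, G m = 0 := by
    have h0 : (0:ℝ) ∈ Set.Icc (G X₂) (G x₁) :=
      ⟨hGX₂.le, (hGpos1 x₁ hx1pos le_rfl).le⟩
    obtain ⟨m, hm, hm'⟩ := intermediate_value_Icc' hx1X₂.le hGc.continuousOn h0
    exact ⟨m, hm, hm'⟩
  have hmgt : x₁ < m := by
    rcases lt_or_eq_of_le hmmem.1 with hlt | heq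
    · exact hlt
    · exfalso; rw [← heq] at hGm; linarith [hGpos1 x₁ hx1pos le_rfl]
  have hm0 : 0 < m := hx1pos.trans hmgt
  have hGpos : ∀ x : ℝ, 0 < x → x < m → 0 < G x := by
    intro x hx hxm
    rcases le_or_gt x x₁ with hle | hgt
    · exact hGpos1 x hx hle
    · have := hGanti (Set.mem_Ici.mpr hgt.le) (Set.mem_Ici.mpr (hgt.le.trans hxm.le)) hxm
      rw [hGm] at this
      exact this
  have hGneg : ∀ x : ℝ, m < x → G x < 0 := by
    intro x hx
    have := hGanti (Set.mem_Ici.mpr hmgt.le)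
      (Set.mem_Ici.mpr ((hmgt.le).trans hx.le)) hx
    rw [hGm] at this
    exact this
  -- F is strictly increasing on [0, m], strictly decreasing on [m, ∞)
  have hFmono : StrictMonoOn F (Set.Icc 0 m) := by
    apply strictMonoOn_of_deriv_pos (convex_Icc _ _) hFc.continuousOn
    intro x hx
    rw [interior_Icc] at hx
    rw [(hFd x).deriv]
    exact hGpos x hx.1 hx.2
  have hFanti : StrictAntiOn F (Set.Ici m) := by
    apply strictAntiOn_of_deriv_neg (convex_Ici _) hFc.continuousOn
    intro x hx
    rw [interior_Ici] at hx
    rw [(hFd x).deriv]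
    exact hGneg x hx
  have hF0 : F 0 = 0 := by
    simp [hFdef]
  have hFpos1 : ∀ x : ℝ, 0 < x → x ≤ m → 0 < F x := by
    intro x hx hx'
    have := hFmono (Set.left_mem_Icc.mpr hm0.le) ⟨hx.le, hx'⟩ hx
    rwa [hF0] at this
  -- F is eventually negative
  set X₃ : ℝ := m + 4 / a ^ 2 with hX3
  have hmX₃ : m < X₃ := by
    rw [hX3]
    have : (0:ℝ) < 4 / a ^ 2 := by positivity
    linarith
  have hX₃pos : 0 < X₃ := hm0.trans hmX₃
  have hFX₃ : F X₃ < 0 := by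
    have hbig : 4 * (1 - a) < a ^ 2 * X₃ := by
      have he : a ^ 2 * X₃ = a ^ 2 * m + 4 := by
        rw [hX3]; field_simp
      nlinarith [mul_pos (mul_pos ha ha) hm0]
    have := aux_F_neg a X₃ ha (by linarith) hX₃pos hbig
    show X₃ + Real.exp (-b * X₃) - Real.exp (a * X₃) < 0
    rw [show -b = -(1 - a) from by rw [hbdef]]
    exact this
  -- x₀ : the unique zero of F in (m, X₃]
  obtain ⟨x₀, hx₀mem, hFx₀⟩ : ∃ x₀ ∈ Set.Icc m X₃, F x₀ = 0 := by
    have h0 : (0:ℝ) ∈ Set.Icc (F X₃) (F m) :=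
      ⟨hFX₃.le, (hFpos1 m hm0 le_rfl).le⟩
    obtain ⟨x₀, hx, hx'⟩ := intermediate_value_Icc' hmX₃.le hFc.continuousOn h0
    exact ⟨x₀, hx, hx'⟩
  have hx₀m : m < x₀ := by
    rcases lt_or_eq_of_le hx₀mem.1 with hlt | heq
    · exact hlt
    · exfalso; rw [← heq] at hFx₀; linarith [hFpos1 m hm0 le_rfl]
  have hx₀pos : 0 < x₀ := hm0.trans hx₀m
  have hFposAll : ∀ x : ℝ, 0 < x → x < x₀ → 0 < F x := by
    intro x hx hxx
    rcases le_or_gt x m with hle | hgt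
    · exact hFpos1 x hx hle
    · have := hFanti (Set.mem_Ici.mpr hgt.le) (Set.mem_Ici.mpr (hgt.le.trans hxx.le)) hxx
      rw [hFx₀] at this
      exact this
  have hFnegAll : ∀ x : ℝ, x₀ < x → F x < 0 := by
    intro x hx
    have := hFanti (Set.mem_Ici.mpr hx₀m.le)
      (Set.mem_Ici.mpr (hx₀m.le.trans hx.le)) hx
    rw [hFx₀] at this
    exact this
  -- relation between h and F
  have hhF : ∀ x : ℝ, h a x = Real.exp (b * x) * F x := by
    intro x
    have e1 : Real.exp (b * x) * Real.exp (-b * x) = 1 := by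
      rw [← Real.exp_add]
      norm_num
    have e2 : Real.exp (b * x) * Real.exp (a * x) = Real.exp x := by
      rw [← Real.exp_add]; congr 1; rw [hbdef]; ring
    simp only [h, hFdef]
    rw [show (1:ℝ) - a = b from hbdef.symm]
    linear_combination e2 - e1
  refine ⟨x₀, hx₀pos, ?_, ?_, ?_, ?_⟩
  · rw [hhF, hFx₀, mul_zero]
  · intro x hx hxx
    rw [hhF]
    exact mul_pos (Real.exp_pos _) (hFposAll x hx hxx)
  · intro x hx
    rw [hhF]
    exact mul_neg_of_pos_of_neg (Real.exp_pos _) (hFnegAll x hx)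
  · intro y hy hhy
    rw [hhF] at hhy
    have hFy : F y = 0 := by
      rcases mul_eq_zero.mp hhy with hz | hz
      · exact absurd hz (Real.exp_ne_zero _)
      · exact hz
    by_contra hne
    rcases lt_or_gt_of_ne hne with hlt | hgt
    · linarith [hFposAll y hy hlt]
    · linarith [hFnegAll y hgt]
end

section
/- Let $0 < a < 1/2$ and let $x_0 > 0$ be the point such that $H(a,x) > 0$ for $0 < x < x_0$ and $H(a,x) < 0$ for $x > x_0$. Then for every $\sigma \in (0,1)$, the derivative with respect to $\sigma$ of $F(\sigma) = x_0^{-\sigma}\,\Gamma(\sigma)\,\zeta(\sigma,a)$ satisfies $F'(\sigma) = \int_0^{\infty} H(a,x) \left(\frac{x}{x_0}\right)^{\sigma} \log\left(\frac{x}{x_0}\right) \frac{dx}{x} < 0$. -/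
open HurwitzZeta

namespace HAux

open Set Real MeasureTheory Filter Topology

/-- The positive kernel `K(a,x) = e^{(1-a)x}/(e^x-1)`. -/
noncomputable def K (a x : ℝ) : ℝ := Real.exp ((1 - a) * x) / (Real.exp x - 1)

lemma H_eq (a x : ℝ) : H a x = K a x - 1 / x := rfl

lemma exp_sub_one_pos {x : ℝ} (hx : 0 < x) : 0 < Real.exp x - 1 := by
  have : (1 : ℝ) < Real.exp x := by
    simpa using Real.exp_lt_exp.mpr hx
  linarith

lemma one_sub_exp_neg_pos {x : ℝ} (hx : 0 < x) : 0 < 1 - Real.exp (-x) := by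
  have : Real.exp (-x) < 1 := by
    simpa using Real.exp_lt_exp.mpr (by linarith : -x < 0)
  linarith

lemma K_eq {a x : ℝ} (hx : 0 < x) : K a x = Real.exp (-(a * x)) / (1 - Real.exp (-x)) := by
  rw [K, show (1 - a) * x = -(a * x) + x by ring, Real.exp_add]
  rw [div_eq_div_iff (exp_sub_one_pos hx).ne' (one_sub_exp_neg_pos hx).ne']
  have h1 : Real.exp x * Real.exp (-x) = 1 := by
    rw [← Real.exp_add]; simp
  linear_combination (-Real.exp (-(a * x))) * h1

lemma K_pos {a x : ℝ} (hx : 0 < x) : 0 < K a x :=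
  div_pos (Real.exp_pos _) (exp_sub_one_pos hx)

lemma inv_lt_inv_one_sub_exp {x : ℝ} (hx : 0 < x) : 1 / x < 1 / (1 - Real.exp (-x)) := by
  apply one_div_lt_one_div_of_lt (one_sub_exp_neg_pos hx)
  have := Real.add_one_lt_exp (by linarith : (-x : ℝ) ≠ 0)
  linarith

lemma inv_one_sub_exp_lt {x : ℝ} (hx : 0 < x) : 1 / (1 - Real.exp (-x)) < 1 / x + 1 := by
  have hexp := Real.add_one_lt_exp (hx.ne' : x ≠ 0)
  have he : Real.exp (-x) * Real.exp x = 1 := by rw [← Real.exp_add]; simp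
  have h1 : (x + 1) * Real.exp (-x) < 1 := by nlinarith [Real.exp_pos (-x)]
  have h2 : 1 / (1 - Real.exp (-x)) < (x + 1) / x := by
    rw [div_lt_div_iff₀ (one_sub_exp_neg_pos hx) hx]
    nlinarith [h1]
  have h3 : (x + 1) / x = 1 / x + 1 := by field_simp; ring
  linarith

lemma H_le_exp {a x : ℝ} (ha : 0 ≤ a) (hx : 0 < x) : H a x ≤ Real.exp (-(a * x)) := by
  rw [H_eq, K_eq hx]
  have h1 : Real.exp (-(a * x)) / (1 - Real.exp (-x)) ≤ Real.exp (-(a * x)) * (1 / x + 1) := by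
    rw [div_eq_mul_one_div]
    exact mul_le_mul_of_nonneg_left (inv_one_sub_exp_lt hx).le (Real.exp_pos _).le
  have h2 : Real.exp (-(a * x)) ≤ 1 := by
    rw [Real.exp_le_one_iff]
    exact neg_nonpos.mpr (mul_nonneg ha hx.le)
  have h3 : Real.exp (-(a * x)) * (1 / x) ≤ 1 / x := by
    apply mul_le_of_le_one_left (by positivity) h2
  nlinarith [h1, h3]

lemma neg_min_le_H {a x : ℝ} (ha : 0 ≤ a) (hx : 0 < x) : -(min a (1 / x)) ≤ H a x := by
  rw [H_eq, K_eq hx]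
  have h1 : Real.exp (-(a * x)) * (1 / x) ≤ Real.exp (-(a * x)) / (1 - Real.exp (-x)) := by
    rw [div_eq_mul_one_div _ (1 - Real.exp (-x))]
    exact mul_le_mul_of_nonneg_left (inv_lt_inv_one_sub_exp hx).le (Real.exp_pos _).le
  have h2 : 1 - a * x ≤ Real.exp (-(a * x)) := by
    have := Real.add_one_le_exp (-(a * x)); linarith
  have h0 : (0:ℝ) ≤ Real.exp (-(a*x)) := (Real.exp_pos _).le
  rcases min_cases a (1 / x) with ⟨hm, _⟩ | ⟨hm, _⟩ <;> rw [hm]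
  · -- min = a : H ≥ (exp(-ax)-1)/x ≥ -a
    have : (Real.exp (-(a * x)) - 1) / x ≥ -a := by
      rw [ge_iff_le, le_div_iff₀ hx]; nlinarith
    have h4 : Real.exp (-(a * x)) * (1 / x) - 1 / x = (Real.exp (-(a * x)) - 1) / x := by
      field_simp
    nlinarith [h1]
  · -- min = 1/x : H ≥ exp(-ax)/x - 1/x ≥ -1/x
    nlinarith [h1, mul_pos (Real.exp_pos (-(a*x))) (one_div_pos.mpr hx)]

lemma abs_H_le {a x : ℝ} (ha : 0 ≤ a) (hx : 0 < x) :
    |H a x| ≤ Real.exp (-(a * x)) + min a (1 / x) := by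
  rw [abs_le]
  constructor
  · have := neg_min_le_H ha hx
    have : (0:ℝ) ≤ Real.exp (-(a*x)) := (Real.exp_pos _).le
    have := neg_min_le_H ha hx
    linarith
  · have h := H_le_exp ha hx
    have hm : 0 ≤ min a (1/x) := le_min ha (by positivity)
    linarith

lemma continuousOn_K (a : ℝ) : ContinuousOn (K a) (Ioi 0) := by
  apply ContinuousOn.div
  · exact (Real.continuous_exp.comp (continuous_const.mul continuous_id)).continuousOn
  · exact (Real.continuous_exp.sub continuous_const).continuousOn
  · intro x hx; exact (exp_sub_one_pos hx).ne'

lemma continuousOn_H (a : ℝ) : ContinuousOn (H a) (Ioi 0) := by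
  have : ContinuousOn (fun x : ℝ => 1 / x) (Ioi 0) :=
    ContinuousOn.div continuousOn_const continuousOn_id (fun x hx => ne_of_gt hx)
  exact (continuousOn_K a).sub this

end HAux

open Set Real MeasureTheory Filter Topology

section part2
variable {a c : ℝ}

noncomputable def gbound (a c x : ℝ) : ℝ := (Real.exp (-(a * x)) + min a (1 / x)) * x ^ (c - 1)

lemma continuousOn_gbound (a c : ℝ) : ContinuousOn (gbound a c) (Ioi 0) := by
  apply ContinuousOn.mul
  · apply ContinuousOn.add
    · exact (Real.continuous_exp.comp (continuous_const.mul continuous_id).neg).continuousOn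
    · have hdiv : ContinuousOn (fun x : ℝ => 1 / x) (Ioi 0) :=
        continuousOn_const.div continuousOn_id fun x hx => ne_of_gt hx
      exact (continuous_const.min continuous_id).comp_continuousOn hdiv
  · exact continuousOn_id.rpow_const fun x hx => Or.inl (ne_of_gt (mem_Ioi.mp hx))

lemma gbound_nonneg (ha : 0 < a) {x : ℝ} (hx : 0 < x) : 0 ≤ gbound a c x :=
  mul_nonneg (add_nonneg (Real.exp_pos _).le (le_min ha.le (by positivity)))
    (Real.rpow_nonneg hx.le _)

lemma exp_neg_le_sq {t : ℝ} (ht : 0 < t) : Real.exp (-t) ≤ 4 / t ^ 2 := by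
  have h2 := Real.add_one_le_exp (t / 2)
  have h3 : Real.exp (t / 2) ^ 2 = Real.exp t := by
    rw [sq, ← Real.exp_add]; norm_num
  have key : t ^ 2 ≤ 4 * Real.exp t := by nlinarith [h2, h3]
  have hmul : Real.exp (-t) * Real.exp t = 1 := by rw [← Real.exp_add]; simp
  rw [le_div_iff₀ (by positivity : (0:ℝ) < t ^ 2)]
  nlinarith [mul_le_mul_of_nonneg_left key (Real.exp_pos (-t)).le, hmul]

lemma integrableOn_gbound (ha : 0 < a) (hc : 0 < c) (hc' : c < 1) :
    IntegrableOn (gbound a c) (Ioi 0) := by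
  have key : Ioc (0:ℝ) 1 ∪ Ioi 1 = Ioi 0 := Ioc_union_Ioi_eq_Ioi zero_le_one
  rw [← key]
  apply IntegrableOn.union
  · -- on Ioc 0 1
    have hint : IntegrableOn (fun x : ℝ => (1 + a) * x ^ (c - 1)) (Ioc 0 1) := by
      have h0 : IntervalIntegrable (fun x : ℝ => x ^ (c - 1)) volume 0 1 :=
        intervalIntegral.intervalIntegrable_rpow' (by linarith)
      exact ((intervalIntegrable_iff_integrableOn_Ioc_of_le zero_le_one).mp h0).const_mul _
    apply Integrable.mono' hint
    · exact ((continuousOn_gbound a c).mono Ioc_subset_Ioi_self).aestronglyMeasurable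
        measurableSet_Ioc
    · refine (ae_restrict_iff' measurableSet_Ioc).mpr (.of_forall fun x hx => ?_)
      have hx0 : 0 < x := hx.1
      have h1 : Real.exp (-(a * x)) ≤ 1 := by
        rw [Real.exp_le_one_iff]; exact neg_nonpos.mpr (mul_nonneg ha.le hx0.le)
      have h2 : min a (1 / x) ≤ a := min_le_left _ _
      have h3 : (0:ℝ) ≤ x ^ (c - 1) := Real.rpow_nonneg hx0.le _
      rw [Real.norm_eq_abs, abs_of_nonneg (gbound_nonneg ha hx0), gbound]
      apply mul_le_mul_of_nonneg_right (by linarith) h3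
  · -- on Ioi 1
    have hint : IntegrableOn (fun x : ℝ => (4 / a ^ 2 + 1) * x ^ (c - 2)) (Ioi 1) :=
      (integrableOn_Ioi_rpow_of_lt (by linarith) one_pos).const_mul _
    apply Integrable.mono' hint
    · exact ((continuousOn_gbound a c).mono fun x (hx : x ∈ Ioi (1:ℝ)) =>
        mem_Ioi.mpr (lt_trans one_pos (mem_Ioi.mp hx))).aestronglyMeasurable measurableSet_Ioi
    · refine (ae_restrict_iff' measurableSet_Ioi).mpr (.of_forall fun x hx => ?_)
      rw [mem_Ioi] at hx
      have hx0 : (0:ℝ) < x := lt_trans one_pos hx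
      have e1 : Real.exp (-(a * x)) ≤ 4 / a ^ 2 * x⁻¹ * x⁻¹ := by
        have h := exp_neg_le_sq (mul_pos ha hx0)
        have heq : 4 / (a * x) ^ 2 = 4 / a ^ 2 * x⁻¹ * x⁻¹ := by
          field_simp
        rw [heq] at h; exact h
      have e2 : min a (1 / x) ≤ x⁻¹ := by
        rw [one_div]; exact min_le_right _ _
      have h3 : (0:ℝ) ≤ x ^ (c - 1) := Real.rpow_nonneg hx0.le _
      rw [Real.norm_eq_abs, abs_of_nonneg (gbound_nonneg ha hx0), gbound]
      have key2 : (Real.exp (-(a * x)) + min a (1 / x)) ≤ (4 / a ^ 2 + 1) * x⁻¹ := by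
        have hxi : x⁻¹ ≤ 1 := by
          rw [inv_le_one_iff₀]; right; exact hx.le
        have hxi0 : 0 < x⁻¹ := inv_pos.mpr hx0
        have h5 : 4 / a ^ 2 * x⁻¹ * x⁻¹ ≤ 4 / a ^ 2 * x⁻¹ :=
          mul_le_of_le_one_right (by positivity) hxi
        nlinarith [e1, e2, h5]
      calc (Real.exp (-(a * x)) + min a (1 / x)) * x ^ (c - 1)
          ≤ ((4 / a ^ 2 + 1) * x⁻¹) * x ^ (c - 1) := mul_le_mul_of_nonneg_right key2 h3
        _ = (4 / a ^ 2 + 1) * x ^ (c - 2) := by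
            rw [mul_assoc]
            congr 1
            rw [← Real.rpow_neg_one x, ← Real.rpow_add hx0]
            congr 1; ring

lemma integrableOn_abs_H_rpow (ha : 0 < a) (hc : 0 < c) (hc' : c < 1) :
    IntegrableOn (fun x => H a x * x ^ (c - 1)) (Ioi 0) := by
  apply Integrable.mono' (integrableOn_gbound ha hc hc')
  · apply ContinuousOn.aestronglyMeasurable _ measurableSet_Ioi
    exact (HAux.continuousOn_H a).mul
      (continuousOn_id.rpow_const fun x hx => Or.inl (ne_of_gt (mem_Ioi.mp hx)))
  · refine (ae_restrict_iff' measurableSet_Ioi).mpr (.of_forall fun x hx => ?_)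
    rw [mem_Ioi] at hx
    rw [Real.norm_eq_abs, abs_mul, abs_of_nonneg (Real.rpow_nonneg hx.le _), gbound]
    exact mul_le_mul_of_nonneg_right (HAux.abs_H_le ha.le hx) (Real.rpow_nonneg hx.le _)

end part2

open Set Real MeasureTheory Filter Topology Asymptotics HurwitzZeta

section part3
variable {a : ℝ}

/-- complex version of `K`. -/
noncomputable def Fc (a : ℝ) : ℝ → ℂ := fun x => (HAux.K a x : ℂ)
/-- complex version of `H`. -/
noncomputable def HC (a : ℝ) : ℝ → ℂ := fun x => (H a x : ℂ)

noncomputable def Af (a : ℝ) (s : ℂ) : ℂ := mellin (Set.indicator (Ioc 0 1) (HC a)) s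
noncomputable def Bf (a : ℝ) (s : ℂ) : ℂ := mellin (Set.indicator (Ioi 1) (Fc a)) s

lemma K_le_two_mul {x : ℝ} (ha : 0 ≤ a) (hx : 0 < x) :
    HAux.K a x ≤ Real.exp (-(a * x)) * (1 / x + 1) := by
  rw [HAux.K_eq hx, div_eq_mul_one_div]
  exact mul_le_mul_of_nonneg_left (HAux.inv_one_sub_exp_lt hx).le (Real.exp_pos _).le

lemma continuousOn_Fc (a : ℝ) : ContinuousOn (Fc a) (Ioi 0) :=
  Complex.continuous_ofReal.comp_continuousOn (HAux.continuousOn_K a)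

lemma continuousOn_HC (a : ℝ) : ContinuousOn (HC a) (Ioi 0) :=
  Complex.continuous_ofReal.comp_continuousOn (HAux.continuousOn_H a)

lemma Fc_isBigO_top (ha : 0 < a) : (Fc a) =O[atTop] fun x => Real.exp (-a * x) := by
  rw [isBigO_iff]
  refine ⟨2, ?_⟩
  filter_upwards [eventually_ge_atTop (1:ℝ)] with x hx
  have hx0 : (0:ℝ) < x := lt_of_lt_of_le one_pos hx
  have h1 : HAux.K a x ≤ Real.exp (-(a * x)) * (1 / x + 1) := K_le_two_mul ha.le hx0
  have h2 : 1 / x + 1 ≤ 2 := by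
    have : 1 / x ≤ 1 := by
      rw [div_le_one hx0]; exact hx
    linarith
  have h3 : HAux.K a x ≤ 2 * Real.exp (-(a * x)) := by
    nlinarith [Real.exp_pos (-(a * x))]
  have h4 : ‖Fc a x‖ = HAux.K a x := by
    rw [Fc, Complex.norm_real, Real.norm_eq_abs, abs_of_pos (HAux.K_pos hx0)]
  rw [h4, Real.norm_eq_abs, Real.abs_exp, neg_mul]
  exact h3

lemma Fc_isBigO_zero (ha : 0 < a) : (Fc a) =O[𝓝[>] (0:ℝ)] fun x => x ^ (-1 : ℝ) := by
  rw [isBigO_iff]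
  refine ⟨2, ?_⟩
  filter_upwards [Ioo_mem_nhdsGT_of_mem (Set.mem_Ico.mpr ⟨le_refl (0:ℝ), zero_lt_one⟩)]
    with x hx
  obtain ⟨hx0, hx1⟩ := hx
  have h1 : HAux.K a x ≤ Real.exp (-(a * x)) * (1 / x + 1) := K_le_two_mul ha.le hx0
  have h2 : Real.exp (-(a * x)) ≤ 1 := by
    rw [Real.exp_le_one_iff]; exact neg_nonpos.mpr (mul_nonneg ha.le hx0.le)
  have h3 : HAux.K a x ≤ 1 / x + 1 := by
    nlinarith [Real.exp_pos (-(a * x)), one_div_pos.mpr hx0]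
  have h4 : 1 / x + 1 ≤ 2 * (1 / x) := by
    have : (1:ℝ) ≤ 1 / x := by
      rw [le_div_iff₀ hx0]; linarith
    linarith
  have h5 : ‖Fc a x‖ = HAux.K a x := by
    rw [Fc, Complex.norm_real, Real.norm_eq_abs, abs_of_pos (HAux.K_pos hx0)]
  rw [h5, Real.norm_eq_abs, abs_of_pos (Real.rpow_pos_of_pos hx0 _), Real.rpow_neg_one]
  rw [← one_div]
  linarith

lemma locallyIntegrableOn_Fc (a : ℝ) : LocallyIntegrableOn (Fc a) (Ioi 0) :=
  (continuousOn_Fc a).locallyIntegrableOn measurableSet_Ioi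

lemma mellinConvergent_Fc (ha : 0 < a) {s : ℂ} (hs : 1 < s.re) :
    MellinConvergent (Fc a) s :=
  mellinConvergent_of_isBigO_rpow_exp ha (locallyIntegrableOn_Fc a) (Fc_isBigO_top ha)
    (Fc_isBigO_zero ha) hs

end part3

open Set Real MeasureTheory Filter Topology Asymptotics HurwitzZeta

section part4
variable {a : ℝ}

lemma hasSum_K_exp (a : ℝ) {t : ℝ} (ht : 0 < t) :
    HasSum (fun n : ℕ => Real.exp (-((n : ℝ) + a) * t)) (HAux.K a t) := by
  have hlt : Real.exp (-t) < 1 := by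
    rw [Real.exp_lt_one_iff]; linarith
  have hg : HasSum (fun n : ℕ => Real.exp (-t) ^ n) (1 - Real.exp (-t))⁻¹ :=
    hasSum_geometric_of_lt_one (Real.exp_pos _).le hlt
  have h2 := hg.mul_left (Real.exp (-(a * t)))
  have heq : (fun n : ℕ => Real.exp (-(a * t)) * Real.exp (-t) ^ n)
      = fun n : ℕ => Real.exp (-((n : ℝ) + a) * t) := by
    funext n
    rw [← Real.exp_nat_mul, ← Real.exp_add]
    congr 1; ring
  rw [HAux.K_eq ht, div_eq_mul_inv]
  exact heq ▸ h2

lemma contOn_cpow_smul {f : ℝ → ℂ} (hf : ContinuousOn f (Ioi 0)) (c : ℂ) :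
    ContinuousOn (fun t : ℝ => (t : ℂ) ^ c • f t) (Ioi 0) := by
  apply ContinuousOn.fun_smul _ hf
  intro t ht
  exact (Complex.continuousAt_ofReal_cpow_const _ _ (Or.inr (ne_of_gt ht))).continuousWithinAt

lemma hasSum_mellin_K (ha : 0 < a) (ha1 : a ≤ 1) {s : ℂ} (hs : 1 < s.re) :
    HasSum (fun n : ℕ => Complex.Gamma s * (1 : ℂ) / (((n : ℝ) + a : ℝ) : ℂ) ^ s)
      (mellin (Fc a) s) := by
  apply hasSum_mellin (fun n => Or.inr (by positivity)) (by linarith : 0 < s.re)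
  · intro t ht
    have hr := hasSum_K_exp a (Set.mem_Ioi.mp ht)
    have hc := hr.mapL Complex.ofRealCLM
    simpa [Fc] using hc
  · have hσ : 1 < (Complex.ofReal s.re).re := by simpa using hs
    have h1 := (hasSum_hurwitzZeta_of_one_lt_re ⟨ha.le, ha1⟩ hσ).summable
    have h2 := summable_norm_iff.mpr h1
    refine h2.congr fun n => ?_
    have hpos : (0:ℝ) < (n : ℝ) + a := by positivity
    rw [norm_div, norm_one]
    rw [show ((n : ℂ) + (a : ℂ)) = (((n : ℝ) + a : ℝ) : ℂ) from by push_cast; ring]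
    rw [Complex.norm_cpow_eq_rpow_re_of_pos hpos, Complex.ofReal_re]

lemma gamma_hurwitz_eq_mellin (ha : 0 < a) (ha1 : a ≤ 1) {s : ℂ} (hs : 1 < s.re) :
    Complex.Gamma s * hurwitzZeta (a : UnitAddCircle) s = mellin (Fc a) s := by
  have h1 := (hasSum_hurwitzZeta_of_one_lt_re ⟨ha.le, ha1⟩ hs).mul_left (Complex.Gamma s)
  have h2 := hasSum_mellin_K ha ha1 hs
  simp only [mul_one] at h2
  push_cast at h2
  simp only [mul_one_div] at h1
  exact h1.unique h2

lemma mellin_indicator_eq {S : Set ℝ} (hS : MeasurableSet S) (hsub : S ⊆ Ioi 0)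
    (f : ℝ → ℂ) (s : ℂ) :
    mellin (Set.indicator S f) s = ∫ t in S, (t : ℂ) ^ (s - 1) • f t := by
  rw [mellin]
  have h1 : ∀ t : ℝ, (t:ℂ) ^ (s-1) • Set.indicator S f t
      = Set.indicator S (fun t : ℝ => (t:ℂ) ^ (s-1) • f t) t := by
    intro t; by_cases ht : t ∈ S <;> simp [ht]
  simp_rw [h1]
  rw [integral_indicator hS, Measure.restrict_restrict hS, Set.inter_eq_self_of_subset_left hsub]

lemma integrableOn_cpow_smul_HC (ha : 0 < a) {s : ℂ} (hs : 0 < s.re) :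
    IntegrableOn (fun t : ℝ => (t:ℂ) ^ (s - 1) • HC a t) (Ioc 0 1) := by
  have hconst : IntegrableOn (fun t : ℝ => (1 + a) * t ^ (s.re - 1)) (Ioc 0 1) := by
    have h0 : IntervalIntegrable (fun x : ℝ => x ^ (s.re - 1)) volume 0 1 :=
      intervalIntegral.intervalIntegrable_rpow' (by linarith)
    exact ((intervalIntegrable_iff_integrableOn_Ioc_of_le zero_le_one).mp h0).const_mul _
  apply Integrable.mono' hconst
  · exact ((contOn_cpow_smul (continuousOn_HC a) (s-1)).mono
      Ioc_subset_Ioi_self).aestronglyMeasurable measurableSet_Ioc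
  · refine (ae_restrict_iff' measurableSet_Ioc).mpr (.of_forall fun t ht => ?_)
    obtain ⟨ht0, ht1⟩ := ht
    rw [norm_smul, Complex.norm_cpow_eq_rpow_re_of_pos ht0]
    have h2 : ‖HC a t‖ ≤ 1 + a := by
      rw [HC, Complex.norm_real, Real.norm_eq_abs]
      have := HAux.abs_H_le ha.le ht0
      have hexp : Real.exp (-(a * t)) ≤ 1 := by
        rw [Real.exp_le_one_iff]; exact neg_nonpos.mpr (mul_nonneg ha.le ht0.le)
      have hmin : min a (1 / t) ≤ a := min_le_left _ _
      linarith
    have h3 : t ^ (s - 1).re = t ^ (s.re - 1) := by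
      rw [Complex.sub_re, Complex.one_re]
    rw [h3, mul_comm (1 + a)]
    exact mul_le_mul_of_nonneg_left h2 (Real.rpow_nonneg ht0.le _)

lemma integral_Ioc_cpow_eq {s : ℂ} (hs : 1 < s.re) :
    ∫ t in Ioc (0:ℝ) 1, (t:ℂ) ^ (s - 2) = 1 / (s - 1) := by
  rw [← intervalIntegral.integral_of_le zero_le_one]
  rw [integral_cpow (Or.inl (by rw [Complex.sub_re]; norm_num; linarith))]
  have hne : s - 2 + 1 ≠ 0 := by
    intro h
    have : s = 1 := by linear_combination h
    rw [this] at hs; norm_num at hs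
  rw [Complex.ofReal_one, Complex.ofReal_zero, Complex.one_cpow, Complex.zero_cpow hne]
  rw [show s - 2 + 1 = s - 1 by ring, sub_zero]

lemma mellin_Fc_split (ha : 0 < a) {s : ℂ} (hs : 1 < s.re) :
    mellin (Fc a) s = Af a s + 1 / (s - 1) + Bf a s := by
  have hconv := mellinConvergent_Fc ha hs
  have hdisj : Disjoint (Ioc (0:ℝ) 1) (Ioi 1) := Ioc_disjoint_Ioi le_rfl
  have hunion : Ioc (0:ℝ) 1 ∪ Ioi 1 = Ioi 0 := Ioc_union_Ioi_eq_Ioi zero_le_one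
  have hi1 : IntegrableOn (fun t : ℝ => (t:ℂ) ^ (s-1) • Fc a t) (Ioc 0 1) :=
    hconv.mono_set (hunion ▸ subset_union_left)
  have hi2 : IntegrableOn (fun t : ℝ => (t:ℂ) ^ (s-1) • Fc a t) (Ioi 1) :=
    hconv.mono_set (hunion ▸ subset_union_right)
  have hsplit : mellin (Fc a) s
      = (∫ t in Ioc 0 1, ((t:ℝ):ℂ) ^ (s-1) • Fc a t)
        + ∫ t in Ioi 1, ((t:ℝ):ℂ) ^ (s-1) • Fc a t := by
    rw [mellin, ← hunion, setIntegral_union hdisj measurableSet_Ioi hi1 hi2]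
  have hpow : IntegrableOn (fun t : ℝ => (t:ℂ) ^ (s - 2)) (Ioc 0 1) := by
    have h0 : IntervalIntegrable (fun x : ℝ => (x:ℂ) ^ (s-2)) volume 0 1 :=
      intervalIntegral.intervalIntegrable_cpow' (by rw [Complex.sub_re]; norm_num; linarith)
    exact (intervalIntegrable_iff_integrableOn_Ioc_of_le zero_le_one).mp h0
  have hHC := integrableOn_cpow_smul_HC ha (by linarith : 0 < s.re)
  have hIoc : (∫ t in Ioc (0:ℝ) 1, (t:ℂ) ^ (s-1) • Fc a t)
      = Af a s + 1 / (s - 1) := by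
    rw [Af, mellin_indicator_eq measurableSet_Ioc Ioc_subset_Ioi_self,
      ← integral_Ioc_cpow_eq hs, ← integral_add hHC hpow]
    apply setIntegral_congr_fun measurableSet_Ioc
    intro t ht
    have ht0 : 0 < t := ht.1
    have htne : (t:ℂ) ≠ 0 := Complex.ofReal_ne_zero.mpr ht0.ne'
    have hFH : Fc a t = HC a t + ((t:ℂ))⁻¹ := by
      rw [Fc, HC, HAux.H_eq]
      push_cast
      ring
    dsimp only
    rw [hFH, smul_add, smul_eq_mul, smul_eq_mul]
    congr 1
    rw [← Complex.cpow_neg_one (t:ℂ), ← Complex.cpow_add _ _ htne]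
    congr 1; ring
  have hIoi : (∫ t in Ioi (1:ℝ), (t:ℂ) ^ (s-1) • Fc a t) = Bf a s := by
    rw [Bf, mellin_indicator_eq measurableSet_Ioi (fun x hx => mem_Ioi.mpr (lt_trans one_pos (mem_Ioi.mp hx)))]
  rw [hsplit, hIoc, hIoi]

end part4

open Set Real MeasureTheory Filter Topology Asymptotics HurwitzZeta

section part5
variable {a : ℝ}

lemma indicator_HC_isBigO_top (a c : ℝ) :
    (Set.indicator (Ioc 0 1) (HC a)) =O[atTop] fun x : ℝ => x ^ (-c : ℝ) := by
  rw [isBigO_iff]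
  refine ⟨1, ?_⟩
  filter_upwards [eventually_gt_atTop (1:ℝ)] with x hx
  rw [Set.indicator_of_notMem (by simp [Set.mem_Ioc]; intro _; linarith)]
  simp only [norm_zero]
  positivity

lemma indicator_HC_isBigO_zero (ha : 0 < a) :
    (Set.indicator (Ioc 0 1) (HC a)) =O[𝓝[>] (0:ℝ)] fun x : ℝ => x ^ (-0 : ℝ) := by
  rw [isBigO_iff]
  refine ⟨1 + a, ?_⟩
  filter_upwards [Ioo_mem_nhdsGT_of_mem (Set.mem_Ico.mpr ⟨le_refl (0:ℝ), zero_lt_one⟩)]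
    with x hx
  obtain ⟨hx0, hx1⟩ := hx
  rw [Set.indicator_of_mem (Set.mem_Ioc.mpr ⟨hx0, hx1.le⟩)]
  have h2 : ‖HC a x‖ ≤ 1 + a := by
    rw [HC, Complex.norm_real, Real.norm_eq_abs]
    have := HAux.abs_H_le ha.le hx0
    have hexp : Real.exp (-(a * x)) ≤ 1 := by
      rw [Real.exp_le_one_iff]; exact neg_nonpos.mpr (mul_nonneg ha.le hx0.le)
    have hmin : min a (1 / x) ≤ a := min_le_left _ _
    linarith
  have h3 : ‖x ^ (-0 : ℝ)‖ = 1 := by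
    norm_num
  rw [h3, mul_one]
  exact h2

lemma locallyIntegrableOn_indicator_HC (ha : 0 < a) :
    LocallyIntegrableOn (Set.indicator (Ioc 0 1) (HC a)) (Ioi 0) := by
  apply IntegrableOn.locallyIntegrableOn
  have h1 : IntegrableOn (HC a) (Ioc 0 1) := by
    have hconst : IntegrableOn (fun _ : ℝ => (1 + a : ℝ)) (Ioc 0 1) := by
      apply (integrableOn_const_iff (C := (1 + a : ℝ))).mpr
      exact Or.inr measure_Ioc_lt_top
    apply Integrable.mono' hconst
    · exact ((continuousOn_HC a).mono Ioc_subset_Ioi_self).aestronglyMeasurable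
        measurableSet_Ioc
    · refine (ae_restrict_iff' measurableSet_Ioc).mpr (.of_forall fun t ht => ?_)
      obtain ⟨ht0, ht1⟩ := ht
      rw [HC, Complex.norm_real, Real.norm_eq_abs]
      have := HAux.abs_H_le ha.le ht0
      have hexp : Real.exp (-(a * t)) ≤ 1 := by
        rw [Real.exp_le_one_iff]; exact neg_nonpos.mpr (mul_nonneg ha.le ht0.le)
      have hmin : min a (1 / t) ≤ a := min_le_left _ _
      linarith
  have h2 := h1.integrable_indicator measurableSet_Ioc
  exact h2.integrableOn

lemma differentiableAt_Af (ha : 0 < a) {s : ℂ} (hs : 0 < s.re) :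
    DifferentiableAt ℂ (Af a) s :=
  mellin_differentiableAt_of_isBigO_rpow (locallyIntegrableOn_indicator_HC ha)
    (indicator_HC_isBigO_top a (s.re + 1)) (lt_add_one _) (indicator_HC_isBigO_zero ha)
    (by norm_num; exact hs)

lemma locallyIntegrableOn_indicator_Fc (a : ℝ) :
    LocallyIntegrableOn (Set.indicator (Ioi 1) (Fc a)) (Ioi 0) := by
  intro x hx
  have hx0 : (0:ℝ) < x := hx
  have hsub : Icc (x/2) (x+1) ⊆ Ioi 0 := fun y hy => lt_of_lt_of_le (by linarith) hy.1
  refine ⟨Icc (x/2) (x+1), ?_, ?_⟩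
  · exact mem_nhdsWithin_of_mem_nhds (Icc_mem_nhds (by linarith) (by linarith))
  · have hFc : IntegrableOn (Fc a) (Icc (x/2) (x+1)) :=
      ((continuousOn_Fc a).mono hsub).integrableOn_compact isCompact_Icc
    apply Integrable.mono' hFc.norm
    · exact (((continuousOn_Fc a).mono hsub).aestronglyMeasurable
        measurableSet_Icc).indicator measurableSet_Ioi
    · refine Eventually.of_forall fun t => ?_
      by_cases ht : t ∈ Ioi (1:ℝ) <;> simp [ht]

lemma indicator_Fc_isBigO_top (ha : 0 < a) :
    (Set.indicator (Ioi 1) (Fc a)) =O[atTop] fun x : ℝ => Real.exp (-a * x) := by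
  have he : Fc a =ᶠ[atTop] Set.indicator (Ioi 1) (Fc a) := by
    filter_upwards [eventually_gt_atTop (1:ℝ)] with x hx
    rw [Set.indicator_of_mem (Set.mem_Ioi.mpr hx)]
  exact (Fc_isBigO_top ha).congr' he EventuallyEq.rfl

lemma indicator_Fc_isBigO_zero (a : ℝ) :
    (Set.indicator (Ioi 1) (Fc a)) =O[𝓝[>] (0:ℝ)] fun x : ℝ => x ^ (-0 : ℝ) := by
  rw [isBigO_iff]
  refine ⟨1, ?_⟩
  filter_upwards [Ioo_mem_nhdsGT_of_mem (Set.mem_Ico.mpr ⟨le_refl (0:ℝ), zero_lt_one⟩)]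
    with x hx
  rw [Set.indicator_of_notMem (by simp [Set.mem_Ioi]; linarith [hx.2])]
  simp only [norm_zero]
  positivity

lemma differentiableAt_Bf (ha : 0 < a) {s : ℂ} (hs : 0 < s.re) :
    DifferentiableAt ℂ (Bf a) s :=
  mellin_differentiableAt_of_isBigO_rpow_exp ha (locallyIntegrableOn_indicator_Fc a)
    (indicator_Fc_isBigO_top ha) (indicator_Fc_isBigO_zero a) (by norm_num; exact hs)

end part5

open Set Real MeasureTheory Filter Topology Asymptotics HurwitzZeta

section part6
variable {a : ℝ}

def Ureg : Set ℂ := {s | 0 < s.re ∧ s ≠ 1}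

lemma isOpen_Ureg : IsOpen Ureg := by
  have h1 : IsOpen {s : ℂ | 0 < s.re} := isOpen_lt continuous_const Complex.continuous_re
  have h2 : IsOpen {s : ℂ | s ≠ 1} := isOpen_ne
  exact h1.inter h2

lemma preconnected_Ureg : IsPreconnected Ureg := by
  have hA : Convex ℝ {s : ℂ | 0 < s.re ∧ s.re < 1} :=
    (convex_halfSpace_re_gt 0).inter (convex_halfSpace_re_lt 1)
  have hB : Convex ℝ {s : ℂ | 1 < s.re} := convex_halfSpace_re_gt 1
  have hP : Convex ℝ {s : ℂ | 0 < s.re ∧ 0 < s.im} :=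
    (convex_halfSpace_re_gt 0).inter (convex_halfSpace_im_gt 0)
  have hM : Convex ℝ {s : ℂ | 0 < s.re ∧ s.im < 0} :=
    (convex_halfSpace_re_gt 0).inter (convex_halfSpace_im_lt 0)
  have hU : Ureg = ({s : ℂ | 0 < s.re ∧ s.re < 1} ∪ {s : ℂ | 0 < s.re ∧ 0 < s.im})
      ∪ ({s : ℂ | 1 < s.re} ∪ {s : ℂ | 0 < s.re ∧ s.im < 0}) := by
    ext s
    simp only [Ureg, Set.mem_setOf_eq, Set.mem_union]
    constructor
    · rintro ⟨h0, h1⟩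
      rcases lt_trichotomy s.im 0 with him | him | him
      · exact Or.inr (Or.inr ⟨h0, him⟩)
      · rcases lt_trichotomy s.re 1 with hre | hre | hre
        · exact Or.inl (Or.inl ⟨h0, hre⟩)
        · exact absurd (Complex.ext (by simp [hre]) (by simp [him])) h1
        · exact Or.inr (Or.inl hre)
      · exact Or.inl (Or.inr ⟨h0, him⟩)
    · rintro ((⟨h0, h1⟩ | ⟨h0, h1⟩) | (h1 | ⟨h0, h1⟩))
      · exact ⟨h0, fun he => by rw [he] at h1; simp at h1⟩
      · exact ⟨h0, fun he => by rw [he] at h1; simp at h1⟩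
      · exact ⟨by linarith, fun he => by rw [he] at h1; simp at h1⟩
      · exact ⟨h0, fun he => by rw [he] at h1; simp at h1⟩
  rw [hU]
  have hre2 : (2 + Complex.I).re = 2 := by simp
  have him2 : (2 + Complex.I).im = 1 := by simp
  have hreh : ((1:ℂ)/2 + Complex.I/2).re = 1/2 := by simp
  have himh : ((1:ℂ)/2 + Complex.I/2).im = 1/2 := by simp
  have hrem : (2 - Complex.I).re = 2 := by simp
  have himm : (2 - Complex.I).im = -1 := by simp
  apply IsPreconnected.union (2 + Complex.I)
  · exact Set.mem_union_right _ (by rw [Set.mem_setOf_eq, hre2, him2]; norm_num)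
  · exact Set.mem_union_left _ (by rw [Set.mem_setOf_eq, hre2]; norm_num)
  · apply IsPreconnected.union ((1:ℂ)/2 + Complex.I/2)
    · rw [Set.mem_setOf_eq, hreh]; norm_num
    · rw [Set.mem_setOf_eq, hreh, himh]; norm_num
    · exact hA.isPreconnected
    · exact hP.isPreconnected
  · apply IsPreconnected.union (2 - Complex.I)
    · rw [Set.mem_setOf_eq, hrem]; norm_num
    · rw [Set.mem_setOf_eq, hrem, himm]; norm_num
    · exact hB.isPreconnected
    · exact hM.isPreconnected

lemma key_identity (ha : 0 < a) (ha1 : a ≤ 1) :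
    ∀ s ∈ Ureg, Complex.Gamma s * hurwitzZeta (a : UnitAddCircle) s
      = Af a s + 1 / (s - 1) + Bf a s := by
  have hf : AnalyticOnNhd ℂ (fun s => Complex.Gamma s * hurwitzZeta (a : UnitAddCircle) s)
      Ureg := by
    apply DifferentiableOn.analyticOnNhd _ isOpen_Ureg
    intro s hs
    apply DifferentiableAt.differentiableWithinAt
    apply DifferentiableAt.mul
    · apply Complex.differentiableAt_Gamma
      intro m hm
      have h1 : s.re = -(m:ℝ) := by rw [hm]; simp
      have h2 := hs.1
      rw [h1] at h2
      have h3 : (0:ℝ) ≤ (m:ℝ) := Nat.cast_nonneg m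
      linarith
    · exact differentiableAt_hurwitzZeta _ hs.2
  have hg : AnalyticOnNhd ℂ (fun s => Af a s + 1 / (s - 1) + Bf a s) Ureg := by
    apply DifferentiableOn.analyticOnNhd _ isOpen_Ureg
    intro s hs
    apply DifferentiableAt.differentiableWithinAt
    apply DifferentiableAt.add
    · apply DifferentiableAt.add
      · exact differentiableAt_Af ha hs.1
      · exact DifferentiableAt.div (differentiableAt_const _)
          (differentiableAt_id.sub (differentiableAt_const _)) (sub_ne_zero.mpr hs.2)
    · exact differentiableAt_Bf ha hs.1
  have hre2' : ((2:ℂ)).re = 2 := by simp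
  have h2U : (2:ℂ) ∈ Ureg := by
    refine ⟨by rw [hre2']; norm_num, ?_⟩
    intro h; rw [h] at hre2'; norm_num at hre2'
  have hfg : (fun s => Complex.Gamma s * hurwitzZeta (a : UnitAddCircle) s)
      =ᶠ[𝓝 (2:ℂ)] (fun s => Af a s + 1 / (s - 1) + Bf a s) := by
    have hopen : IsOpen {s : ℂ | 1 < s.re} := isOpen_lt continuous_const Complex.continuous_re
    filter_upwards [hopen.mem_nhds (by rw [Set.mem_setOf_eq, hre2']; norm_num)] with s hs
    rw [gamma_hurwitz_eq_mellin ha ha1 hs, mellin_Fc_split ha hs]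
  exact hf.eqOn_of_preconnected_of_eventuallyEq hg preconnected_Ureg h2U hfg

end part6

open Set Real MeasureTheory Filter Topology Asymptotics HurwitzZeta

section part7
variable {a : ℝ}

lemma real_repr (ha : 0 < a) (ha1 : a ≤ 1) {σ : ℝ} (hσ : 0 < σ) (hσ' : σ < 1) :
    Real.Gamma σ * (hurwitzZeta (a : UnitAddCircle) (σ:ℂ)).re
      = ∫ x in Ioi (0:ℝ), H a x * x ^ (σ - 1) := by
  have hUσ : (σ:ℂ) ∈ Ureg := by
    refine ⟨by rw [Complex.ofReal_re]; exact hσ, ?_⟩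
    intro h
    rw [show (1:ℂ) = ((1:ℝ):ℂ) by norm_num] at h
    exact absurd (Complex.ofReal_inj.mp h) (by linarith)
  have hid := key_identity ha ha1 _ hUσ
  have hAf : Af a (σ:ℂ) = ((∫ x in Ioc (0:ℝ) 1, x ^ (σ-1) * H a x : ℝ) : ℂ) := by
    rw [Af, mellin_indicator_eq measurableSet_Ioc Ioc_subset_Ioi_self]
    have hcoe : ∫ t in Ioc (0:ℝ) 1, ((t ^ (σ-1) * H a t : ℝ) : ℂ)
        = ((∫ x in Ioc (0:ℝ) 1, x ^ (σ-1) * H a x : ℝ) : ℂ) := integral_ofReal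
    rw [← hcoe]
    apply setIntegral_congr_fun measurableSet_Ioc
    intro t ht
    have ht0 : 0 < t := ht.1
    dsimp only
    rw [smul_eq_mul, HC]
    rw [show ((σ:ℂ) - 1) = ((σ - 1 : ℝ) : ℂ) from by push_cast; ring]
    rw [← Complex.ofReal_cpow ht0.le]
    push_cast
    ring
  have hBf : Bf a (σ:ℂ) = ((∫ x in Ioi (1:ℝ), x ^ (σ-1) * HAux.K a x : ℝ) : ℂ) := by
    rw [Bf, mellin_indicator_eq measurableSet_Ioi (fun x hx => mem_Ioi.mpr (lt_trans one_pos (mem_Ioi.mp hx)))]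
    have hcoe : ∫ t in Ioi (1:ℝ), ((t ^ (σ-1) * HAux.K a t : ℝ) : ℂ)
        = ((∫ x in Ioi (1:ℝ), x ^ (σ-1) * HAux.K a x : ℝ) : ℂ) := integral_ofReal
    rw [← hcoe]
    apply setIntegral_congr_fun measurableSet_Ioi
    intro t ht
    have ht0 : 0 < t := lt_trans one_pos ht
    dsimp only
    rw [smul_eq_mul, Fc]
    rw [show ((σ:ℂ) - 1) = ((σ - 1 : ℝ) : ℂ) from by push_cast; ring]
    rw [← Complex.ofReal_cpow ht0.le]
    push_cast
    ring
  have hdiv : (1 : ℂ) / ((σ:ℂ) - 1) = ((1 / (σ - 1) : ℝ) : ℂ) := by push_cast; ring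
  have hre : Real.Gamma σ * (hurwitzZeta (a : UnitAddCircle) (σ:ℂ)).re
      = (∫ x in Ioc (0:ℝ) 1, x ^ (σ-1) * H a x) + 1 / (σ-1)
        + ∫ x in Ioi (1:ℝ), x ^ (σ-1) * HAux.K a x := by
    have h := congrArg Complex.re hid
    rw [show Complex.Gamma (σ:ℂ) = ((Real.Gamma σ : ℝ) : ℂ) from Complex.Gamma_ofReal σ,
      Complex.re_ofReal_mul, hAf, hdiv, hBf, ← Complex.ofReal_add, ← Complex.ofReal_add,
      Complex.ofReal_re] at h
    exact h
  have hint1 : IntegrableOn (fun x : ℝ => H a x * x ^ (σ-1)) (Ioi 1) :=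
    (integrableOn_abs_H_rpow ha hσ hσ').mono_set (fun x hx => mem_Ioi.mpr (lt_trans one_pos (mem_Ioi.mp hx)))
  have hint2 : IntegrableOn (fun x : ℝ => x ^ (σ-2)) (Ioi 1) :=
    integrableOn_Ioi_rpow_of_lt (by linarith) one_pos
  have hK : ∫ x in Ioi (1:ℝ), x ^ (σ-1) * HAux.K a x
      = (∫ x in Ioi (1:ℝ), H a x * x ^ (σ-1)) + ∫ x in Ioi (1:ℝ), x ^ (σ-2) := by
    rw [← integral_add hint1 hint2]
    apply setIntegral_congr_fun measurableSet_Ioi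
    intro x hx
    have hx0 : (0:ℝ) < x := lt_trans one_pos hx
    have hKH : HAux.K a x = H a x + 1 / x := by rw [HAux.H_eq]; ring
    dsimp only
    rw [hKH, mul_add]
    congr 1
    · ring
    · rw [div_eq_mul_inv, one_mul, ← Real.rpow_neg_one x, ← Real.rpow_add hx0]
      congr 1; ring
  have hval : ∫ x in Ioi (1:ℝ), x ^ (σ-2) = -1 / (σ - 1) := by
    rw [integral_Ioi_rpow_of_lt (by linarith) one_pos,
      show σ - 2 + 1 = σ - 1 by ring, Real.one_rpow]
  have hflip : ∫ x in Ioc (0:ℝ) 1, x ^ (σ-1) * H a x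
      = ∫ x in Ioc (0:ℝ) 1, H a x * x ^ (σ-1) := by
    apply setIntegral_congr_fun measurableSet_Ioc
    intro x hx; dsimp only; ring
  have hunion : Ioc (0:ℝ) 1 ∪ Ioi 1 = Ioi 0 := Ioc_union_Ioi_eq_Ioi zero_le_one
  have hi1 : IntegrableOn (fun x : ℝ => H a x * x ^ (σ-1)) (Ioc 0 1) :=
    (integrableOn_abs_H_rpow ha hσ hσ').mono_set (hunion ▸ subset_union_left)
  have hfin : ∫ x in Ioi (0:ℝ), H a x * x ^ (σ-1)
      = (∫ x in Ioc (0:ℝ) 1, H a x * x ^ (σ-1)) + ∫ x in Ioi (1:ℝ), H a x * x ^ (σ-1) := by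
    rw [← hunion, setIntegral_union (Ioc_disjoint_Ioi le_rfl) measurableSet_Ioi hi1 hint1]
  rw [hre, hK, hval, hflip, hfin]
  ring

end part7

open Set Real MeasureTheory Filter Topology Asymptotics HurwitzZeta

section part8

lemma rpow_le_sum_rpow {y p q c : ℝ} (hy : 0 < y) (h1 : p ≤ c) (h2 : c ≤ q) :
    y ^ c ≤ y ^ p + y ^ q := by
  rcases le_or_gt 1 y with h | h
  · have h3 := Real.rpow_le_rpow_of_exponent_le h h2
    have h0 : (0:ℝ) ≤ y ^ p := Real.rpow_nonneg hy.le _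
    linarith
  · have h3 := Real.rpow_le_rpow_of_exponent_ge hy h.le h1
    have h0 : (0:ℝ) ≤ y ^ q := Real.rpow_nonneg hy.le _
    linarith

lemma abs_log_le {y ε : ℝ} (hy : 0 < y) (hε : 0 < ε) :
    |Real.log y| ≤ (y ^ ε + y ^ (-ε)) / ε := by
  have hnn : (0:ℝ) ≤ y ^ ε / ε := div_nonneg (Real.rpow_nonneg hy.le _) hε.le
  have hnn' : (0:ℝ) ≤ y ^ (-ε) / ε := div_nonneg (Real.rpow_nonneg hy.le _) hε.le
  rw [add_div]
  rcases le_or_gt 1 y with h | h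
  · rw [abs_of_nonneg (Real.log_nonneg h)]
    have h1 := Real.log_le_rpow_div hy.le hε
    linarith
  · rw [abs_of_nonpos (Real.log_nonpos hy.le h.le)]
    have h1 := Real.log_le_rpow_div (inv_pos.mpr hy).le hε
    rw [Real.log_inv, Real.inv_rpow hy.le, ← Real.rpow_neg hy.le] at h1
    linarith

lemma rpow_mul_abs_log_le {y ε p q σ t : ℝ} (hy : 0 < y) (hε : 0 < ε)
    (hp : p = σ - 2*ε) (hq : q = σ + 2*ε) (ht : |t - σ| < ε) :
    y ^ t * |Real.log y| ≤ (2/ε) * (y ^ p + y ^ q) := by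
  rw [abs_lt] at ht
  have h1 : y ^ t * |Real.log y| ≤ y ^ t * ((y ^ ε + y ^ (-ε)) / ε) :=
    mul_le_mul_of_nonneg_left (abs_log_le hy hε) (Real.rpow_nonneg hy.le _)
  have h2 : y ^ t * ((y ^ ε + y ^ (-ε)) / ε) = (y ^ (t+ε) + y ^ (t-ε)) / ε := by
    rw [Real.rpow_add hy t ε, show t - ε = t + -ε by ring, Real.rpow_add hy t (-ε),
      Real.rpow_neg hy.le ε]
    field_simp
  have h3 : y ^ (t+ε) ≤ y ^ p + y ^ q :=
    rpow_le_sum_rpow hy (by rw [hp]; linarith) (by rw [hq]; linarith)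
  have h4 : y ^ (t-ε) ≤ y ^ p + y ^ q :=
    rpow_le_sum_rpow hy (by rw [hp]; linarith) (by rw [hq]; linarith)
  have h5 : (y ^ (t+ε) + y ^ (t-ε)) / ε ≤ (2 * (y ^ p + y ^ q)) / ε := by
    gcongr
    linarith
  calc y ^ t * |Real.log y| ≤ (y ^ (t+ε) + y ^ (t-ε)) / ε := h2 ▸ h1
    _ ≤ (2 * (y ^ p + y ^ q)) / ε := h5
    _ = (2/ε) * (y ^ p + y ^ q) := by ring

lemma div_rpow_div {x x₀ : ℝ} (hx : 0 < x) (hx₀ : 0 < x₀) (t : ℝ) :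
    (x/x₀) ^ t / x = x₀ ^ (-t) * x ^ (t-1) := by
  rw [Real.div_rpow hx.le hx₀.le, Real.rpow_neg hx₀.le, Real.rpow_sub hx, Real.rpow_one]
  ring

end part8

open Set Real MeasureTheory Filter Topology Asymptotics HurwitzZeta


/-- Let `0 < a < 1/2` and let `x₀ > 0` be such that `H(a,·) > 0` on `(0,x₀)` and `H(a,·) < 0` on
`(x₀,∞)`. Then for every `σ ∈ (0,1)` the function `F(σ) = x₀^{-σ} Γ(σ) ζ(σ,a)` has derivative
`F'(σ) = ∫₀^∞ H(a,x) (x/x₀)^σ log(x/x₀) dx/x`, which is negative. -/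
theorem hasDerivAt_rpow_Gamma_mul_hurwitzZeta (a x₀ : ℝ) (ha : 0 < a) (ha' : a < 1 / 2)
    (hx₀ : 0 < x₀) (hpos : ∀ x : ℝ, 0 < x → x < x₀ → 0 < H a x)
    (hneg : ∀ x : ℝ, x₀ < x → H a x < 0) (σ : ℝ) (hσ : 0 < σ) (hσ' : σ < 1) :
    HasDerivAt
      (fun σ : ℝ => x₀ ^ (-σ) * Real.Gamma σ * (hurwitzZeta (a : UnitAddCircle) (σ : ℂ)).re)
      (∫ x in Set.Ioi (0 : ℝ), H a x * (x / x₀) ^ σ * Real.log (x / x₀) / x) σ ∧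
    (∫ x in Set.Ioi (0 : ℝ), H a x * (x / x₀) ^ σ * Real.log (x / x₀) / x) < 0 := by
  have ha1 : a ≤ 1 := by linarith
  set μ := volume.restrict (Ioi (0:ℝ)) with hμ
  set F : ℝ → ℝ → ℝ := fun t x => H a x * (x / x₀) ^ t / x with hF
  set F' : ℝ → ℝ → ℝ := fun t x => H a x * (x / x₀) ^ t * Real.log (x / x₀) / x with hF'
  set ε : ℝ := min σ (1 - σ) / 4 with hεdef
  have hε0 : 0 < ε := by
    rw [hεdef]
    have : 0 < min σ (1 - σ) := lt_min hσ (by linarith)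
    linarith
  have hεσ : ε ≤ σ / 4 := by
    rw [hεdef]; have := min_le_left σ (1 - σ); linarith
  have hεσ' : ε ≤ (1 - σ) / 4 := by
    rw [hεdef]; have := min_le_right σ (1 - σ); linarith
  set p : ℝ := σ - 2 * ε with hpdef
  set q : ℝ := σ + 2 * ε with hqdef
  have hp0 : 0 < p := by rw [hpdef]; linarith
  have hp1 : p < 1 := by rw [hpdef]; linarith
  have hq0 : 0 < q := by rw [hqdef]; linarith
  have hq1 : q < 1 := by rw [hqdef]; linarith
  -- continuity
  have hcontbase : ∀ t : ℝ, ContinuousOn (fun x : ℝ => (x / x₀) ^ t) (Ioi 0) := by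
    intro t
    apply ContinuousOn.rpow_const (continuous_id.div_const x₀).continuousOn
    intro x hx
    exact Or.inl (div_pos hx hx₀).ne'
  have hcont : ∀ t : ℝ, ContinuousOn (F t) (Ioi 0) := by
    intro t
    apply ContinuousOn.div ((HAux.continuousOn_H a).mul (hcontbase t)) continuousOn_id
    exact fun x hx => ne_of_gt hx
  have hcont' : ContinuousOn (F' σ) (Ioi 0) := by
    apply ContinuousOn.div _ continuousOn_id (fun x hx => ne_of_gt hx)
    apply ContinuousOn.mul ((HAux.continuousOn_H a).mul (hcontbase σ))
    apply ContinuousOn.log (continuous_id.div_const x₀).continuousOn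
    exact fun x hx => (div_pos hx hx₀).ne'
  -- integrability of F σ
  have habsF : ∀ t : ℝ, ∀ x ∈ Ioi (0:ℝ), |F t x| ≤ x₀ ^ (-t) * gbound a t x := by
    intro t x hx
    rw [mem_Ioi] at hx
    have hy : 0 < x / x₀ := div_pos hx hx₀
    have h3 : |F t x| = |H a x| * ((x / x₀) ^ t / x) := by
      simp only [hF]
      rw [abs_div, abs_mul, abs_of_nonneg (Real.rpow_nonneg hy.le _), abs_of_pos hx,
        mul_div_assoc]
    rw [h3]
    calc |H a x| * ((x / x₀) ^ t / x)
        ≤ (Real.exp (-(a * x)) + min a (1 / x)) * ((x / x₀) ^ t / x) := by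
          apply mul_le_mul_of_nonneg_right (HAux.abs_H_le ha.le hx)
          exact div_nonneg (Real.rpow_nonneg hy.le _) hx.le
      _ = x₀ ^ (-t) * gbound a t x := by
          rw [gbound, div_rpow_div hx hx₀]; ring
  have hFσ_int : Integrable (F σ) μ := by
    apply Integrable.mono' ((integrableOn_gbound ha hσ hσ').const_mul (x₀ ^ (-σ)))
    · exact (hcont σ).aestronglyMeasurable measurableSet_Ioi
    · refine (ae_restrict_iff' measurableSet_Ioi).mpr (.of_forall fun x hx => ?_)
      rw [Real.norm_eq_abs]
      exact habsF σ x hx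
  -- the bound
  set bound : ℝ → ℝ :=
    fun x => (2 / ε) * (x₀ ^ (-p) * gbound a p x + x₀ ^ (-q) * gbound a q x) with hbdef
  have hbound_int : Integrable bound μ := by
    apply Integrable.const_mul
    exact ((integrableOn_gbound ha hp0 hp1).const_mul _).add
      ((integrableOn_gbound ha hq0 hq1).const_mul _)
  have h_bound : ∀ᵐ x ∂μ, ∀ t ∈ Metric.ball σ ε, ‖F' t x‖ ≤ bound x := by
    refine (ae_restrict_iff' measurableSet_Ioi).mpr (.of_forall fun x hx => ?_)
    rw [mem_Ioi] at hx
    intro t ht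
    rw [Metric.mem_ball, Real.dist_eq] at ht
    have hy : 0 < x / x₀ := div_pos hx hx₀
    have habs : ‖F' t x‖ = |H a x| * ((x / x₀) ^ t * |Real.log (x / x₀)|) / x := by
      simp only [hF', Real.norm_eq_abs]
      rw [abs_div, abs_mul, abs_mul, abs_of_nonneg (Real.rpow_nonneg hy.le _), abs_of_pos hx,
        mul_assoc]
    rw [habs]
    have h1 : |H a x| * ((x / x₀) ^ t * |Real.log (x / x₀)|) / x
        ≤ (Real.exp (-(a * x)) + min a (1 / x)) * ((2 / ε) * ((x / x₀) ^ p + (x / x₀) ^ q)) / x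
        := by
      apply div_le_div_of_nonneg_right ?_ hx.le
      apply mul_le_mul (HAux.abs_H_le ha.le hx)
        (rpow_mul_abs_log_le hy hε0 hpdef hqdef ht)
        (by positivity) (by positivity)
    refine h1.trans (le_of_eq ?_)
    have e1 : (Real.exp (-(a * x)) + min a (1 / x)) * (x / x₀) ^ p / x
        = x₀ ^ (-p) * gbound a p x := by
      rw [gbound, mul_div_assoc, div_rpow_div hx hx₀]; ring
    have e2 : (Real.exp (-(a * x)) + min a (1 / x)) * (x / x₀) ^ q / x
        = x₀ ^ (-q) * gbound a q x := by
      rw [gbound, mul_div_assoc, div_rpow_div hx hx₀]; ring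
    calc (Real.exp (-(a * x)) + min a (1 / x)) * ((2 / ε) * ((x / x₀) ^ p + (x / x₀) ^ q)) / x
        = (2 / ε) * ((Real.exp (-(a * x)) + min a (1 / x)) * (x / x₀) ^ p / x
          + (Real.exp (-(a * x)) + min a (1 / x)) * (x / x₀) ^ q / x) := by ring
      _ = bound x := by rw [e1, e2, hbdef]
  -- differentiability in t
  have h_diff : ∀ᵐ x ∂μ, ∀ t ∈ Metric.ball σ ε, HasDerivAt (fun u => F u x) (F' t x) t := by
    refine (ae_restrict_iff' measurableSet_Ioi).mpr (.of_forall fun x hx => ?_)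
    rw [mem_Ioi] at hx
    intro t _
    have hy : 0 < x / x₀ := div_pos hx hx₀
    have hd := ((Real.hasStrictDerivAt_const_rpow hy t).hasDerivAt).const_mul (H a x / x)
    have heqf : (fun u : ℝ => H a x / x * (x / x₀) ^ u) = fun u => F u x := by
      funext u; simp only [hF]; ring
    have heqd : H a x / x * ((x / x₀) ^ t * Real.log (x / x₀)) = F' t x := by
      simp only [hF']; ring
    rw [heqf, heqd] at hd
    exact hd
  have key := hasDerivAt_integral_of_dominated_loc_of_deriv_le (Metric.ball_mem_nhds σ hε0)
    (Eventually.of_forall fun t => (hcont t).aestronglyMeasurable measurableSet_Ioi)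
    hFσ_int (hcont'.aestronglyMeasurable measurableSet_Ioi) h_bound hbound_int h_diff
  -- identify the two integrals
  have hshow : (∫ x in Set.Ioi (0:ℝ), H a x * (x / x₀) ^ σ * Real.log (x / x₀) / x)
      = ∫ x, F' σ x ∂μ := by rfl
  constructor
  · -- derivative part
    rw [hshow]
    apply (key.2).congr_of_eventuallyEq
    filter_upwards [isOpen_Ioo.mem_nhds (⟨hσ, hσ'⟩ : σ ∈ Ioo (0:ℝ) 1)] with t ht
    obtain ⟨ht0, ht1⟩ := ht
    have hrr := real_repr ha ha1 ht0 ht1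
    have hrhs : ∫ x, F t x ∂μ = x₀ ^ (-t) * ∫ x in Ioi (0:ℝ), H a x * x ^ (t - 1) := by
      rw [hμ, ← integral_const_mul]
      apply setIntegral_congr_fun measurableSet_Ioi
      intro x hx
      simp only [hF]
      rw [mul_div_assoc, div_rpow_div hx hx₀]
      ring
    rw [mul_assoc, hrr]
    exact hrhs.symm
  · -- negativity
    rw [hshow]
    have hI : IntegrableOn (F' σ) (Ioi 0) := key.1
    have hltIoo : ∀ x ∈ Ioo (0:ℝ) x₀, F' σ x < 0 := by
      intro x hx
      obtain ⟨hx0, hxx₀⟩ := hx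
      have hy : 0 < x / x₀ := div_pos hx0 hx₀
      have hy1 : x / x₀ < 1 := (div_lt_one hx₀).mpr hxx₀
      have hH := hpos x hx0 hxx₀
      have hlog : Real.log (x / x₀) < 0 := Real.log_neg hy hy1
      have hrp : 0 < (x / x₀) ^ σ := Real.rpow_pos_of_pos hy _
      simp only [hF']
      apply div_neg_of_neg_of_pos _ hx0
      exact mul_neg_of_pos_of_neg (by positivity) hlog
    have hnonpos : ∀ x ∈ Ici x₀, F' σ x ≤ 0 := by
      intro x hx
      rw [mem_Ici] at hx
      have hx0 : 0 < x := lt_of_lt_of_le hx₀ hx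
      rcases eq_or_lt_of_le hx with h | h
      · have hy1 : x / x₀ = 1 := by rw [← h]; field_simp
        simp only [hF']
        rw [hy1, Real.log_one, mul_zero, zero_div]
      · have hy : 0 < x / x₀ := div_pos hx0 hx₀
        have hy1 : 1 < x / x₀ := (one_lt_div hx₀).mpr h
        have hH := hneg x h
        have hlog : 0 < Real.log (x / x₀) := Real.log_pos hy1
        have hrp : 0 < (x / x₀) ^ σ := Real.rpow_pos_of_pos hy _
        simp only [hF']
        apply le_of_lt
        apply div_neg_of_neg_of_pos _ hx0
        have : H a x * (x / x₀) ^ σ < 0 := mul_neg_of_neg_of_pos hH hrp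
        exact mul_neg_of_neg_of_pos this hlog
    have hunion2 : Ioo (0:ℝ) x₀ ∪ Ici x₀ = Ioi 0 := Ioo_union_Ici_eq_Ioi hx₀
    have h1 : IntegrableOn (F' σ) (Ioo 0 x₀) := hI.mono_set (hunion2 ▸ subset_union_left)
    have h2 : IntegrableOn (F' σ) (Ici x₀) := hI.mono_set (hunion2 ▸ subset_union_right)
    have hdisj : Disjoint (Ioo (0:ℝ) x₀) (Ici x₀) :=
      Set.disjoint_left.mpr fun x hx hx' => absurd hx.2 (not_lt.mpr hx')
    have hsplit : (∫ x, F' σ x ∂μ)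
        = (∫ x in Ioo (0:ℝ) x₀, F' σ x) + ∫ x in Ici x₀, F' σ x := by
      rw [hμ, ← hunion2, setIntegral_union hdisj measurableSet_Ici h1 h2]
    have hneg1 : (∫ x in Ioo (0:ℝ) x₀, F' σ x) < 0 := by
      have hpos' : 0 < ∫ x in Ioo (0:ℝ) x₀, -(F' σ x) := by
        rw [setIntegral_pos_iff_support_of_nonneg_ae]
        · have hsupp : Ioo (0:ℝ) x₀ ⊆ Function.support fun x => -(F' σ x) := by
            intro x hx
            simp only [Function.mem_support, neg_ne_zero]
            exact (hltIoo x hx).ne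
          rw [Set.inter_eq_self_of_subset_right hsupp, Real.volume_Ioo]
          simp only [sub_zero]
          exact ENNReal.ofReal_pos.mpr hx₀
        · refine (ae_restrict_iff' measurableSet_Ioo).mpr (.of_forall fun x hx => ?_)
          simp only [Pi.zero_apply, neg_nonneg]
          exact (hltIoo x hx).le
        · exact h1.neg
      rw [integral_neg] at hpos'
      linarith
    have hneg2 : (∫ x in Ici x₀, F' σ x) ≤ 0 := by
      apply integral_nonpos_of_ae
      refine (ae_restrict_iff' measurableSet_Ici).mpr (.of_forall fun x hx => ?_)
      exact hnonpos x hx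
    rw [hsplit]
    linarith
end

section
/- Fix a real number $\sigma$ with $0 < \sigma < 1$. Then $\int_0^{\infty} H(a,x)\, x^{\sigma-1}\, dx \to +\infty$ as $a \to 0^+$. -/
open Filter Real MeasureTheory Set

lemma H_le_one {a x : ℝ} (ha : 0 ≤ a) (hx : 0 < x) : H a x ≤ 1 := by
  have he : x + 1 ≤ Real.exp x := by linarith [Real.add_one_le_exp x]
  have hx1 : (1:ℝ) < Real.exp x := by nlinarith
  have hd : (0:ℝ) < Real.exp x - 1 := by linarith
  have hE : Real.exp ((1 - a) * x) ≤ Real.exp x := Real.exp_le_exp.2 (by nlinarith)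
  have key : Real.exp x / (Real.exp x - 1) - 1 / x ≤ 1 := by
    rw [div_sub_div _ _ hd.ne' hx.ne', div_le_one (by positivity)]
    nlinarith
  calc H a x ≤ Real.exp x / (Real.exp x - 1) - 1 / x := by
        unfold H; gcongr
    _ ≤ 1 := key

lemma neg_one_le_H {a x : ℝ} (ha : a ≤ 1) (hx : 0 < x) : -1 ≤ H a x := by
  have he : x + 1 ≤ Real.exp x := by linarith [Real.add_one_le_exp x]
  have hx1 : (1:ℝ) < Real.exp x := by nlinarith
  have hd : (0:ℝ) < Real.exp x - 1 := by linarith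
  have hE : (1:ℝ) ≤ Real.exp ((1 - a) * x) := Real.one_le_exp (by nlinarith)
  have h2 : Real.exp x - 1 ≤ x * Real.exp x := by
    have h3 := Real.add_one_le_exp (-x)
    have h4 : Real.exp (-x) * Real.exp x = 1 := by rw [← Real.exp_add]; simp
    have hep : (0:ℝ) < Real.exp x := Real.exp_pos x
    nlinarith [mul_le_mul_of_nonneg_right h3 hep.le]
  have key : -1 ≤ 1 / (Real.exp x - 1) - 1 / x := by
    rw [div_sub_div _ _ hd.ne' hx.ne', neg_le, ← neg_div, neg_sub, div_le_one (by positivity)]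
    nlinarith
  calc (-1:ℝ) ≤ 1 / (Real.exp x - 1) - 1 / x := key
    _ ≤ H a x := by unfold H; gcongr

lemma H_ge {a x : ℝ} (ha : 0 ≤ a) (hx : 2 ≤ x) : 1/2 - 2*a*x ≤ H a x := by
  have hx0 : (0:ℝ) < x := by linarith
  have he : x + 1 ≤ Real.exp x := by linarith [Real.add_one_le_exp x]
  have hd : (0:ℝ) < Real.exp x - 1 := by nlinarith
  have hE : Real.exp x * (1 - a*x) ≤ Real.exp ((1 - a) * x) := by
    have h1 : Real.exp ((1-a)*x) = Real.exp x * Real.exp (-(a*x)) := by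
      rw [← Real.exp_add]; ring_nf
    rw [h1]
    have h2 : 1 - a*x ≤ Real.exp (-(a*x)) := by linarith [Real.add_one_le_exp (-(a*x))]
    nlinarith [Real.exp_pos x]
  have h1 : Real.exp x * (1 - a*x) / (Real.exp x - 1) ≤ Real.exp ((1-a)*x) / (Real.exp x - 1) := by
    gcongr
  have hu1 : (1:ℝ) ≤ Real.exp x / (Real.exp x - 1) := by
    rw [le_div_iff₀ hd]; linarith
  have hu2 : Real.exp x / (Real.exp x - 1) ≤ 3/2 := by
    rw [div_le_iff₀ hd]; nlinarith
  have hq : Real.exp x * (1 - a*x) / (Real.exp x - 1)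
      = Real.exp x / (Real.exp x - 1) - (a*x) * (Real.exp x / (Real.exp x - 1)) := by
    field_simp
  have hax : 0 ≤ a * x := mul_nonneg ha hx0.le
  have h1x : 1/x ≤ 1/2 := by
    rw [div_le_div_iff₀ hx0 (by norm_num)]; linarith
  unfold H
  nlinarith [mul_le_mul_of_nonneg_left hu2 hax, mul_le_mul_of_nonneg_left hu1 hax]


/-- For fixed `σ ∈ (0,1)`, `∫₀^∞ H(a,x) x^{σ-1} dx → +∞` as `a → 0⁺`. -/
theorem tendsto_integral_H_atTop (σ : ℝ) (hσ : 0 < σ) (hσ' : σ < 1) :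
    Tendsto (fun a : ℝ => ∫ x in Set.Ioi (0 : ℝ), H a x * x ^ (σ - 1))
      (nhdsWithin 0 (Set.Ioi 0)) atTop := by
  rw [tendsto_atTop]
  intro M
  obtain ⟨C, hC⟩ : ∃ C : ℝ, C = M + 2/σ + 1/(1-σ) := ⟨_, rfl⟩
  obtain ⟨R, hR4, hRσ⟩ : ∃ R : ℝ, 4 ≤ R ∧ 8*C ≤ R ^ σ := by
    refine ⟨max 4 ((max 1 (8*C)) ^ (σ⁻¹)), le_max_left _ _, ?_⟩
    have h0 : (0:ℝ) ≤ max 1 (8*C) := le_trans zero_le_one (le_max_left _ _)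
    calc 8*C ≤ max 1 (8*C) := le_max_right _ _
      _ = ((max 1 (8*C)) ^ (σ⁻¹)) ^ σ := (Real.rpow_inv_rpow h0 hσ.ne').symm
      _ ≤ _ := Real.rpow_le_rpow (by positivity) (le_max_right _ _) hσ.le
  have hR2 : (2:ℝ) ≤ R := by linarith
  have hR0 : (0:ℝ) < R := by linarith
  have hmem : (0:ℝ) ∈ Ico (0:ℝ) (min 1 (1/(8*R))) := ⟨le_refl 0, by positivity⟩
  filter_upwards [Ioc_mem_nhdsGT_of_mem hmem] with a ha
  obtain ⟨ha0, ha1⟩ := ha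
  have haa : a ≤ 1 := le_trans ha1 (min_le_left _ _)
  have haR : a ≤ 1/(8*R) := le_trans ha1 (min_le_right _ _)
  -- continuity
  have hcont : ContinuousOn (fun x : ℝ => H a x * x ^ (σ-1)) (Ioi 0) := by
    apply ContinuousOn.mul
    · unfold H
      apply ContinuousOn.sub
      · apply ContinuousOn.div
        · exact (Real.continuous_exp.comp (continuous_const.mul continuous_id)).continuousOn
        · exact (Real.continuous_exp.sub continuous_const).continuousOn
        · intro x hx
          have hx0 : (0:ℝ) < x := hx
          have := Real.add_one_le_exp x
          exact sub_ne_zero.2 (ne_of_gt (by linarith))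
      · exact continuousOn_const.div continuousOn_id fun x hx => ne_of_gt hx
    · exact fun x hx => (Real.continuousAt_rpow_const x _ (Or.inl (ne_of_gt hx))).continuousWithinAt
  -- integrability on (0,2]
  have hi1 : IntegrableOn (fun x : ℝ => H a x * x ^ (σ-1)) (Ioc 0 2) := by
    have hg : IntegrableOn (fun x : ℝ => x ^ (σ-1)) (Ioc (0:ℝ) 2) := by
      rw [← intervalIntegrable_iff_integrableOn_Ioc_of_le (by norm_num : (0:ℝ) ≤ 2)]
      exact intervalIntegral.intervalIntegrable_rpow' (by linarith)
    apply hg.mono' ((hcont.mono (Ioc_subset_Ioi_self)).aestronglyMeasurable measurableSet_Ioc)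
    rw [ae_restrict_iff' measurableSet_Ioc]
    refine ae_of_all _ fun x hx => ?_
    have hx0 : (0:ℝ) < x := hx.1
    have habs : |H a x| ≤ 1 := abs_le.2 ⟨neg_one_le_H haa hx0, H_le_one ha0.le hx0⟩
    rw [norm_mul, Real.norm_of_nonneg (Real.rpow_nonneg hx0.le _), Real.norm_eq_abs]
    nlinarith [Real.rpow_nonneg hx0.le (σ-1), abs_nonneg (H a x)]
  -- integrability on (2,∞)
  have hi3' : IntegrableOn (fun x : ℝ => H a x * x ^ (σ-1)) (Ioi 2) := by
    have hg : IntegrableOn (fun x : ℝ => 2 * Real.exp (-a*x) + x ^ (σ-2)) (Ioi (2:ℝ)) :=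
      ((exp_neg_integrableOn_Ioi 2 ha0).const_mul 2).add
        (integrableOn_Ioi_rpow_of_lt (by linarith) (by norm_num))
    apply hg.mono' ((hcont.mono (Ioi_subset_Ioi (by norm_num))).aestronglyMeasurable measurableSet_Ioi)
    rw [ae_restrict_iff' measurableSet_Ioi]
    refine ae_of_all _ fun x hx => ?_
    have hx2 : (2:ℝ) < x := hx
    have hx0 : (0:ℝ) < x := by linarith
    have he : x + 1 ≤ Real.exp x := by linarith [Real.add_one_le_exp x]
    have hd : (0:ℝ) < Real.exp x - 1 := by linarith
    have hEeq : Real.exp ((1-a)*x) = Real.exp x * Real.exp (-a*x) := by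
      rw [← Real.exp_add]; ring_nf
    have hEp : (0:ℝ) < Real.exp (-a*x) := Real.exp_pos _
    have hEd : Real.exp ((1-a)*x) / (Real.exp x - 1) ≤ 2 * Real.exp (-a*x) := by
      rw [div_le_iff₀ hd, hEeq]; nlinarith
    have hEd0 : 0 ≤ Real.exp ((1-a)*x) / (Real.exp x - 1) := by positivity
    have hH1 : |H a x| ≤ 2 * Real.exp (-a*x) + 1/x := by
      rw [abs_le]; unfold H
      constructor
      · have : (0:ℝ) < 1/x := by positivity
        nlinarith
      · have : (0:ℝ) < 1/x := by positivity
        nlinarith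
    have hp1 : x ^ (σ-1) ≤ 1 := Real.rpow_le_one_of_one_le_of_nonpos (by linarith) (by linarith)
    have hp0 : (0:ℝ) ≤ x ^ (σ-1) := Real.rpow_nonneg hx0.le _
    have hp2 : x ^ (σ-1) * (1/x) = x ^ (σ-2) := by
      rw [show σ-2 = (σ-1) + (-1) by ring, Real.rpow_add hx0, Real.rpow_neg_one]
      ring
    rw [norm_mul, Real.norm_of_nonneg hp0, Real.norm_eq_abs]
    calc |H a x| * x ^ (σ-1) ≤ (2 * Real.exp (-a*x) + 1/x) * x ^ (σ-1) := by
          exact mul_le_mul_of_nonneg_right hH1 hp0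
      _ = 2 * Real.exp (-a*x) * x ^ (σ-1) + x ^ (σ-1) * (1/x) := by ring
      _ ≤ 2 * Real.exp (-a*x) + x ^ (σ-2) := by
          rw [hp2]; nlinarith
  have hi2 : IntegrableOn (fun x : ℝ => H a x * x ^ (σ-1)) (Ioc 2 R) :=
    hi3'.mono_set Ioc_subset_Ioi_self
  have hi3 : IntegrableOn (fun x : ℝ => H a x * x ^ (σ-1)) (Ioi R) :=
    hi3'.mono_set (Ioi_subset_Ioi hR2)
  have hi12 : IntegrableOn (fun x : ℝ => H a x * x ^ (σ-1)) (Ioc 0 R) := by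
    rw [← Ioc_union_Ioc_eq_Ioc (by norm_num : (0:ℝ) ≤ 2) hR2]
    exact hi1.union hi2
  -- splitting
  have hsplit1 : ∫ x in Ioi (0:ℝ), H a x * x ^ (σ-1)
      = (∫ x in Ioc (0:ℝ) R, H a x * x ^ (σ-1)) + ∫ x in Ioi R, H a x * x ^ (σ-1) := by
    rw [← setIntegral_union (Ioc_disjoint_Ioi le_rfl) measurableSet_Ioi hi12 hi3,
      Ioc_union_Ioi_eq_Ioi hR0.le]
  have hsplit2 : ∫ x in Ioc (0:ℝ) R, H a x * x ^ (σ-1)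
      = (∫ x in Ioc (0:ℝ) 2, H a x * x ^ (σ-1)) + ∫ x in Ioc (2:ℝ) R, H a x * x ^ (σ-1) := by
    rw [← setIntegral_union (Ioc_disjoint_Ioc.2 (by simp)) measurableSet_Ioc hi1 hi2,
      Ioc_union_Ioc_eq_Ioc (by norm_num : (0:ℝ) ≤ 2) hR2]
  -- lower bound on (0,2]
  have hg2 : IntegrableOn (fun x : ℝ => x ^ (σ-1)) (Ioc (0:ℝ) 2) := by
    rw [← intervalIntegrable_iff_integrableOn_Ioc_of_le (by norm_num : (0:ℝ) ≤ 2)]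
    exact intervalIntegral.intervalIntegrable_rpow' (by linarith)
  have hval1 : ∫ x in Ioc (0:ℝ) 2, x ^ (σ-1) = 2 ^ σ / σ := by
    rw [← intervalIntegral.integral_of_le (by norm_num : (0:ℝ) ≤ 2),
      integral_rpow (Or.inl (by linarith)), show σ - 1 + 1 = σ by ring,
      Real.zero_rpow hσ.ne']
    ring
  have lb1 : -(2/σ) ≤ ∫ x in Ioc (0:ℝ) 2, H a x * x ^ (σ-1) := by
    have h1 : ∫ x in Ioc (0:ℝ) 2, -(x ^ (σ-1)) ≤ ∫ x in Ioc (0:ℝ) 2, H a x * x ^ (σ-1) := by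
      apply setIntegral_mono_on hg2.neg hi1 measurableSet_Ioc
      intro x hx
      simp only [Pi.neg_apply]
      have hx0 : (0:ℝ) < x := hx.1
      have := neg_one_le_H haa hx0
      nlinarith [Real.rpow_nonneg hx0.le (σ-1)]
    rw [integral_neg, hval1] at h1
    have h2 : (2:ℝ) ^ σ ≤ 2 := by
      calc (2:ℝ) ^ σ ≤ (2:ℝ) ^ (1:ℝ) := Real.rpow_le_rpow_of_exponent_le one_le_two hσ'.le
        _ = 2 := Real.rpow_one 2
    have h3 : (2:ℝ) ^ σ / σ ≤ 2 / σ := by gcongr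
    linarith
  -- lower bound on (2,R]
  have lb2 : (R - 2) * (R ^ (σ-1) / 4) ≤ ∫ x in Ioc (2:ℝ) R, H a x * x ^ (σ-1) := by
    have hconst : IntegrableOn (fun _ : ℝ => R ^ (σ-1) / 4) (Ioc (2:ℝ) R) :=
      (integrableOn_const_iff).2 (Or.inr measure_Ioc_lt_top)
    have h1 : ∫ _x in Ioc (2:ℝ) R, (R ^ (σ-1) / 4) ≤ ∫ x in Ioc (2:ℝ) R, H a x * x ^ (σ-1) := by
      apply setIntegral_mono_on hconst hi2 measurableSet_Ioc
      intro x hx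
      have hx2 : (2:ℝ) ≤ x := hx.1.le
      have hx0 : (0:ℝ) < x := by linarith
      have hHx : 1/4 ≤ H a x := by
        have h2 := H_ge ha0.le hx2
        have h3 : a * x ≤ 1/8 := by
          have h4 : a * x ≤ (1/(8*R)) * R :=
            mul_le_mul haR hx.2 hx0.le (by positivity)
          have h5 : (1/(8*R)) * R = 1/8 := by field_simp
          linarith
        linarith
      have hrp : R ^ (σ-1) ≤ x ^ (σ-1) :=
        Real.rpow_le_rpow_of_nonpos hx0 hx.2 (by linarith)
      have hrp0 : (0:ℝ) ≤ R ^ (σ-1) := Real.rpow_nonneg hR0.le _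
      calc R ^ (σ-1) / 4 = (1/4) * R ^ (σ-1) := by ring
        _ ≤ H a x * x ^ (σ-1) := mul_le_mul hHx hrp hrp0 (by linarith)
    rw [setIntegral_const, Real.volume_real_Ioc, max_eq_left (by linarith), smul_eq_mul] at h1
    linarith
  -- lower bound on (R,∞)
  have lb3 : -(1/(1-σ)) ≤ ∫ x in Ioi R, H a x * x ^ (σ-1) := by
    have hgR : IntegrableOn (fun x : ℝ => x ^ (σ-2)) (Ioi R) :=
      integrableOn_Ioi_rpow_of_lt (by linarith) hR0
    have h1 : ∫ x in Ioi R, -(x ^ (σ-2)) ≤ ∫ x in Ioi R, H a x * x ^ (σ-1) := by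
      apply setIntegral_mono_on hgR.neg hi3 measurableSet_Ioi
      intro x hx
      simp only [Pi.neg_apply]
      have hx0 : (0:ℝ) < x := lt_trans hR0 hx
      have he : x + 1 ≤ Real.exp x := by linarith [Real.add_one_le_exp x]
      have hd : (0:ℝ) < Real.exp x - 1 := by linarith
      have hH : -(1/x) ≤ H a x := by
        unfold H
        have : (0:ℝ) ≤ Real.exp ((1-a)*x) / (Real.exp x - 1) := by positivity
        linarith
      have hp2 : (-(1/x)) * x ^ (σ-1) = -(x ^ (σ-2)) := by
        rw [show σ-2 = (σ-1) + (-1) by ring, Real.rpow_add hx0, Real.rpow_neg_one]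
        ring
      calc -(x ^ (σ-2)) = (-(1/x)) * x ^ (σ-1) := hp2.symm
        _ ≤ H a x * x ^ (σ-1) := mul_le_mul_of_nonneg_right hH (Real.rpow_nonneg hx0.le _)
    rw [integral_neg, integral_Ioi_rpow_of_lt (by linarith) hR0,
      show σ - 2 + 1 = σ - 1 by ring] at h1
    have h2 : R ^ (σ-1) ≤ 1 := Real.rpow_le_one_of_one_le_of_nonpos (by linarith) (by linarith)
    have h3 : -R ^ (σ-1) / (σ-1) = R ^ (σ-1) / (1-σ) := by
      rw [div_eq_div_iff (by linarith) (by linarith)]; ring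
    rw [h3] at h1
    have h4 : R ^ (σ-1) / (1-σ) ≤ 1 / (1-σ) := by gcongr
    linarith
  -- combine
  have hkey : 4*C ≤ (R-2) * R ^ (σ-1) := by
    have hpow : R ^ σ = R ^ (σ-1) * R := by
      nth_rewrite 1 [show σ = σ-1+1 by ring]
      rw [Real.rpow_add_one hR0.ne']
    have hnn : (0:ℝ) ≤ R ^ (σ-1) := Real.rpow_nonneg hR0.le _
    nlinarith [mul_le_mul_of_nonneg_right (show R/2 ≤ R-2 by linarith) hnn]
  rw [hsplit1, hsplit2]
  have hσ1 : (0:ℝ) < 1 - σ := by linarith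
  have hCeq : M = -(2/σ) + C - 1/(1-σ) := by rw [hC]; ring
  linarith [lb1, lb2, lb3, hkey]
end
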